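/- arXiv:2009.00469 — 6 statements merged into one kernel-verified Lean document; each statement's English description precedes it below -/
import Mathlib

section
/- Let U be a machine that makes the plain information distance D_U minimal up to additive constants (i.e., for every machine V there is a constant c with D_U(x,y) ≤ D_V(x,y) + c for all x,y). Then there is a constant c such that for all binary strings x and y, |D_U(x,y) − max(K(x|y), K(y|x))| ≤ c, where K denotes plain conditional complexity. -/
open scoped ENNReal

/-- Binary strings: finite sequences over `{0,1}`. -/
abbrev BStr : Type := List Bool

/-- The type of two-argument partial functions on binary strings. -/
abbrev PFun2 : Type := BStr → BStr →. BStr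

/-- A machine is a partial computable function of two binary-string arguments. -/
def IsMachine (U : PFun2) : Prop := Partrec₂ U

/-- Conditional complexity `K_U(y|x) = min{|p| : U(p,x) = y}` (∞ if no program). -/
noncomputable def Kcond (U : PFun2) (y x : BStr) : ℕ∞ :=
  sInf {n : ℕ∞ | ∃ p : BStr, (p.length : ℕ∞) = n ∧ y ∈ U p x}

/-- Information distance `D_U(x,y) = min{|p| : U(p,x) = y ∧ U(p,y) = x}` (∞ if no program). -/
noncomputable def IDist (U : PFun2) (x y : BStr) : ℕ∞ :=
  sInf {n : ℕ∞ | ∃ p : BStr, (p.length : ℕ∞) = n ∧ y ∈ U p x ∧ x ∈ U p y}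

/-- `U` is an optimal machine for plain conditional complexity. -/
def OptimalPlainK (U : PFun2) : Prop :=
  IsMachine U ∧ ∀ V : PFun2, IsMachine V → ∃ c : ℕ, ∀ x y : BStr,
    Kcond U y x ≤ Kcond V y x + (c : ℕ∞)

namespace PDC


def bn : List Bool → ℕ
  | [] => 0
  | b :: t => (cond b 1 0) + 2 * bn t

def ntb : ℕ → ℕ → List Bool
  | 0, _ => []
  | k+1, c => (c % 2 == 1) :: ntb k (c / 2)

theorem bn_lt (l : List Bool) : bn l < 2 ^ l.length := by
  induction l with
  | nil => simp [bn]
  | cons b t ih => cases b <;> simp [bn, pow_succ] <;> omega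

@[simp] theorem ntb_length (k c : ℕ) : (ntb k c).length = k := by
  induction k generalizing c with
  | zero => rfl
  | succ k ih => simp [ntb, ih]

theorem bn_ntb {k c : ℕ} (h : c < 2 ^ k) : bn (ntb k c) = c := by
  induction k generalizing c with
  | zero => simp at h; simp [ntb, bn, h]
  | succ k ih =>
    have h2 : c / 2 < 2 ^ k := by
      have := Nat.pow_succ 2 k ▸ h; omega
    have hih := ih h2
    rcases Nat.mod_two_eq_zero_or_one c with hb | hb <;>
      simp [ntb, bn, hb, hih] <;> omega

theorem ntb_bn (l : List Bool) : ntb l.length (bn l) = l := by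
  induction l with
  | nil => rfl
  | cons b t ih =>
    cases b
    · have h1 : ((0:ℕ) + 2 * bn t) % 2 = 0 := by omega
      have h2 : ((0:ℕ) + 2 * bn t) / 2 = bn t := by omega
      simp [ntb, bn, h1, h2, ih]
    · have h1 : ((1:ℕ) + 2 * bn t) % 2 = 1 := by omega
      have h2 : ((1:ℕ) + 2 * bn t) / 2 = bn t := by omega
      simp [ntb, bn, h1, h2, ih]

def nuv (l : List Bool) : ℕ := 2 ^ l.length + bn l

theorem nuv_pos (l : List Bool) : 1 ≤ nuv l := by
  have : 1 ≤ 2 ^ l.length := Nat.one_le_two_pow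
  simp only [nuv]; omega

theorem nuv_lt {l : List Bool} {m : ℕ} (h : l.length ≤ m) : nuv l < 2 ^ (m + 1) := by
  have h1 := bn_lt l
  have h2 : (2:ℕ) ^ l.length ≤ 2 ^ m := Nat.pow_le_pow_right (by norm_num) h
  have h3 : (2:ℕ) ^ (m+1) = 2 ^ m + 2 ^ m := by rw [pow_succ]; ring
  simp only [nuv]; omega

theorem nuv_len_lt {l l' : List Bool} (h : l.length < l'.length) : nuv l < nuv l' := by
  have h1 := bn_lt l
  have h2 : (2:ℕ) ^ (l.length + 1) ≤ 2 ^ l'.length := Nat.pow_le_pow_right (by norm_num) h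
  have h3 : (2:ℕ) ^ (l.length + 1) = 2 ^ l.length + 2 ^ l.length := by rw [pow_succ]; ring
  simp only [nuv]; omega

theorem nuv_inj {l l' : List Bool} (h : nuv l = nuv l') : l = l' := by
  have hl : l.length = l'.length := by
    rcases Nat.lt_trichotomy l.length l'.length with hlt | heq | hgt
    · exact absurd h (Nat.ne_of_lt (nuv_len_lt hlt))
    · exact heq
    · exact absurd h.symm (Nat.ne_of_lt (nuv_len_lt hgt))
  have hbn : bn l = bn l' := by simp only [nuv, hl] at h; omega
  calc l = ntb l.length (bn l) := (ntb_bn l).symm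
    _ = ntb l'.length (bn l') := by rw [hl, hbn]
    _ = l' := ntb_bn l'



open Nat.Partrec (Code)
open Nat.Partrec.Code
open Encodable

abbrev Edge := BStr × BStr
abbrev Entry := Option (Edge × ℕ)

/-- Enumeration of candidate edges of the `m`-graph. `n` codes `(x, y, p, q, t)`. -/
def E (cW : Code) (m n : ℕ) : Option Edge :=
  (Encodable.decode (α := BStr × BStr × BStr × BStr × ℕ) n).bind fun z =>
    if z.2.2.1.length ≤ m ∧ z.2.2.2.1.length ≤ m ∧ encode z.1 ≤ encode z.2.1 ∧
       evaln z.2.2.2.2 cW (encode (z.2.2.1, z.2.1)) = some (encode z.1) ∧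
       evaln z.2.2.2.2 cW (encode (z.2.2.2.1, z.1)) = some (encode z.2.1)
    then some (z.1, z.2.1) else none

/-- Deduplicated enumeration: an edge appears only at its first occurrence. -/
def firstE (cW : Code) (m n : ℕ) : Option Edge :=
  (E cW m n).bind fun e =>
    if ((List.range n).filterMap fun k => if E cW m k = some e then some k else none) = []
    then some e else none

def usedColors (L : List Entry) (x y : BStr) : List ℕ :=
  L.filterMap fun o => o.bind fun ec =>
    if ec.1.1 = x ∨ ec.1.2 = x ∨ ec.1.1 = y ∨ ec.1.2 = y then some ec.2 else none

def avail (m : ℕ) (used : List ℕ) : List ℕ :=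
  (List.range (2 ^ (m + 2))).filterMap fun c => if c ∈ used then none else some c

def pick (m : ℕ) (used : List ℕ) : ℕ := (avail m used).getD 0 0

def colStep (m : ℕ) (L : List Entry) (e : Option Edge) : Entry :=
  e.map fun xy => (xy, pick m (usedColors L xy.1 xy.2))

def colList (cW : Code) (m : ℕ) : ℕ → List Entry
  | 0 => []
  | n+1 => colList cW m n ++ [colStep m (colList cW m n) (firstE cW m n)]

def colAt (cW : Code) (m n : ℕ) : Entry := (colList cW m (n+1)).getD n none

def check (cW : Code) (m n c : ℕ) (x : BStr) : Bool :=
  ((colAt cW m n).map fun ec => decide (ec.2 = c ∧ (ec.1.1 = x ∨ ec.1.2 = x))).getD false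

def other (cW : Code) (m n : ℕ) (x : BStr) : BStr :=
  ((colAt cW m n).map fun ec => if ec.1.1 = x then ec.1.2 else ec.1.1).getD []

/-- The machine realizing the information distance `max + 2`. -/
def Vm (cW : Code) : PFun2 := fun p x =>
  (Nat.rfind fun n => Part.some (check cW (p.length - 2) n (bn p) x)).map
    fun n => other cW (p.length - 2) n x

@[simp] theorem length_colList (cW : Code) (m n : ℕ) : (colList cW m n).length = n := by
  induction n with
  | zero => rfl
  | succ n ih => simp [colList, ih]

theorem colAt_eq (cW : Code) (m n : ℕ) :
    colAt cW m n = colStep m (colList cW m n) (firstE cW m n) := by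
  have h : (colList cW m n).length = n := length_colList cW m n
  simp [colAt, colList, List.getD, List.getElem?_append_right, h]

theorem colAt_of_lt (cW : Code) (m : ℕ) {k n : ℕ} (h : k < n) :
    (colList cW m n).getD k none = colAt cW m k := by
  induction n with
  | zero => omega
  | succ n ih =>
    rcases Nat.lt_or_ge k n with h' | h'
    · rw [← ih h']
      have hk : k < (colList cW m n).length := by simpa using h'
      simp [colList, List.getD, List.getElem?_append_left hk]
    · have : k = n := by omega
      subst this
      rfl

theorem mem_colList (cW : Code) (m n : ℕ) {o : Entry} (h : o ∈ colList cW m n) :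
    ∃ k < n, colAt cW m k = o := by
  obtain ⟨i, hi, hg⟩ := List.mem_iff_getElem.mp h
  have hlen : i < n := by simpa using hi
  refine ⟨i, hlen, ?_⟩
  rw [← colAt_of_lt cW m hlen]
  simp [List.getD, List.getElem?_eq_getElem hi, hg]


def Good (cW : Code) (m : ℕ) (x y : BStr) : Prop :=
  encode x ≤ encode y ∧
  (∃ p : BStr, p.length ≤ m ∧ (encode x : ℕ) ∈ eval cW (encode (p, y))) ∧
  (∃ q : BStr, q.length ≤ m ∧ (encode y : ℕ) ∈ eval cW (encode (q, x)))

theorem E_sound {cW : Code} {m n : ℕ} {x y : BStr} (h : E cW m n = some (x, y)) :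
    Good cW m x y := by
  rw [E, Option.bind_eq_some_iff] at h
  obtain ⟨z, _, hz⟩ := h
  split_ifs at hz with hc
  · obtain ⟨h1, h2, h3, h4, h5⟩ := hc
    injection hz with hz
    have hx : z.1 = x := congrArg Prod.fst hz
    have hy : z.2.1 = y := congrArg Prod.snd hz
    subst hx; subst hy
    exact ⟨h3, ⟨z.2.2.1, h1, evaln_sound h4⟩, ⟨z.2.2.2.1, h2, evaln_sound h5⟩⟩

theorem E_complete {cW : Code} {m : ℕ} {x y : BStr} (h : Good cW m x y) :
    ∃ n, E cW m n = some (x, y) := by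
  obtain ⟨hxy, ⟨p, hp, hpe⟩, ⟨q, hq, hqe⟩⟩ := h
  obtain ⟨t₁, ht₁⟩ := evaln_complete.mp hpe
  obtain ⟨t₂, ht₂⟩ := evaln_complete.mp hqe
  refine ⟨encode (x, y, p, q, max t₁ t₂), ?_⟩
  have h4 : evaln (max t₁ t₂) cW (encode (p, y)) = some (encode x) :=
    evaln_mono (le_max_left _ _) ht₁
  have h5 : evaln (max t₁ t₂) cW (encode (q, x)) = some (encode y) :=
    evaln_mono (le_max_right _ _) ht₂
  have hdec : (Encodable.decode (α := BStr × BStr × BStr × BStr × ℕ)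
      (encode (x, y, p, q, max t₁ t₂))) = some (x, y, p, q, max t₁ t₂) := encodek _
  rw [E, hdec, Option.bind_some, if_pos]
  exact ⟨hp, hq, hxy, h4, h5⟩

theorem firstE_sound {cW : Code} {m n : ℕ} {e : Edge} (h : firstE cW m n = some e) :
    E cW m n = some e ∧ ∀ k < n, E cW m k ≠ some e := by
  rw [firstE, Option.bind_eq_some_iff] at h
  obtain ⟨e', he', h⟩ := h
  split_ifs at h with hc
  · injection h with h; subst h
    refine ⟨he', fun k hk hEk => ?_⟩
    have := List.filterMap_eq_nil_iff.mp hc k (by simpa using hk)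
    rw [if_pos hEk] at this
    exact Option.some_ne_none k this

theorem firstE_inj {cW : Code} {m n k : ℕ} {e : Edge}
    (hn : firstE cW m n = some e) (hk : firstE cW m k = some e) : n = k := by
  obtain ⟨hn1, hn2⟩ := firstE_sound hn
  obtain ⟨hk1, hk2⟩ := firstE_sound hk
  rcases Nat.lt_trichotomy n k with h | h | h
  · exact absurd hn1 (hk2 n h)
  · exact h
  · exact absurd hk1 (hn2 k h)

theorem firstE_exists {cW : Code} {m n₀ : ℕ} {e : Edge} (h : E cW m n₀ = some e) :
    ∃ n, firstE cW m n = some e := by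
  have hex : ∃ n, E cW m n = some e := ⟨n₀, h⟩
  refine ⟨Nat.find hex, ?_⟩
  have h1 : E cW m (Nat.find hex) = some e := Nat.find_spec hex
  have h2 : ((List.range (Nat.find hex)).filterMap
      fun k => if E cW m k = some e then some k else none) = [] := by
    apply List.filterMap_eq_nil_iff.mpr
    intro k hk
    have : ¬ E cW m k = some e := Nat.find_min hex (by simpa using hk)
    rw [if_neg this]
  simp [firstE, h1, h2]

theorem mem_usedColors {L : List Entry} {x y : BStr} {c : ℕ} :
    c ∈ usedColors L x y ↔ ∃ a b : BStr, (some ((a, b), c) : Entry) ∈ L ∧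
      (a = x ∨ b = x ∨ a = y ∨ b = y) := by
  constructor
  · intro h
    obtain ⟨o, ho, hfo⟩ := List.mem_filterMap.mp h
    match o with
    | none => simp at hfo
    | some ((a, b), c') =>
      simp only [Option.bind_some] at hfo
      split_ifs at hfo with hc
      · injection hfo with hfo; subst hfo
        exact ⟨a, b, ho, hc⟩
  · rintro ⟨a, b, hmem, hsh⟩
    exact List.mem_filterMap.mpr ⟨some ((a, b), c), hmem, by simp [hsh]⟩

theorem colAt_some {cW : Code} {m k : ℕ} {a b : BStr} {c : ℕ}
    (h : colAt cW m k = some ((a, b), c)) :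
    firstE cW m k = some (a, b) ∧ c = pick m (usedColors (colList cW m k) a b) := by
  rw [colAt_eq, colStep] at h
  match hf : firstE cW m k with
  | none => rw [hf] at h; simp at h
  | some (u, v) =>
    rw [hf] at h
    rw [Option.map_some] at h
    injection h with h
    injection h with h1 h2
    injection h1 with hu hv
    subst hu; subst hv
    exact ⟨rfl, h2.symm⟩

open scoped Classical in
/-- choice of a short program computing `z` from `base`, if one exists -/
noncomputable def cp (cW : Code) (m : ℕ) (base z : BStr) : BStr :=
  if h : ∃ r : BStr, r.length ≤ m ∧ (encode z : ℕ) ∈ eval cW (encode (r, base)) then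
    h.choose else []

theorem cp_spec {cW : Code} {m : ℕ} {base z : BStr}
    (h : ∃ r : BStr, r.length ≤ m ∧ (encode z : ℕ) ∈ eval cW (encode (r, base))) :
    (cp cW m base z).length ≤ m ∧
      (encode z : ℕ) ∈ eval cW (encode (cp cW m base z, base)) := by
  classical
  rw [cp, dif_pos h]
  exact h.choose_spec

theorem good_side {cW : Code} {m : ℕ} {a b x : BStr} (hg : Good cW m a b)
    (hs : a = x ∨ b = x) :
    ∃ r : BStr, r.length ≤ m ∧
      (encode (if a = x then b else a) : ℕ) ∈ eval cW (encode (r, x)) := by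
  by_cases ha : a = x
  · subst ha
    simp only [if_pos rfl]
    exact hg.2.2.imp fun q hq => ⟨hq.1, hq.2⟩
  · have hb : b = x := hs.resolve_left ha
    subst hb
    simp only [if_neg ha]
    exact hg.2.1.imp fun p hp => ⟨hp.1, hp.2⟩

theorem edge_determined {a₁ b₁ a₂ b₂ x : BStr}
    (g₁ : encode a₁ ≤ encode b₁) (g₂ : encode a₂ ≤ encode b₂)
    (s₁ : a₁ = x ∨ b₁ = x) (s₂ : a₂ = x ∨ b₂ = x)
    (hz : (if a₁ = x then b₁ else a₁) = (if a₂ = x then b₂ else a₂)) :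
    a₁ = a₂ ∧ b₁ = b₂ := by
  by_cases h1 : a₁ = x <;> by_cases h2 : a₂ = x
  · rw [if_pos h1, if_pos h2] at hz; exact ⟨h1.trans h2.symm, hz⟩
  · have hb2 : b₂ = x := s₂.resolve_left h2
    rw [if_pos h1, if_neg h2] at hz
    have e1 : encode a₁ ≤ encode a₂ := hz ▸ g₁
    have e2 : encode a₂ ≤ encode a₁ := by rw [hb2, ← h1] at g₂; exact g₂
    have : a₂ = a₁ := encode_injective (le_antisymm e2 e1)
    exact absurd (this.trans h1) h2
  · have hb1 : b₁ = x := s₁.resolve_left h1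
    rw [if_neg h1, if_pos h2] at hz
    have e1 : encode a₂ ≤ encode a₁ := by rw [← hz] at g₂; exact g₂
    have e2 : encode a₁ ≤ encode a₂ := by rw [hb1, ← h2] at g₁; exact g₁
    have : a₁ = a₂ := encode_injective (le_antisymm e2 e1)
    exact absurd (this.trans h2) h1
  · have hb1 : b₁ = x := s₁.resolve_left h1
    have hb2 : b₂ = x := s₂.resolve_left h2
    rw [if_neg h1, if_neg h2] at hz
    exact ⟨hz, hb1.trans hb2.symm⟩

theorem colAt_good {cW : Code} {m k : ℕ} {a b : BStr} {c : ℕ}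
    (h : colAt cW m k = some ((a, b), c)) : Good cW m a b :=
  E_sound (firstE_sound (colAt_some h).1).1

def sharesB (x y : BStr) (o : Entry) : Bool :=
  (o.map fun ec => decide (ec.1.1 = x ∨ ec.1.2 = x ∨ ec.1.1 = y ∨ ec.1.2 = y)).getD false

theorem sharesB_true {x y : BStr} {o : Entry} :
    sharesB x y o = true ↔ ∃ a b c', o = some ((a, b), c') ∧
      (a = x ∨ b = x ∨ a = y ∨ b = y) := by
  match o with
  | none => simp [sharesB]
  | some ((a, b), c') =>
    simp only [sharesB, Option.map_some, Option.getD_some, decide_eq_true_eq]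
    constructor
    · intro h; exact ⟨a, b, c', rfl, h⟩
    · rintro ⟨a', b', c'', heq, h⟩
      injection heq with heq
      injection heq with h1 h2
      injection h1 with ha hb
      subst ha; subst hb
      exact h

noncomputable def psi (cW : Code) (m : ℕ) (x y : BStr) (k : ℕ) : ℕ :=
  ((colAt cW m k).map fun ec =>
    if ec.1.1 = x ∨ ec.1.2 = x then
      2 * nuv (cp cW m x (if ec.1.1 = x then ec.1.2 else ec.1.1))
    else 2 * nuv (cp cW m y (if ec.1.1 = y then ec.1.2 else ec.1.1)) + 1).getD 0

theorem exists_avail (cW : Code) (m n : ℕ) (x y : BStr) :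
    ∃ c, c < 2 ^ (m + 2) ∧ c ∉ usedColors (colList cW m n) x y := by
  classical
  set N := 2 ^ (m + 2) with hN
  have hN4 : 4 ≤ N := by
    have : (2:ℕ) ^ 2 ≤ 2 ^ (m + 2) := Nat.pow_le_pow_right (by norm_num) (by omega)
    simpa [hN] using this
  set S : Finset ℕ := (Finset.range n).filter
    (fun k => sharesB x y (colAt cW m k) = true) with hS
  have hunpack : ∀ k ∈ S, ∃ a b c', colAt cW m k = some ((a, b), c') ∧
      (a = x ∨ b = x ∨ a = y ∨ b = y) ∧ Good cW m a b := by
    intro k hk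
    have h2 := (Finset.mem_filter.mp hk).2
    obtain ⟨a, b, c', hcol, hsh⟩ := sharesB_true.mp h2
    exact ⟨a, b, c', hcol, hsh, colAt_good hcol⟩
  have hmaps : ∀ k ∈ S, psi cW m x y k ∈ Finset.Ico 2 N := by
    intro k hk
    obtain ⟨a, b, c', hcol, hsh, hgood⟩ := hunpack k hk
    rw [Finset.mem_Ico]
    by_cases hsx : a = x ∨ b = x
    · have hex := good_side hgood hsx
      obtain ⟨hlen, _⟩ := cp_spec hex
      have h1 := nuv_pos (cp cW m x (if a = x then b else a))
      have h2 := nuv_lt hlen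
      have hpow : 2 * 2 ^ (m + 1) = N := by rw [hN, pow_succ]; ring
      simp only [psi, hcol, Option.map_some, Option.getD_some, if_pos hsx]
      omega
    · have hsy : a = y ∨ b = y := by tauto
      have hex := good_side hgood hsy
      obtain ⟨hlen, _⟩ := cp_spec hex
      have h1 := nuv_pos (cp cW m y (if a = y then b else a))
      have h2 := nuv_lt hlen
      have hpow : 2 * 2 ^ (m + 1) = N := by rw [hN, pow_succ]; ring
      simp only [psi, hcol, Option.map_some, Option.getD_some, if_neg hsx]
      omega
  have hinj : Set.InjOn (psi cW m x y) S := by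
    intro k₁ hk₁ k₂ hk₂ heq
    obtain ⟨a₁, b₁, c₁, hcol₁, hsh₁, hgood₁⟩ := hunpack k₁ (Finset.mem_coe.mp hk₁)
    obtain ⟨a₂, b₂, c₂, hcol₂, hsh₂, hgood₂⟩ := hunpack k₂ (Finset.mem_coe.mp hk₂)
    simp only [psi, hcol₁, hcol₂, Option.map_some, Option.getD_some] at heq
    have key : ∀ (v : BStr), (a₁ = v ∨ b₁ = v) → (a₂ = v ∨ b₂ = v) →
        cp cW m v (if a₁ = v then b₁ else a₁) = cp cW m v (if a₂ = v then b₂ else a₂) →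
        k₁ = k₂ := by
      intro v hs₁ hs₂ hcp
      have hex₁ := good_side hgood₁ hs₁
      have hex₂ := good_side hgood₂ hs₂
      have hm₁ := (cp_spec hex₁).2
      have hm₂ := (cp_spec hex₂).2
      rw [hcp] at hm₁
      have hz : (if a₁ = v then b₁ else a₁) = (if a₂ = v then b₂ else a₂) :=
        encode_injective (Part.mem_unique hm₁ hm₂)
      obtain ⟨ha, hb⟩ := edge_determined hgood₁.1 hgood₂.1 hs₁ hs₂ hz
      have hf₁ := (colAt_some hcol₁).1
      have hf₂ := (colAt_some hcol₂).1
      rw [ha, hb] at hf₁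
      exact firstE_inj hf₁ hf₂
    by_cases h₁ : a₁ = x ∨ b₁ = x <;> by_cases h₂ : a₂ = x ∨ b₂ = x
    · rw [if_pos h₁, if_pos h₂] at heq
      have : nuv (cp cW m x (if a₁ = x then b₁ else a₁)) =
          nuv (cp cW m x (if a₂ = x then b₂ else a₂)) := by omega
      exact key x h₁ h₂ (nuv_inj this)
    · rw [if_pos h₁, if_neg h₂] at heq; omega
    · rw [if_neg h₁, if_pos h₂] at heq; omega
    · rw [if_neg h₁, if_neg h₂] at heq
      have hsy₁ : a₁ = y ∨ b₁ = y := by tauto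
      have hsy₂ : a₂ = y ∨ b₂ = y := by tauto
      have : nuv (cp cW m y (if a₁ = y then b₁ else a₁)) =
          nuv (cp cW m y (if a₂ = y then b₂ else a₂)) := by omega
      exact key y hsy₁ hsy₂ (nuv_inj this)
  have hcardS : S.card ≤ N - 2 := by
    have := Finset.card_le_card_of_injOn (psi cW m x y) hmaps hinj
    simpa [Nat.card_Ico] using this
  have hsub : (usedColors (colList cW m n) x y).toFinset ⊆
      S.image (fun k => ((colAt cW m k).map Prod.snd).getD 0) := by
    intro c hc
    obtain ⟨a, b, hmem, hsh⟩ := mem_usedColors.mp (List.mem_toFinset.mp hc)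
    obtain ⟨k, hkn, hcol⟩ := mem_colList cW m n hmem
    refine Finset.mem_image.mpr ⟨k, ?_, ?_⟩
    · refine Finset.mem_filter.mpr ⟨Finset.mem_range.mpr hkn, ?_⟩
      exact sharesB_true.mpr ⟨a, b, c, hcol, hsh⟩
    · rw [hcol]; rfl
  have hcardU : (usedColors (colList cW m n) x y).toFinset.card ≤ N - 2 :=
    le_trans (Finset.card_le_card hsub) (le_trans Finset.card_image_le hcardS)
  by_contra hcon
  push_neg at hcon
  have hss : Finset.range N ⊆ (usedColors (colList cW m n) x y).toFinset := by
    intro c hc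
    exact List.mem_toFinset.mpr (hcon c (Finset.mem_range.mp hc))
  have := Finset.card_le_card hss
  rw [Finset.card_range] at this
  omega

theorem getD_zero_mem {l : List ℕ} (h : l ≠ []) : l.getD 0 0 ∈ l := by
  cases l with
  | nil => exact absurd rfl h
  | cons a t => simp [List.getD]

theorem pick_spec (cW : Code) (m n : ℕ) (x y : BStr) :
    pick m (usedColors (colList cW m n) x y) < 2 ^ (m + 2) ∧
      pick m (usedColors (colList cW m n) x y) ∉ usedColors (colList cW m n) x y := by
  obtain ⟨c, hcN, hcnot⟩ := exists_avail cW m n x y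
  have hmem : c ∈ avail m (usedColors (colList cW m n) x y) :=
    List.mem_filterMap.mpr ⟨c, List.mem_range.mpr hcN, by rw [if_neg hcnot]⟩
  have hp : pick m (usedColors (colList cW m n) x y) ∈
      avail m (usedColors (colList cW m n) x y) :=
    getD_zero_mem (List.ne_nil_of_mem hmem)
  obtain ⟨c', hc'r, hif⟩ := List.mem_filterMap.mp hp
  split_ifs at hif with hc'
  injection hif with hif
  subst hif
  exact ⟨List.mem_range.mp hc'r, hc'⟩

theorem col_proper {cW : Code} {m k n : ℕ} {x y a b : BStr} {c c' : ℕ} (hkn : k < n)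
    (hn : colAt cW m n = some ((x, y), c)) (hk : colAt cW m k = some ((a, b), c'))
    (hsh : a = x ∨ b = x ∨ a = y ∨ b = y) : c ≠ c' := by
  have hc := (colAt_some hn).2
  have hlen : k < (colList cW m n).length := by simpa using hkn
  have hgetd : (colList cW m n)[k] = some ((a, b), c') := by
    have hgd := colAt_of_lt cW m hkn
    rw [hk] at hgd
    simpa [List.getD, List.getElem?_eq_getElem hlen] using hgd
  have hmem : (some ((a, b), c') : Entry) ∈ colList cW m n :=
    hgetd ▸ List.getElem_mem hlen
  have hc'' : c' ∈ usedColors (colList cW m n) x y := mem_usedColors.mpr ⟨a, b, hmem, hsh⟩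
  have hnp := (pick_spec cW m n x y).2
  rw [hc]
  exact fun h => hnp (h ▸ hc'')

theorem check_true {cW : Code} {m n c : ℕ} {v : BStr} : check cW m n c v = true ↔
    ∃ a b : BStr, colAt cW m n = some ((a, b), c) ∧ (a = v ∨ b = v) := by
  match hcol : colAt cW m n with
  | none => simp [check, hcol]
  | some ((a, b), c') =>
    simp only [check, hcol, Option.map_some, Option.getD_some, decide_eq_true_eq]
    constructor
    · rintro ⟨hc, hv⟩; exact ⟨a, b, by rw [hc], hv⟩
    · rintro ⟨a', b', heq, hv⟩
      injection heq with heq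
      injection heq with h1 h2
      injection h1 with ha hb
      subst ha; subst hb; subst h2
      exact ⟨rfl, hv⟩

theorem check_unique {cW : Code} {m n₁ n₂ c : ℕ} {v : BStr}
    (h₁ : check cW m n₁ c v = true) (h₂ : check cW m n₂ c v = true) : n₁ = n₂ := by
  obtain ⟨a₁, b₁, hcol₁, hs₁⟩ := check_true.mp h₁
  obtain ⟨a₂, b₂, hcol₂, hs₂⟩ := check_true.mp h₂
  rcases Nat.lt_trichotomy n₁ n₂ with h | h | h
  · have hsh : a₁ = a₂ ∨ b₁ = a₂ ∨ a₁ = b₂ ∨ b₁ = b₂ := by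
      rcases hs₂ with h' | h' <;> subst h' <;> tauto
    exact absurd rfl (col_proper h hcol₂ hcol₁ hsh)
  · exact h
  · have hsh : a₂ = a₁ ∨ b₂ = a₁ ∨ a₂ = b₁ ∨ b₂ = b₁ := by
      rcases hs₁ with h' | h' <;> subst h' <;> tauto
    exact absurd rfl (col_proper h hcol₁ hcol₂ hsh)

theorem Vm_mem_of {cW : Code} {m n₀ c : ℕ} {x y : BStr}
    (hxy : colAt cW m n₀ = some ((x, y), c)) (hc : c < 2 ^ (m + 2)) :
    y ∈ Vm cW (ntb (m + 2) c) x ∧ x ∈ Vm cW (ntb (m + 2) c) y := by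
  have hm : (ntb (m + 2) c).length - 2 = m := by rw [ntb_length]; omega
  have hbn : bn (ntb (m + 2) c) = c := bn_ntb hc
  constructor
  · show y ∈ (Nat.rfind fun n =>
        Part.some (check cW ((ntb (m+2) c).length - 2) n (bn (ntb (m+2) c)) x)).map
        fun n => other cW ((ntb (m+2) c).length - 2) n x
    simp only [hm, hbn]
    have hPn₀ : check cW m n₀ c x = true := check_true.mpr ⟨x, y, hxy, Or.inl rfl⟩
    obtain ⟨ns, hns, -⟩ := Nat.rfind_min' (p := fun n => check cW m n c x) hPn₀
    have hcheck : check cW m ns c x = true := by simpa using Nat.rfind_spec hns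
    have heq : ns = n₀ := check_unique hcheck hPn₀
    refine (Part.mem_map_iff _).mpr ⟨ns, hns, ?_⟩
    subst heq
    simp [other, hxy]
  · show x ∈ (Nat.rfind fun n =>
        Part.some (check cW ((ntb (m+2) c).length - 2) n (bn (ntb (m+2) c)) y)).map
        fun n => other cW ((ntb (m+2) c).length - 2) n y
    simp only [hm, hbn]
    have hPn₀ : check cW m n₀ c y = true := check_true.mpr ⟨x, y, hxy, Or.inr rfl⟩
    obtain ⟨ns, hns, -⟩ := Nat.rfind_min' (p := fun n => check cW m n c y) hPn₀
    have hcheck : check cW m ns c y = true := by simpa using Nat.rfind_spec hns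
    have heq : ns = n₀ := check_unique hcheck hPn₀
    refine (Part.mem_map_iff _).mpr ⟨ns, hns, ?_⟩
    subst heq
    by_cases hxy' : x = y
    · simp [other, hxy, hxy']
    · simp [other, hxy, hxy']

theorem IDist_Vm_le {cW : Code} {m : ℕ} {x y : BStr} (h : Good cW m x y) :
    IDist (Vm cW) x y ≤ ((m + 2 : ℕ) : ℕ∞) := by
  obtain ⟨n₁, hE⟩ := E_complete h
  obtain ⟨n₀, hF⟩ := firstE_exists hE
  have hcol : colAt cW m n₀ =
      some ((x, y), pick m (usedColors (colList cW m n₀) x y)) := by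
    rw [colAt_eq, hF]; rfl
  have hc := (pick_spec cW m n₀ x y).1
  obtain ⟨h1, h2⟩ := Vm_mem_of hcol hc
  apply sInf_le
  exact ⟨ntb (m + 2) _, by rw [ntb_length], h1, h2⟩

section Computability

private theorem bn_eq (l : List Bool) :
    bn l = l.foldr (fun b r => cond b 1 0 + 2 * r) 0 := by
  induction l with
  | nil => rfl
  | cons b t ih => simp [bn, ih]

theorem bn_primrec : Primrec bn := by
  have hh : Primrec₂ fun (_ : List Bool) (p : Bool × ℕ) => cond p.1 1 0 + 2 * p.2 :=
    Primrec.to₂ <|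
      Primrec.nat_add.comp
        (Primrec.cond (Primrec.fst.comp Primrec.snd) (Primrec.const 1) (Primrec.const 0))
        (Primrec.nat_mul.comp (Primrec.const 2) (Primrec.snd.comp Primrec.snd))
  exact (Primrec.list_foldr Primrec.id (Primrec.const 0) hh).of_eq fun l => (bn_eq l).symm

theorem mem_list_primrec : PrimrecPred fun w : ℕ × List ℕ => w.1 ∈ w.2 := by
  have hg : Primrec₂ fun (w : ℕ × List ℕ) (u : ℕ) =>
      if u = w.1 then some u else none :=
    Primrec.to₂ <| Primrec.ite (Primrec.eq.comp Primrec.snd (Primrec.fst.comp Primrec.fst))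
      (Primrec.option_some.comp Primrec.snd) (Primrec.const none)
  have base : PrimrecPred fun w : ℕ × List ℕ =>
      ¬((w.2.filterMap fun u => if u = w.1 then some u else none) = []) :=
    PrimrecPred.not (Primrec.eq.comp
      (Primrec.listFilterMap Primrec.snd hg) (Primrec.const []))
  refine base.of_eq fun w => ?_
  simp only [List.filterMap_eq_nil_iff, not_forall]
  constructor
  · rintro ⟨u, hu, hne⟩
    by_cases h : u = w.1
    · exact h ▸ hu
    · rw [if_neg h] at hne; exact absurd rfl hne
  · intro hc
    exact ⟨w.1, hc, by simp⟩

set_option maxHeartbeats 4000000 in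
theorem E_primrec (cW : Code) : Primrec₂ (E cW) := by
  have hdec : Primrec fun a : ℕ × ℕ =>
      (Encodable.decode a.2 : Option (BStr × BStr × BStr × BStr × ℕ)) :=
    Primrec.decode.comp Primrec.snd
  have hg : Primrec₂ fun (a : ℕ × ℕ) (z : BStr × BStr × BStr × BStr × ℕ) =>
      if z.2.2.1.length ≤ a.1 ∧ z.2.2.2.1.length ≤ a.1 ∧ encode z.1 ≤ encode z.2.1 ∧
         evaln z.2.2.2.2 cW (encode (z.2.2.1, z.2.1)) = some (encode z.1) ∧
         evaln z.2.2.2.2 cW (encode (z.2.2.2.1, z.1)) = some (encode z.2.1)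
      then some (z.1, z.2.1) else none := by
    have pm : Primrec fun w : (ℕ×ℕ) × (BStr × BStr × BStr × BStr × ℕ) => w.1.1 :=
      Primrec.fst.comp Primrec.fst
    have px : Primrec fun w : (ℕ×ℕ) × (BStr × BStr × BStr × BStr × ℕ) => w.2.1 :=
      Primrec.fst.comp Primrec.snd
    have py : Primrec fun w : (ℕ×ℕ) × (BStr × BStr × BStr × BStr × ℕ) => w.2.2.1 :=
      Primrec.fst.comp (Primrec.snd.comp Primrec.snd)
    have pp : Primrec fun w : (ℕ×ℕ) × (BStr × BStr × BStr × BStr × ℕ) => w.2.2.2.1 :=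
      Primrec.fst.comp (Primrec.snd.comp (Primrec.snd.comp Primrec.snd))
    have pq : Primrec fun w : (ℕ×ℕ) × (BStr × BStr × BStr × BStr × ℕ) => w.2.2.2.2.1 :=
      Primrec.fst.comp (Primrec.snd.comp (Primrec.snd.comp (Primrec.snd.comp Primrec.snd)))
    have pt : Primrec fun w : (ℕ×ℕ) × (BStr × BStr × BStr × BStr × ℕ) => w.2.2.2.2.2 :=
      Primrec.snd.comp (Primrec.snd.comp (Primrec.snd.comp (Primrec.snd.comp Primrec.snd)))
    have c1 : PrimrecPred fun w : (ℕ×ℕ) × (BStr × BStr × BStr × BStr × ℕ) =>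
        w.2.2.2.1.length ≤ w.1.1 := Primrec.nat_le.comp (Primrec.list_length.comp pp) pm
    have c2 : PrimrecPred fun w : (ℕ×ℕ) × (BStr × BStr × BStr × BStr × ℕ) =>
        w.2.2.2.2.1.length ≤ w.1.1 := Primrec.nat_le.comp (Primrec.list_length.comp pq) pm
    have c3 : PrimrecPred fun w : (ℕ×ℕ) × (BStr × BStr × BStr × BStr × ℕ) =>
        encode w.2.1 ≤ encode w.2.2.1 :=
      Primrec.nat_le.comp (Primrec.encode.comp px) (Primrec.encode.comp py)
    have c4 : PrimrecPred fun w : (ℕ×ℕ) × (BStr × BStr × BStr × BStr × ℕ) =>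
        evaln w.2.2.2.2.2 cW (encode (w.2.2.2.1, w.2.2.1)) = some (encode w.2.1) :=
      Primrec.eq.comp
        (primrec_evaln.comp ((pt.pair (Primrec.const cW)).pair
          (Primrec.encode.comp (pp.pair py))))
        (Primrec.option_some.comp (Primrec.encode.comp px))
    have c5 : PrimrecPred fun w : (ℕ×ℕ) × (BStr × BStr × BStr × BStr × ℕ) =>
        evaln w.2.2.2.2.2 cW (encode (w.2.2.2.2.1, w.2.1)) = some (encode w.2.2.1) :=
      Primrec.eq.comp
        (primrec_evaln.comp ((pt.pair (Primrec.const cW)).pair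
          (Primrec.encode.comp (pq.pair px))))
        (Primrec.option_some.comp (Primrec.encode.comp py))
    exact Primrec.to₂ <|
      Primrec.ite (c1.and (c2.and (c3.and (c4.and c5))))
        (Primrec.option_some.comp (px.pair py)) (Primrec.const none)
  exact Primrec.option_bind hdec hg

set_option maxHeartbeats 4000000 in
theorem firstE_primrec (cW : Code) : Primrec₂ (firstE cW) := by
  have hE := E_primrec cW
  have hg : Primrec₂ fun (a : ℕ × ℕ) (e : Edge) =>
      if ((List.range a.2).filterMap fun k => if E cW a.1 k = some e then some k else none) = []
      then some e else none := by
    have hinner : Primrec₂ fun (w : (ℕ × ℕ) × Edge) (k : ℕ) =>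
        if E cW w.1.1 k = some w.2 then some k else none :=
      Primrec.to₂ <| Primrec.ite
        (Primrec.eq.comp
          (hE.comp (Primrec.fst.comp (Primrec.fst.comp Primrec.fst)) Primrec.snd)
          (Primrec.option_some.comp (Primrec.snd.comp Primrec.fst)))
        (Primrec.option_some.comp Primrec.snd) (Primrec.const none)
    have hfm : Primrec fun w : (ℕ × ℕ) × Edge =>
        (List.range w.1.2).filterMap fun k => if E cW w.1.1 k = some w.2 then some k else none :=
      Primrec.listFilterMap (Primrec.list_range.comp (Primrec.snd.comp Primrec.fst)) hinner
    exact Primrec.to₂ <| Primrec.ite (Primrec.eq.comp hfm (Primrec.const []))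
      (Primrec.option_some.comp Primrec.snd) (Primrec.const none)
  exact Primrec.option_bind (hE.comp Primrec.fst Primrec.snd) hg

set_option maxHeartbeats 4000000 in
theorem usedColors_primrec :
    Primrec fun w : List Entry × BStr × BStr => usedColors w.1 w.2.1 w.2.2 := by
  have hg : Primrec₂ fun (w : List Entry × BStr × BStr) (o : Entry) =>
      o.bind fun ec =>
        if ec.1.1 = w.2.1 ∨ ec.1.2 = w.2.1 ∨ ec.1.1 = w.2.2 ∨ ec.1.2 = w.2.2
        then some ec.2 else none := by
    have hinner : Primrec₂ fun (v : (List Entry × BStr × BStr) × Entry) (ec : Edge × ℕ) =>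
        if ec.1.1 = v.1.2.1 ∨ ec.1.2 = v.1.2.1 ∨ ec.1.1 = v.1.2.2 ∨ ec.1.2 = v.1.2.2
        then some ec.2 else none := by
      have pa : Primrec fun u : ((List Entry × BStr × BStr) × Entry) × (Edge × ℕ) =>
          u.2.1.1 := Primrec.fst.comp (Primrec.fst.comp Primrec.snd)
      have pb : Primrec fun u : ((List Entry × BStr × BStr) × Entry) × (Edge × ℕ) =>
          u.2.1.2 := Primrec.snd.comp (Primrec.fst.comp Primrec.snd)
      have pxx : Primrec fun u : ((List Entry × BStr × BStr) × Entry) × (Edge × ℕ) =>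
          u.1.1.2.1 := Primrec.fst.comp (Primrec.snd.comp (Primrec.fst.comp Primrec.fst))
      have pyy : Primrec fun u : ((List Entry × BStr × BStr) × Entry) × (Edge × ℕ) =>
          u.1.1.2.2 := Primrec.snd.comp (Primrec.snd.comp (Primrec.fst.comp Primrec.fst))
      exact Primrec.to₂ <| Primrec.ite
        (((Primrec.eq.comp pa pxx).or ((Primrec.eq.comp pb pxx).or
          ((Primrec.eq.comp pa pyy).or (Primrec.eq.comp pb pyy)))))
        (Primrec.option_some.comp (Primrec.snd.comp Primrec.snd))
        (Primrec.const none)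
    exact Primrec.to₂ <| Primrec.option_bind Primrec.snd hinner
  exact (Primrec.listFilterMap Primrec.fst hg).of_eq fun w => rfl

theorem pick_primrec : Primrec₂ pick := by
  have hpow : Primrec fun m : ℕ => 2 ^ (m + 2) :=
    (Primrec₂.unpaired'.1 Nat.Primrec.pow).comp (Primrec.const 2)
      (Primrec.nat_add.comp Primrec.id (Primrec.const 2))
  have hg : Primrec₂ fun (w : ℕ × List ℕ) (c : ℕ) =>
      if c ∈ w.2 then none else some c :=
    Primrec.to₂ <| Primrec.ite
      (mem_list_primrec.comp (Primrec.snd.pair (Primrec.snd.comp Primrec.fst)))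
      (Primrec.const none) (Primrec.option_some.comp Primrec.snd)
  have havail : Primrec fun w : ℕ × List ℕ => avail w.1 w.2 :=
    Primrec.listFilterMap (Primrec.list_range.comp (hpow.comp Primrec.fst)) hg
  exact Primrec.to₂ <|
    (Primrec.list_getD 0).comp havail (Primrec.const 0)

set_option maxHeartbeats 4000000 in
theorem colList_primrec (cW : Code) : Primrec₂ (colList cW) := by
  have hstep : Primrec fun w : ℕ × (ℕ × List Entry) =>
      w.2.2 ++ [colStep w.1 w.2.2 (firstE cW w.1 w.2.1)] := by
    have hL : Primrec fun w : ℕ × (ℕ × List Entry) => w.2.2 :=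
      Primrec.snd.comp Primrec.snd
    have hfe : Primrec fun w : ℕ × (ℕ × List Entry) => firstE cW w.1 w.2.1 :=
      (firstE_primrec cW).comp Primrec.fst (Primrec.fst.comp Primrec.snd)
    have hcolstep : Primrec fun w : ℕ × (ℕ × List Entry) =>
        colStep w.1 w.2.2 (firstE cW w.1 w.2.1) := by
      have hg : Primrec₂ fun (w : ℕ × (ℕ × List Entry)) (xy : Edge) =>
          (xy, pick w.1 (usedColors w.2.2 xy.1 xy.2)) := by
        have hused : Primrec fun v : (ℕ × (ℕ × List Entry)) × Edge =>
            usedColors v.1.2.2 v.2.1 v.2.2 :=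
          usedColors_primrec.comp
            ((Primrec.snd.comp (Primrec.snd.comp Primrec.fst)).pair
              ((Primrec.fst.comp Primrec.snd).pair (Primrec.snd.comp Primrec.snd)))
        exact Primrec.to₂ <| Primrec.snd.pair
          (pick_primrec.comp (Primrec.fst.comp Primrec.fst) hused)
      exact (Primrec.option_map hfe hg).of_eq fun w => rfl
    exact Primrec.list_append.comp hL
      (Primrec.list_cons.comp hcolstep (Primrec.const []))
  have h := Primrec.nat_rec' (f := fun a : ℕ × ℕ => a.2)
    (g := fun _ : ℕ × ℕ => ([] : List Entry))
    (h := fun (a : ℕ × ℕ) (p : ℕ × List Entry) =>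
      p.2 ++ [colStep a.1 p.2 (firstE cW a.1 p.1)])
    Primrec.snd (Primrec.const [])
    (Primrec.to₂ (hstep.comp ((Primrec.fst.comp Primrec.fst).pair Primrec.snd)))
  refine h.of_eq fun a => ?_
  rcases a with ⟨m, n⟩
  simp only
  induction n with
  | zero => rfl
  | succ n ih => simp only [colList, ← ih]

theorem colAt_primrec (cW : Code) : Primrec₂ (colAt cW) := by
  have h : Primrec fun a : ℕ × ℕ => (colList cW a.1 (a.2 + 1)).getD a.2 none :=
    (Primrec.list_getD none).comp
      ((colList_primrec cW).comp Primrec.fst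
        (Primrec.nat_add.comp Primrec.snd (Primrec.const 1)))
      Primrec.snd
  exact h.of_eq fun a => rfl

theorem check_primrec (cW : Code) :
    Primrec fun w : (BStr × BStr) × ℕ =>
      check cW (w.1.1.length - 2) w.2 (bn w.1.1) w.1.2 := by
  have hcol : Primrec fun w : (BStr × BStr) × ℕ =>
      colAt cW (w.1.1.length - 2) w.2 :=
    (colAt_primrec cW).comp
      (Primrec.nat_sub.comp
        (Primrec.list_length.comp (Primrec.fst.comp Primrec.fst)) (Primrec.const 2))
      Primrec.snd
  have hg : Primrec₂ fun (w : (BStr × BStr) × ℕ) (ec : Edge × ℕ) =>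
      decide (ec.2 = bn w.1.1 ∧ (ec.1.1 = w.1.2 ∨ ec.1.2 = w.1.2)) := by
    have p1 : PrimrecPred fun u : ((BStr × BStr) × ℕ) × (Edge × ℕ) =>
        u.2.2 = bn u.1.1.1 :=
      Primrec.eq.comp (Primrec.snd.comp Primrec.snd)
        (bn_primrec.comp (Primrec.fst.comp (Primrec.fst.comp Primrec.fst)))
    have p2 : PrimrecPred fun u : ((BStr × BStr) × ℕ) × (Edge × ℕ) =>
        u.2.1.1 = u.1.1.2 :=
      Primrec.eq.comp (Primrec.fst.comp (Primrec.fst.comp Primrec.snd))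
        (Primrec.snd.comp (Primrec.fst.comp Primrec.fst))
    have p3 : PrimrecPred fun u : ((BStr × BStr) × ℕ) × (Edge × ℕ) =>
        u.2.1.2 = u.1.1.2 :=
      Primrec.eq.comp (Primrec.snd.comp (Primrec.fst.comp Primrec.snd))
        (Primrec.snd.comp (Primrec.fst.comp Primrec.fst))
    exact Primrec.to₂ (p1.and (p2.or p3)).decide
  exact Primrec.option_getD.comp (Primrec.option_map hcol hg) (Primrec.const false)

theorem other_primrec (cW : Code) :
    Primrec fun w : ((BStr × BStr) × ℕ) =>
      other cW (w.1.1.length - 2) w.2 w.1.2 := by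
  have hcol : Primrec fun w : (BStr × BStr) × ℕ =>
      colAt cW (w.1.1.length - 2) w.2 :=
    (colAt_primrec cW).comp
      (Primrec.nat_sub.comp
        (Primrec.list_length.comp (Primrec.fst.comp Primrec.fst)) (Primrec.const 2))
      Primrec.snd
  have hg : Primrec₂ fun (w : (BStr × BStr) × ℕ) (ec : Edge × ℕ) =>
      if ec.1.1 = w.1.2 then ec.1.2 else ec.1.1 :=
    Primrec.to₂ <| Primrec.ite
      (Primrec.eq.comp (Primrec.fst.comp (Primrec.fst.comp Primrec.snd))
        (Primrec.snd.comp (Primrec.fst.comp Primrec.fst)))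
      (Primrec.snd.comp (Primrec.fst.comp Primrec.snd))
      (Primrec.fst.comp (Primrec.fst.comp Primrec.snd))
  exact Primrec.option_getD.comp (Primrec.option_map hcol hg) (Primrec.const [])

theorem Vm_partrec (cW : Code) : Partrec₂ (Vm cW) := by
  have hcheck : Computable₂ fun (a : BStr × BStr) (n : ℕ) =>
      check cW (a.1.length - 2) n (bn a.1) a.2 :=
    (check_primrec cW).to_comp.to₂
  have hP : Partrec₂ fun (a : BStr × BStr) (n : ℕ) =>
      (Part.some (check cW (a.1.length - 2) n (bn a.1) a.2) : Part Bool) :=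
    hcheck.partrec₂
  have h1 : Partrec fun a : BStr × BStr =>
      Nat.rfind fun n => Part.some (check cW (a.1.length - 2) n (bn a.1) a.2) :=
    Partrec.rfind hP
  have hother : Computable₂ fun (a : BStr × BStr) (n : ℕ) =>
      other cW (a.1.length - 2) n a.2 :=
    (other_primrec cW).to_comp.to₂
  exact h1.map hother

end Computability

theorem Kcond_prog {Wf : PFun2} {a b : BStr} {m : ℕ} (h : Kcond Wf a b ≤ (m : ℕ∞)) :
    ∃ p : BStr, p.length ≤ m ∧ a ∈ Wf p b := by
  have hm1 : (m : ℕ∞) < ((m + 1 : ℕ) : ℕ∞) := by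
    exact_mod_cast Nat.lt_succ_self m
  have hlt : Kcond Wf a b < ((m + 1 : ℕ) : ℕ∞) := lt_of_le_of_lt h hm1
  rw [Kcond] at hlt
  obtain ⟨v, hv, hlt'⟩ := sInf_lt_iff.mp hlt
  obtain ⟨p, hlen, hmem⟩ := hv
  refine ⟨p, ?_, hmem⟩
  rw [← hlen] at hlt'
  exact_mod_cast Nat.lt_succ_iff.mp (by exact_mod_cast hlt')

theorem Kcond_le_IDist₁ (Uf : PFun2) (x y : BStr) : Kcond Uf y x ≤ IDist Uf x y :=
  sInf_le_sInf fun n hn => by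
    obtain ⟨p, hl, h1, _⟩ := hn; exact ⟨p, hl, h1⟩

theorem Kcond_le_IDist₂ (Uf : PFun2) (x y : BStr) : Kcond Uf x y ≤ IDist Uf x y :=
  sInf_le_sInf fun n hn => by
    obtain ⟨p, hl, _, h2⟩ := hn; exact ⟨p, hl, h2⟩

theorem IDist_comm (Vf : PFun2) (x y : BStr) : IDist Vf x y = IDist Vf y x := by
  unfold IDist
  congr 1
  ext n
  constructor
  · rintro ⟨p, hl, h1, h2⟩; exact ⟨p, hl, h2, h1⟩
  · rintro ⟨p, hl, h1, h2⟩; exact ⟨p, hl, h2, h1⟩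

end PDC

/-- if `U` makes the plain information distance minimal up to additive
constants, then `D_U(x,y) = max(K(x|y), K(y|x)) + O(1)`. -/
theorem plain_distance_characterization
    (U : PFun2) (hU : IsMachine U)
    (hUopt : ∀ V : PFun2, IsMachine V → ∃ c : ℕ, ∀ x y : BStr,
      IDist U x y ≤ IDist V x y + (c : ℕ∞))
    (W : PFun2) (hW : OptimalPlainK W) :
    ∃ c : ℕ, ∀ x y : BStr,
      IDist U x y ≤ max (Kcond W x y) (Kcond W y x) + (c : ℕ∞) ∧
      max (Kcond W x y) (Kcond W y x) ≤ IDist U x y + (c : ℕ∞) := by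
  classical
  open PDC Nat.Partrec Nat.Partrec.Code Encodable in
  -- obtain a code for W
  obtain ⟨cW, heval⟩ := Code.exists_code.1 hW.1
  have hWmem : ∀ p x y : BStr, y ∈ W p x ↔ (encode y : ℕ) ∈ eval cW (encode (p, x)) := by
    intro p x y
    have hev : eval cW (encode (p, x)) = Part.map encode (W p x) := by
      rw [heval]
      simp [encodek]
    rw [hev]
    constructor
    · exact fun h => Part.mem_map _ h
    · intro h
      obtain ⟨z, hz, hze⟩ := (Part.mem_map_iff _).1 h
      rwa [encode_injective hze] at hz
  -- the constant from optimality of U w.r.t. our machine Vm cW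
  obtain ⟨c₀, h₀⟩ := hUopt (PDC.Vm cW) (PDC.Vm_partrec cW)
  -- the constant from optimality of W w.r.t. U for conditional complexity
  obtain ⟨c₁, h₁⟩ := hW.2 U hU
  refine ⟨c₀ + c₁ + 2, fun x y => ?_⟩
  constructor
  · -- upper bound on IDist U
    by_cases hM : max (Kcond W x y) (Kcond W y x) = ⊤
    · rw [hM, top_add]; exact le_top
    · obtain ⟨m, hm⟩ := WithTop.ne_top_iff_exists.1 hM
      have hK1 : Kcond W x y ≤ (m : ℕ∞) := (le_max_left _ _).trans hm.ge
      have hK2 : Kcond W y x ≤ (m : ℕ∞) := (le_max_right _ _).trans hm.ge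
      obtain ⟨p, hp, hpx⟩ := PDC.Kcond_prog hK1
      obtain ⟨q, hq, hqy⟩ := PDC.Kcond_prog hK2
      have hVle : IDist (PDC.Vm cW) x y ≤ ((m + 2 : ℕ) : ℕ∞) := by
        rcases le_total (encode x) (encode y) with hle | hle
        · exact PDC.IDist_Vm_le
            ⟨hle, ⟨p, hp, (hWmem p y x).1 hpx⟩, ⟨q, hq, (hWmem q x y).1 hqy⟩⟩
        · rw [PDC.IDist_comm]
          exact PDC.IDist_Vm_le
            ⟨hle, ⟨q, hq, (hWmem q x y).1 hqy⟩, ⟨p, hp, (hWmem p y x).1 hpx⟩⟩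
      calc IDist U x y ≤ IDist (PDC.Vm cW) x y + (c₀ : ℕ∞) := h₀ x y
        _ ≤ ((m + 2 : ℕ) : ℕ∞) + (c₀ : ℕ∞) := add_le_add_left hVle _
        _ = (m : ℕ∞) + ((c₀ + 2 : ℕ) : ℕ∞) := by push_cast; ring
        _ ≤ max (Kcond W x y) (Kcond W y x) + ((c₀ + c₁ + 2 : ℕ) : ℕ∞) := by
            rw [← hm]
            exact add_le_add_right (Nat.cast_le.2 (by omega)) _
  · -- lower bound
    have hb1 : Kcond W x y ≤ IDist U x y + (c₁ : ℕ∞) :=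
      le_trans (h₁ y x) (add_le_add_left (PDC.Kcond_le_IDist₂ U x y) _)
    have hb2 : Kcond W y x ≤ IDist U x y + (c₁ : ℕ∞) :=
      le_trans (h₁ x y) (add_le_add_left (PDC.Kcond_le_IDist₁ U x y) _)
    have : max (Kcond W x y) (Kcond W y x) ≤ IDist U x y + (c₁ : ℕ∞) := max_le hb1 hb2
    refine le_trans this (add_le_add_right ?_ _)
    exact Nat.cast_le.2 (by omega)
end

section
/- There exists a machine U such that K_U is optimal for plain conditional complexity (for every machine V there is a constant c with K_U(y|x) ≤ K_V(y|x) + c for all x,y), and yet D_U(x,y) = ∞ for some binary strings x and y (i.e., no program p satisfies both U(p,x)=y and U(p,y)=x). -/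
open scoped ENNReal

open Encodable Denumerable
open Nat.Partrec (Code)

def parseN (q : BStr) : ℕ := q.findIdx (fun b => !b)

def myU : PFun2 := fun p x =>
  cond (decide (p.head? = some x.headI))
    (Part.bind
      ((Denumerable.ofNat Code (parseN p.tail)).eval
        (Nat.pair (encode (List.tail^[parseN p.tail + 1] p.tail)) (encode x)))
      (fun m => (decode (α := BStr) m : Part BStr)))
    Part.none

lemma iterate_tail_eq_drop (n : ℕ) (l : BStr) : List.tail^[n] l = l.drop n := by
  induction n generalizing l with
  | zero => simp
  | succ n ih => rw [Function.iterate_succ_apply', ih, List.tail_drop]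

lemma parseN_spec (n : ℕ) (q : BStr) :
    parseN (List.replicate n true ++ false :: q) = n := by
  induction n with
  | zero => simp [parseN, List.findIdx_cons]
  | succ n ih => simpa [parseN, List.replicate_succ, List.findIdx_cons] using ih

lemma myU_partrec : Partrec₂ myU := by
  have ptail : Primrec fun a : BStr × BStr => a.1.tail :=
    Primrec.list_tail.comp .fst
  have pN : Primrec fun a : BStr × BStr => parseN a.1.tail :=
    Primrec.list_findIdx ptail ((Primrec.not.comp Primrec.snd).to₂)
  have pdrop : Primrec fun a : BStr × BStr => List.tail^[parseN a.1.tail + 1] a.1.tail :=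
    Primrec.nat_iterate (Primrec.succ.comp pN) ptail
      ((Primrec.list_tail.comp Primrec.snd).to₂)
  have pinput : Primrec fun a : BStr × BStr =>
      Nat.pair (encode (List.tail^[parseN a.1.tail + 1] a.1.tail)) (encode a.2) :=
    Primrec₂.natPair.comp (Primrec.encode.comp pdrop) (Primrec.encode.comp Primrec.snd)
  have hcode : Computable fun a : BStr × BStr => Denumerable.ofNat Code (parseN a.1.tail) :=
    (Computable.ofNat Code).comp pN.to_comp
  have heval : Partrec fun a : BStr × BStr =>
      (Denumerable.ofNat Code (parseN a.1.tail)).eval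
        (Nat.pair (encode (List.tail^[parseN a.1.tail + 1] a.1.tail)) (encode a.2)) :=
    Nat.Partrec.Code.eval_part.comp hcode pinput.to_comp
  have hbind : Partrec fun a : BStr × BStr =>
      Part.bind
        ((Denumerable.ofNat Code (parseN a.1.tail)).eval
          (Nat.pair (encode (List.tail^[parseN a.1.tail + 1] a.1.tail)) (encode a.2)))
        (fun m => (decode (α := BStr) m : Part BStr)) :=
    heval.bind ((Computable.ofOption (Computable.decode.comp .snd)).to₂)
  have hc : Computable fun a : BStr × BStr => decide (a.1.head? = some a.2.headI) :=
    (Primrec.eq.comp (Primrec.list_head?.comp .fst)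
      (Primrec.option_some.comp (Primrec.list_headI.comp .snd))).decide.to_comp
  exact Partrec.cond hc hbind Partrec.none

lemma drop_repl (n : ℕ) (q : BStr) : (List.replicate n true ++ false :: q).drop (n+1) = q := by
  induction n with
  | zero => simp
  | succ n ih => simpa [List.replicate_succ] using ih

lemma myU_sim {V : PFun2} {cV : Code}
    (hcV : cV.eval = fun k => Part.bind ((decode (α := BStr × BStr) k : Option (BStr × BStr)) :
        Part (BStr × BStr)) fun a => (V a.1 a.2).map encode)
    (q x y : BStr) (hy : y ∈ V q x) :
    y ∈ myU (x.headI :: (List.replicate (encode cV) true ++ false :: q)) x := by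
  unfold myU
  simp only [List.head?_cons, List.tail_cons, decide_true, decide_eq_true_eq,
    iterate_tail_eq_drop, parseN_spec, drop_repl, Denumerable.ofNat_encode, hcV]
  simp only [decide_eq_true_eq, if_pos, cond]
  have hk : Nat.pair (Encodable.encode q) (Encodable.encode x) = encode (q, x) := rfl
  rw [hk, Encodable.encodek]
  refine Part.mem_bind_iff.2 ⟨encode y, ?_, ?_⟩
  · simp only [Part.coe_some, Part.bind_some]
    exact Part.mem_map encode hy
  · simp [Encodable.encodek]

/-- there is a machine `U` optimal for plain conditional complexity
such that `D_U(x,y)` is infinite for some strings `x`, `y`. -/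
theorem exists_optimalK_machine_with_infinite_distance :
    ∃ U : PFun2, IsMachine U ∧
      (∀ V : PFun2, IsMachine V → ∃ c : ℕ, ∀ x y : BStr,
        Kcond U y x ≤ Kcond V y x + (c : ℕ∞)) ∧
      ∃ x y : BStr, IDist U x y = ⊤ := by
  refine ⟨myU, myU_partrec, ?_, ?_⟩
  · intro V hV
    obtain ⟨cV, hcV⟩ := Nat.Partrec.Code.exists_code.1 hV
    refine ⟨encode cV + 2, fun x y => ?_⟩
    by_cases hV' : Kcond V y x = ⊤
    · rw [hV', top_add]; exact le_top
    · obtain ⟨m, hm, hmlt⟩ := sInf_lt_iff.1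
        (show Kcond V y x < Kcond V y x + 1 from (ENat.lt_add_one_iff hV').2 le_rfl)
      obtain ⟨pq, hlen, hpq⟩ := hm
      have hmle : m ≤ Kcond V y x := (ENat.lt_add_one_iff hV').1 hmlt
      have hsim := myU_sim hcV pq x y hpq
      have hK : Kcond myU y x ≤
          ((x.headI :: (List.replicate (encode cV) true ++ false :: pq)).length : ℕ∞) :=
        sInf_le ⟨_, rfl, hsim⟩
      have hlen2 : ((x.headI :: (List.replicate (encode cV) true ++ false :: pq)).length : ℕ∞)
          = (pq.length : ℕ∞) + ((encode cV + 2 : ℕ) : ℕ∞) := by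
        simp only [List.length_cons, List.length_append, List.length_replicate]
        push_cast
        ring
      rw [hlen2, hlen] at hK
      exact hK.trans (add_le_add hmle le_rfl)
  · refine ⟨[], [true], ?_⟩
    have key : ∀ p x y, y ∈ myU p x → p.head? = some x.headI := by
      intro p x y hy
      by_contra h
      have hnone : myU p x = Part.none := by
        unfold myU
        rw [decide_eq_false h, cond_false]
      rw [hnone] at hy
      exact Part.notMem_none _ hy
    have hempty : {n : ℕ∞ | ∃ p : BStr,
        (p.length : ℕ∞) = n ∧ [true] ∈ myU p [] ∧ [] ∈ myU p [true]} = ∅ := by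
      ext n
      simp only [Set.mem_setOf_eq, Set.mem_empty_iff_false, iff_false]
      rintro ⟨p, -, h1, h2⟩
      have e1 := key p [] [true] h1
      have e2 := key p [true] [] h2
      rw [e1] at e2
      simp [List.headI] at e2
    rw [IDist, hempty, sInf_empty]
end

section
/- There exists a machine U such that for every machine V there is a constant c with D_U(x,y) ≤ D_V(x,y) + c for all binary strings x and y; that is, there is a machine making the plain information distance D_U minimal up to additive constants. -/
open scoped ENNReal

open Encodable Denumerable Nat.Partrec.Code
open Nat.Partrec (Code)

/-- Split `replicate e true ++ false :: q` into `(e, q)`. -/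
def splitP : BStr → ℕ × BStr := fun p =>
  p.rec (0, ([] : BStr)) (fun b l ih => cond b (ih.1 + 1, ih.2) (0, l))

theorem splitP_primrec : Primrec splitP := by
  have := Primrec.list_rec (f := @id BStr) (g := fun _ => ((0 : ℕ), ([] : BStr)))
    (h := fun (_ : BStr) (x : Bool × BStr × (ℕ × BStr)) =>
      cond x.1 (x.2.2.1 + 1, x.2.2.2) (0, x.2.1))
    Primrec.id (Primrec.const _)
    (Primrec.to₂ (Primrec.cond (Primrec.fst.comp Primrec.snd)
      (((Primrec.succ.comp (Primrec.fst.comp (Primrec.snd.comp (Primrec.snd.comp Primrec.snd)))).pair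
        (Primrec.snd.comp (Primrec.snd.comp (Primrec.snd.comp Primrec.snd)))))
      ((Primrec.const 0).pair (Primrec.fst.comp (Primrec.snd.comp Primrec.snd)))))
  exact this.of_eq fun p => by induction p <;> rfl

theorem splitP_eq (e : ℕ) (q : BStr) :
    splitP (List.replicate e true ++ false :: q) = (e, q) := by
  induction e with
  | zero => rfl
  | succ n ih => simp only [List.replicate_succ, List.cons_append, splitP] at ih ⊢; rw [ih]; rfl

/-- The universal machine. -/
def Umach : PFun2 := fun p x =>
  ((ofNat Code (splitP p).1).eval (encode ((splitP p).2, x))).bind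
    fun n => Part.ofOption (decode (α := BStr) n)

theorem Umach_machine : IsMachine Umach := by
  refine Partrec.bind ?_ ?_
  · exact Nat.Partrec.Code.eval_part.comp
      ((Computable.ofNat Code).comp
        ((Primrec.fst.comp (splitP_primrec.comp Primrec.fst)).to_comp))
      ((Primrec.encode.comp
        ((Primrec.snd.comp (splitP_primrec.comp Primrec.fst)).pair Primrec.snd)).to_comp)
  · exact Computable.ofOption (Computable.decode.comp Computable.snd)

theorem Umach_sim {V : PFun2} (hV : IsMachine V) :
    ∃ e : ℕ, ∀ q x : BStr, Umach (List.replicate e true ++ false :: q) x = V q x := by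
  obtain ⟨c, hc⟩ := Nat.Partrec.Code.exists_code.1 hV
  refine ⟨encode c, fun q x => ?_⟩
  have h1 : splitP (List.replicate (encode c) true ++ false :: q) = (encode c, q) :=
    splitP_eq _ _
  show ((ofNat Code _).eval _).bind _ = _
  rw [h1]
  simp only [ofNat_encode, hc]
  apply Part.ext
  intro z
  simp [Part.mem_bind_iff, Part.mem_map_iff, encodek]

/-- there is a machine making the plain information distance `D_U`
minimal up to additive constants. -/
theorem exists_optimal_plain_distance_machine :
    ∃ U : PFun2, IsMachine U ∧
      ∀ V : PFun2, IsMachine V → ∃ c : ℕ, ∀ x y : BStr,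
        IDist U x y ≤ IDist V x y + (c : ℕ∞) := by
  refine ⟨Umach, Umach_machine, fun V hV => ?_⟩
  obtain ⟨e, he⟩ := Umach_sim hV
  refine ⟨e + 1, fun x y => ?_⟩
  set S : Set ℕ∞ := {n : ℕ∞ | ∃ p : BStr, (p.length : ℕ∞) = n ∧ y ∈ V p x ∧ x ∈ V p y}
  have hID : IDist V x y = sInf S := rfl
  rcases S.eq_empty_or_nonempty with hS | hS
  · rw [hID, hS, sInf_empty]
    simp
  · obtain ⟨m, hmS, hmin⟩ := wellFounded_lt.has_min S hS
    have hinf : IDist V x y = m :=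
      le_antisymm (hID ▸ sInf_le hmS) (hID ▸ le_sInf fun b hb => not_lt.1 (hmin b hb))
    obtain ⟨p, hp, hyx, hxy⟩ := hmS
    have hmem : ((List.replicate e true ++ false :: p).length : ℕ∞) ∈
        {n : ℕ∞ | ∃ P : BStr, (P.length : ℕ∞) = n ∧ y ∈ Umach P x ∧ x ∈ Umach P y} :=
      ⟨_, rfl, by rw [he]; exact hyx, by rw [he]; exact hxy⟩
    calc IDist Umach x y ≤ ((List.replicate e true ++ false :: p).length : ℕ∞) :=
          sInf_le hmem
      _ = m + (↑(e + 1) : ℕ∞) := by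
          rw [← hp]
          push_cast [List.length_append, List.length_replicate, List.length_cons]
          ring
      _ = IDist V x y + _ := by rw [hinf]
end

section
/- There exist two symmetric upper semicomputable functions E₁, E₂ : pairs of binary strings → ℕ ∪ {∞}, each satisfying the triangle inequality (Eᵢ(x,z) ≤ Eᵢ(x,y) + Eᵢ(y,z) for all x,y,z) and the ball condition (there is a constant c with #{y : Eᵢ(x,y) < n} ≤ c·2^n for all x and n), such that for every constant c' and every symmetric function E with E(x,y) ≤ min(E₁(x,y), E₂(x,y)) + c' for all x,y, the function E cannot satisfy both the ball condition and the triangle inequality. -/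
open scoped ENNReal

/-- `E` is upper semicomputable: the set `{(x,y,n) : E(x,y) < n}` is computably
enumerable (i.e., the corresponding semidecision function is partial computable). -/
def UpperSemicomputable (E : BStr → BStr → ℕ∞) : Prop :=
  Partrec fun z : BStr × BStr × ℕ =>
    Part.assert (E z.1 z.2.1 < (z.2.2 : ℕ∞)) fun _ => Part.some ()

/-- The ball condition: there is a constant `c` such that for every `x` and `n`,
at most `c·2^n` strings `y` satisfy `E(x,y) < n`. -/
def BallCond (E : BStr → BStr → ℕ∞) : Prop :=
  ∃ c : ℕ, ∀ (x : BStr) (n : ℕ) (F : Finset BStr),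
    (∀ y ∈ F, E x y < (n : ℕ∞)) → F.card ≤ c * 2 ^ n

/-- The triangle inequality for a `ℕ∞`-valued function on pairs of strings. -/
def Triangle (E : BStr → BStr → ℕ∞) : Prop :=
  ∀ x y z : BStr, E x z ≤ E x y + E y z

namespace NoMaxAux

/-! ### Longest common prefix and the tree metric -/

/-- longest common prefix length -/
def lcp : List Bool → List Bool → ℕ
  | a :: x, b :: y => if a = b then lcp x y + 1 else 0
  | _, _ => 0

@[simp] lemma lcp_nil_left (y : List Bool) : lcp [] y = 0 := rfl
@[simp] lemma lcp_nil_right (x : List Bool) : lcp x [] = 0 := by cases x <;> rfl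
@[simp] lemma lcp_cons (a b : Bool) (x y : List Bool) :
    lcp (a::x) (b::y) = if a = b then lcp x y + 1 else 0 := rfl

lemma lcp_comm : ∀ x y : List Bool, lcp x y = lcp y x
  | [], y => by simp
  | x, [] => by simp
  | a::x, b::y => by
    by_cases h : a = b
    · simp [h, lcp_comm x y]
    · simp [h, Ne.symm h]

lemma lcp_le_left : ∀ x y : List Bool, lcp x y ≤ x.length
  | [], _ => by simp
  | _::_, [] => by simp
  | a::x, b::y => by
    by_cases h : a = b <;> simp [h, Nat.succ_le_succ (lcp_le_left x y)]

lemma lcp_le_right (x y : List Bool) : lcp x y ≤ y.length := by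
  rw [lcp_comm]; exact lcp_le_left y x

lemma take_lcp_eq : ∀ x y : List Bool, x.take (lcp x y) = y.take (lcp x y)
  | [], y => by simp
  | x, [] => by simp
  | a::x, b::y => by
    by_cases h : a = b <;> simp [h, take_lcp_eq x y]

lemma min_lcp_le : ∀ x y z : List Bool, min (lcp x y) (lcp y z) ≤ lcp x z
  | [], _, _ => by simp
  | _::_, [], _ => by simp
  | x, y, [] => by simp
  | a::x, b::y, c::z => by
    by_cases hab : a = b
    · by_cases hbc : b = c
      · have hac : a = c := hab.trans hbc
        simp only [lcp_cons, if_pos hab, if_pos hbc, if_pos hac, Nat.succ_min_succ]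
        exact Nat.succ_le_succ (min_lcp_le x y z)
      · simp [hab, hbc]
    · simp [hab]

lemma lcp_self_append : ∀ (x s : List Bool), lcp x (x ++ s) = x.length
  | [], s => by simp
  | a::x, s => by simp [lcp_self_append x s]

/-- tree distance -/
def d1 (x y : List Bool) : ℕ := (x.length - lcp x y) + (y.length - lcp x y)

lemma d1_comm (x y : List Bool) : d1 x y = d1 y x := by
  unfold d1; rw [lcp_comm]; omega

lemma d1_triangle (x y z : List Bool) : d1 x z ≤ d1 x y + d1 y z := by
  have h1 := lcp_le_left x y
  have h2 := lcp_le_right x y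
  have h3 := lcp_le_left y z
  have h4 := lcp_le_right y z
  have h5 := lcp_le_left x z
  have h6 := lcp_le_right x z
  have hm := min_lcp_le x y z
  unfold d1
  rcases le_total (lcp x y) (lcp y z) with h | h
  · rw [min_eq_left h] at hm; omega
  · rw [min_eq_right h] at hm; omega

lemma d1_self_append (x s : List Bool) : d1 x (x ++ s) = s.length := by
  unfold d1; rw [lcp_self_append]; simp

/-! ### Counting: the ball condition for the tree metric -/

/-- strings of length `i` -/
def strFin (i : ℕ) : Finset (List Bool) :=
  Finset.univ.image (fun f : Fin i → Bool => List.ofFn f)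

lemma mem_strFin {i : ℕ} {y : List Bool} : y ∈ strFin i ↔ y.length = i := by
  constructor
  · intro hy
    rcases Finset.mem_image.1 hy with ⟨f, _, rfl⟩
    simp
  · intro hy
    refine Finset.mem_image.2 ⟨fun j : Fin i => y.get (Fin.cast hy.symm j), Finset.mem_univ _, ?_⟩
    subst hy
    exact List.ofFn_get y

lemma card_strFin (i : ℕ) : (strFin i).card = 2 ^ i := by
  rw [strFin, Finset.card_image_of_injective _ List.ofFn_injective, Finset.card_univ]
  simp [Fintype.card_fun]

lemma sum_pow_le (j : ℕ) : (∑ i ∈ Finset.range j, 2 ^ i) ≤ 2 ^ j := by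
  induction j with
  | zero => simp
  | succ n ih =>
    rw [Finset.sum_range_succ]
    have : (2:ℕ)^(n+1) = 2^n + 2^n := by ring
    omega

lemma ball_d1 (x : List Bool) (n : ℕ) (F : Finset (List Bool))
    (hF : ∀ y ∈ F, d1 x y < n) : F.card ≤ 2 * 2 ^ n := by
  classical
  have hsub : F ⊆ (Finset.range n).biUnion (fun a =>
      ((Finset.range (n - a)).biUnion strFin).image
        (fun w => x.take (x.length - a) ++ w)) := by
    intro y hy
    have hd := hF y hy
    have hk1 := lcp_le_left x y
    have hk2 := lcp_le_right x y
    unfold d1 at hd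
    refine Finset.mem_biUnion.2 ⟨x.length - lcp x y, Finset.mem_range.2 (by omega), ?_⟩
    refine Finset.mem_image.2 ⟨y.drop (lcp x y), ?_, ?_⟩
    · refine Finset.mem_biUnion.2
        ⟨(y.drop (lcp x y)).length, Finset.mem_range.2 ?_, mem_strFin.2 rfl⟩
      rw [List.length_drop]; omega
    · have hk : x.length - (x.length - lcp x y) = lcp x y := by omega
      rw [hk, take_lcp_eq x y, List.take_append_drop]
  calc F.card ≤ _ := Finset.card_le_card hsub
    _ ≤ ∑ a ∈ Finset.range n,
        (((Finset.range (n - a)).biUnion strFin).image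
          (fun w => x.take (x.length - a) ++ w)).card := Finset.card_biUnion_le
    _ ≤ ∑ a ∈ Finset.range n, 2 ^ (n - a) := by
        refine Finset.sum_le_sum fun a _ => ?_
        calc (((Finset.range (n - a)).biUnion strFin).image
              (fun w => x.take (x.length - a) ++ w)).card
            ≤ ((Finset.range (n - a)).biUnion strFin).card := Finset.card_image_le
          _ ≤ ∑ i ∈ Finset.range (n - a), (strFin i).card := Finset.card_biUnion_le
          _ = ∑ i ∈ Finset.range (n - a), 2 ^ i := by simp [card_strFin]
          _ ≤ 2 ^ (n - a) := sum_pow_le _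
    _ ≤ 2 * 2 ^ n := by
        calc (∑ a ∈ Finset.range n, 2 ^ (n - a))
            = ∑ a ∈ Finset.range n, 2 ^ (n - 1 - a + 1) := by
              refine Finset.sum_congr rfl fun a ha => ?_
              have := Finset.mem_range.1 ha
              congr 1
              omega
          _ = ∑ a ∈ Finset.range n, 2 ^ (a + 1) := Finset.sum_range_reflect (fun a => 2 ^ (a+1)) n
          _ = 2 * ∑ a ∈ Finset.range n, 2 ^ a := by
              rw [Finset.mul_sum]; refine Finset.sum_congr rfl fun a _ => by ring
          _ ≤ 2 * 2 ^ n := by have := sum_pow_le n; omega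

/-! ### Computability -/

def lcpAux : List (Bool × Bool) → ℕ
  | [] => 0
  | p :: l => if p.1 = p.2 then lcpAux l + 1 else 0

lemma primrec_lcpAux : Primrec lcpAux := by
  have hh : Primrec₂ (fun (_ : List (Bool × Bool))
      (q : (Bool × Bool) × List (Bool × Bool) × ℕ) =>
        if q.1.1 = q.1.2 then q.2.2 + 1 else 0) := by
    apply Primrec.ite
    · exact Primrec.eq.comp (Primrec.fst.comp (Primrec.fst.comp Primrec.snd))
        (Primrec.snd.comp (Primrec.fst.comp Primrec.snd))
    · exact Primrec.succ.comp (Primrec.snd.comp (Primrec.snd.comp Primrec.snd))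
    · exact Primrec.const 0
  have := Primrec.list_rec Primrec.id (Primrec.const 0) hh
  refine this.of_eq fun l => ?_
  induction l with
  | nil => rfl
  | cons p l ih => simp [lcpAux, ← ih]

lemma primrec_zip : Primrec (fun p : BStr × BStr => p.1.zip p.2) := by
  have hf : Primrec (fun p : BStr × BStr => List.range (min p.1.length p.2.length)) :=
    Primrec.list_range.comp (Primrec.nat_min.comp
      (Primrec.list_length.comp Primrec.fst) (Primrec.list_length.comp Primrec.snd))
  have hg : Primrec₂ (fun (p : BStr × BStr) (i : ℕ) => (p.1.getD i false, p.2.getD i false)) :=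
    Primrec.pair ((Primrec.list_getD false).comp (Primrec.fst.comp Primrec.fst) Primrec.snd)
      ((Primrec.list_getD false).comp (Primrec.snd.comp Primrec.fst) Primrec.snd)
  have h := Primrec.list_map hf hg
  refine h.of_eq fun p => ?_
  obtain ⟨x, y⟩ := p
  simp only
  induction x generalizing y with
  | nil => simp
  | cons a x ih =>
    cases y with
    | nil => simp
    | cons b y =>
      simp only [List.length_cons, Nat.succ_min_succ, List.range_succ_eq_map,
        List.map_cons, List.map_map]
      rw [List.zip_cons_cons]
      congr 1
      rw [← ih y]
      refine List.map_congr_left fun i _ => ?_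
      simp [Function.comp, List.getD_eq_getElem?_getD]

lemma lcp_eq_lcpAux : ∀ x y : List Bool, lcp x y = lcpAux (x.zip y)
  | [], y => by simp [lcpAux]
  | a::x, [] => by simp [lcpAux]
  | a::x, b::y => by
    rw [List.zip_cons_cons]
    by_cases h : a = b <;> simp [lcpAux, h, lcp_eq_lcpAux x y]

lemma primrec_d1 : Primrec₂ d1 := by
  have hL : Primrec (fun p : BStr × BStr => lcp p.1 p.2) := by
    have := primrec_lcpAux.comp primrec_zip
    exact this.of_eq fun p => (lcp_eq_lcpAux p.1 p.2).symm
  exact Primrec.nat_add.comp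
    (Primrec.nat_sub.comp (Primrec.list_length.comp Primrec.fst) hL)
    (Primrec.nat_sub.comp (Primrec.list_length.comp Primrec.snd) hL)

lemma usc_of_primrec {D : BStr → BStr → ℕ} (hD : Primrec₂ D) :
    UpperSemicomputable (fun x y => (D x y : ℕ∞)) := by
  unfold UpperSemicomputable
  have heq : (fun z : BStr × BStr × ℕ =>
      Part.assert ((D z.1 z.2.1 : ℕ∞) < (z.2.2 : ℕ∞)) fun _ => Part.some ())
      = fun z : BStr × BStr × ℕ =>
        ((if D z.1 z.2.1 < z.2.2 then some () else none : Option Unit) : Part Unit) := by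
    funext z
    by_cases h : D z.1 z.2.1 < z.2.2
    · rw [if_pos h]
      exact Part.ext fun a => by simp [Part.mem_assert_iff, Nat.cast_lt, h]
    · rw [if_neg h]
      exact Part.ext fun a => by simp [Part.mem_assert_iff, Nat.cast_lt, h]
  rw [heq]
  apply Computable.ofOption
  have hpred : PrimrecPred (fun z : BStr × BStr × ℕ => D z.1 z.2.1 < z.2.2) :=
    Primrec.nat_lt.comp (hD.comp Primrec.fst (Primrec.fst.comp Primrec.snd))
      (Primrec.snd.comp Primrec.snd)
  exact (Primrec.ite hpred (Primrec.const (some ())) (Primrec.const none)).to_comp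

/-! ### The marker construction -/

/-- the marker string `1 0^(m+1) 1` -/
def marker (m : ℕ) : BStr := true :: (List.replicate (m+1) false ++ [true])

@[simp] lemma marker_length (m : ℕ) : (marker m).length = m + 3 := by
  simp [marker]

lemma marker_len_eq {m : ℕ} {u u' v v' : BStr} (hu' : u'.length ≤ m)
    (hle : u.length ≤ u'.length)
    (h : (u ++ marker m) ++ v = (u' ++ marker m) ++ v') : u.length = u'.length := by
  by_contra hne
  have h' : u ++ (marker m ++ v) = u' ++ (marker m ++ v') := by
    simpa [List.append_assoc] using h
  have e := congrArg (fun l => l[u'.length]?) h'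
  rw [List.getElem?_append_right hle, List.getElem?_append_right (le_refl u'.length),
    Nat.sub_self] at e
  obtain ⟨d', hdd⟩ : ∃ d', u'.length - u.length = d' + 1 :=
    ⟨u'.length - u.length - 1, by omega⟩
  have hdm : d' + 1 ≤ m := by omega
  rw [hdd] at e
  have hm0 : (marker m ++ v')[0]? = some true := by
    rw [List.getElem?_append_left (by simp : 0 < (marker m).length)]
    simp [marker]
  have hmd : (marker m ++ v)[d'+1]? = some false := by
    rw [List.getElem?_append_left (by simp; omega : d' + 1 < (marker m).length)]
    show (true :: (List.replicate (m+1) false ++ [true]))[d'+1]? = some false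
    simp only [List.getElem?_cons_succ]
    rw [List.getElem?_append_left (by simp; omega)]
    simp [List.getElem?_replicate]
    omega
  rw [hmd, hm0] at e
  simp at e

lemma marker_inj {m : ℕ} {u u' v v' : BStr} (hu : u.length ≤ m) (hu' : u'.length ≤ m)
    (h : (u ++ marker m) ++ v = (u' ++ marker m) ++ v') : u = u' ∧ v = v' := by
  have hlen : u.length = u'.length := by
    rcases le_total u.length u'.length with hle | hle
    · exact marker_len_eq hu' hle h
    · exact (marker_len_eq hu hle h.symm).symm
  have h2 := List.append_inj h (by simp [hlen])
  exact ⟨List.append_inj_left' h2.1 rfl, h2.2⟩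

end NoMaxAux

open NoMaxAux in
/-- there are two symmetric upper semicomputable functions, each
satisfying the triangle inequality and the ball condition, such that no symmetric
function bounded by their minimum (up to an additive constant) can satisfy both
the ball condition and the triangle inequality. -/
theorem no_maximal_function_with_triangle_inequality :
    ∃ E₁ E₂ : BStr → BStr → ℕ∞,
      (∀ x y : BStr, E₁ x y = E₁ y x) ∧ UpperSemicomputable E₁ ∧
        Triangle E₁ ∧ BallCond E₁ ∧
      (∀ x y : BStr, E₂ x y = E₂ y x) ∧ UpperSemicomputable E₂ ∧
        Triangle E₂ ∧ BallCond E₂ ∧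
      ∀ (c' : ℕ) (E : BStr → BStr → ℕ∞), (∀ x y : BStr, E x y = E y x) →
        (∀ x y : BStr, E x y ≤ min (E₁ x y) (E₂ x y) + (c' : ℕ∞)) →
        ¬ (BallCond E ∧ Triangle E) := by
  classical
  refine ⟨fun x y => (d1 x y : ℕ∞), fun x y => (d1 x.reverse y.reverse : ℕ∞),
    ?_, ?_, ?_, ?_, ?_, ?_, ?_, ?_, ?_⟩
  · intro x y
    show ((d1 x y : ℕ∞)) = ((d1 y x : ℕ∞))
    rw [d1_comm]
  · exact usc_of_primrec primrec_d1
  · intro x y z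
    show ((d1 x z : ℕ∞)) ≤ ((d1 x y : ℕ∞)) + ((d1 y z : ℕ∞))
    rw [← Nat.cast_add, Nat.cast_le]
    exact d1_triangle x y z
  · exact ⟨2, fun x n F hF => ball_d1 x n F fun y hy => Nat.cast_lt.1 (hF y hy)⟩
  · intro x y
    show ((d1 x.reverse y.reverse : ℕ∞)) = ((d1 y.reverse x.reverse : ℕ∞))
    rw [d1_comm]
  · exact usc_of_primrec (primrec_d1.comp
      (Primrec.list_reverse.comp Primrec.fst) (Primrec.list_reverse.comp Primrec.snd))
  · intro x y z
    show ((d1 x.reverse z.reverse : ℕ∞)) ≤ _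
    rw [← Nat.cast_add, Nat.cast_le]
    exact d1_triangle x.reverse y.reverse z.reverse
  · refine ⟨2, fun x n F hF => ?_⟩
    have := ball_d1 x.reverse n (F.image List.reverse) ?_
    · rwa [Finset.card_image_of_injective _ List.reverse_injective] at this
    · intro y hy
      rcases Finset.mem_image.1 hy with ⟨z, hz, rfl⟩
      exact Nat.cast_lt.1 (hF z hz)
  · rintro c' E _hsymm hmin ⟨⟨cE, hball⟩, htri⟩
    have hmin' : ∀ a b : BStr,
        E a b ≤ min ((d1 a b : ℕ∞)) ((d1 a.reverse b.reverse : ℕ∞)) + (c' : ℕ∞) := hmin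
    set m := cE * 2 ^ (2*c' + 1) with hm
    set x : BStr := marker m with hx
    set F : Finset BStr := (Finset.range (m+1)).biUnion (fun i =>
      (strFin i ×ˢ strFin (m-i)).image (fun p : BStr × BStr => (p.1 ++ x) ++ p.2)) with hF
    -- cardinality of F
    have hcard : F.card = (m+1) * 2^m := by
      rw [hF, Finset.card_biUnion]
      · have hone : ∀ i ∈ Finset.range (m+1),
            ((strFin i ×ˢ strFin (m-i)).image
              (fun p : BStr × BStr => (p.1 ++ x) ++ p.2)).card = 2^m := by
          intro i hi
          have him : i ≤ m := by have := Finset.mem_range.1 hi; omega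
          rw [Finset.card_image_of_injOn, Finset.card_product, card_strFin, card_strFin,
            ← pow_add]
          · congr 1; omega
          · intro p hp q hq hpq
            rcases Finset.mem_product.1 hp with ⟨hp1, hp2⟩
            rcases Finset.mem_product.1 hq with ⟨hq1, hq2⟩
            have h1 : p.1.length ≤ m := by rw [mem_strFin.1 hp1]; omega
            have h2 : q.1.length ≤ m := by rw [mem_strFin.1 hq1]; omega
            have := marker_inj h1 h2 hpq
            exact Prod.ext this.1 this.2
        rw [Finset.sum_congr rfl hone, Finset.sum_const, Finset.card_range, smul_eq_mul]
      · intro i hi j hj hij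
        simp only [Finset.disjoint_left]
        intro t hti htj
        rcases Finset.mem_image.1 hti with ⟨p, hp, rfl⟩
        rcases Finset.mem_image.1 htj with ⟨q, hq, hpq⟩
        rcases Finset.mem_product.1 hp with ⟨hp1, _⟩
        rcases Finset.mem_product.1 hq with ⟨hq1, _⟩
        have h1 : p.1.length ≤ m := by
          rw [mem_strFin.1 hp1]; have := Finset.mem_range.1 hi; omega
        have h2 : q.1.length ≤ m := by
          rw [mem_strFin.1 hq1]; have := Finset.mem_range.1 hj; omega
        have := marker_inj h2 h1 hpq
        apply hij
        rw [← mem_strFin.1 hp1, ← mem_strFin.1 hq1, this.1]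
    -- all elements of F are close to x
    have hdist : ∀ y ∈ F, E x y < ((m + 2*c' + 1 : ℕ) : ℕ∞) := by
      intro y hy
      rw [hF] at hy
      rcases Finset.mem_biUnion.1 hy with ⟨i, hi, hy⟩
      rcases Finset.mem_image.1 hy with ⟨p, hp, rfl⟩
      rcases Finset.mem_product.1 hp with ⟨hp1, hp2⟩
      have hil : p.1.length = i := mem_strFin.1 hp1
      have hjl : p.2.length = m - i := mem_strFin.1 hp2
      have him : i ≤ m := by have := Finset.mem_range.1 hi; omega
      have key1 : E x (p.1 ++ x) ≤ (i : ℕ∞) + (c' : ℕ∞) := by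
        refine (hmin' _ _).trans (add_le_add_left ?_ _)
        refine (min_le_right _ _).trans ?_
        rw [List.reverse_append, d1_self_append, List.length_reverse, hil]
      have key2 : E (p.1 ++ x) ((p.1 ++ x) ++ p.2) ≤ ((m - i : ℕ) : ℕ∞) + (c' : ℕ∞) := by
        refine (hmin' _ _).trans (add_le_add_left ?_ _)
        refine (min_le_left _ _).trans ?_
        rw [d1_self_append, hjl]
      calc E x ((p.1 ++ x) ++ p.2)
          ≤ E x (p.1 ++ x) + E (p.1 ++ x) ((p.1 ++ x) ++ p.2) := htri _ _ _
        _ ≤ ((i : ℕ∞) + (c' : ℕ∞)) + (((m - i : ℕ) : ℕ∞) + (c' : ℕ∞)) := add_le_add key1 key2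
        _ = ((i + c' + ((m - i) + c') : ℕ) : ℕ∞) := by push_cast; ring
        _ < ((m + 2*c' + 1 : ℕ) : ℕ∞) := by
            rw [Nat.cast_lt]
            omega
    -- contradiction with the ball condition
    have hle := hball x (m + 2*c' + 1) F hdist
    rw [hcard] at hle
    have hexp : (2:ℕ) ^ (m + 2*c' + 1) = 2 ^ (2*c' + 1) * 2 ^ m := by
      rw [← pow_add]; congr 1; omega
    rw [hexp, ← mul_assoc, ← hm] at hle
    have hpos : 0 < 2 ^ m := Nat.pow_pos (by norm_num)
    have := Nat.le_of_mul_le_mul_right hle hpos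
    omega
end

section
/- Let Kprog(x|y) = min{ KP(q) : V(q,y) = x }, where V is a fixed machine optimal for plain conditional complexity and KP denotes unconditional prefix complexity (i.e., Kprog(x|y) is the minimal prefix complexity of a program that maps y to x). Then: (i) there is a constant c such that K(x|y) ≤ Kprog(x|y) + c for all binary strings x,y, where K is prefix conditional complexity; and (ii) for every constant c there exist binary strings x,y with Kprog(x|y) > K(x|y) + c; that is, the difference Kprog(x|y) − K(x|y) is unbounded. -/
open scoped ENNReal

/-- A machine is prefix-free (in its first argument) if for each second argument `x`,
its domain contains no string that is a proper prefix of another element. -/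
def PrefixFree (U : PFun2) : Prop :=
  ∀ (x p q : BStr), (U p x).Dom → (U q x).Dom → p <+: q → p = q

/-- A machine is prefix-stable (in its first argument) if whenever `U(p,x)` is defined
and `p` is a prefix of `p'`, then `U(p',x)` is defined and has the same value. -/
def PrefixStable (U : PFun2) : Prop :=
  ∀ (x p q y : BStr), p <+: q → y ∈ U p x → y ∈ U q x

/-- `U` is a prefix-free machine that is optimal for prefix conditional complexity
among prefix-free machines. -/
def OptimalPrefixK (U : PFun2) : Prop :=
  IsMachine U ∧ PrefixFree U ∧ ∀ V : PFun2, IsMachine V → PrefixFree V →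
    ∃ c : ℕ, ∀ x y : BStr, Kcond U y x ≤ Kcond V y x + (c : ℕ∞)

/-- `E(x,y) = max(K(x|y), K(y|x))`, computed with the machine `W`. -/
noncomputable def Emax (W : PFun2) (x y : BStr) : ℕ∞ :=
  max (Kcond W x y) (Kcond W y x)

/-- One-argument partial functions on binary strings. -/
abbrev PFun1 : Type := BStr →. BStr

/-- A one-argument machine is a partial computable function. -/
def IsMachine1 (W : PFun1) : Prop := Partrec W

/-- A one-argument machine is prefix-free if its domain contains no string that is
a proper prefix of another element. -/
def PrefixFree1 (W : PFun1) : Prop :=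
  ∀ p q : BStr, (W p).Dom → (W q).Dom → p <+: q → p = q

/-- Unconditional complexity `K_W(q) = min{|p| : W(p) = q}`. -/
noncomputable def Kun (W : PFun1) (q : BStr) : ℕ∞ :=
  sInf {n : ℕ∞ | ∃ p : BStr, (p.length : ℕ∞) = n ∧ q ∈ W p}

/-- `W` is a prefix-free one-argument machine optimal for (unconditional) prefix
complexity among prefix-free one-argument machines. -/
def OptimalPrefixKun (W : PFun1) : Prop :=
  IsMachine1 W ∧ PrefixFree1 W ∧ ∀ W' : PFun1, IsMachine1 W' → PrefixFree1 W' →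
    ∃ c : ℕ, ∀ q : BStr, Kun W q ≤ Kun W' q + (c : ℕ∞)

/-- `Kprog(x|y) = min{ KP(q) : V(q,y) = x }`: the minimal prefix complexity of a
program that maps `y` to `x` on the plain machine `V`. -/
noncomputable def Kprog (V : PFun2) (W : PFun1) (x y : BStr) : ℕ∞ :=
  sInf {m : ℕ∞ | ∃ q : BStr, x ∈ V q y ∧ Kun W q = m}

section Aux

/-- Extract an element below a finite bound from an `sInf` bound. -/
lemma exists_mem_le_of_sInf_le {S : Set ℕ∞} {k : ℕ} (h : sInf S ≤ (k : ℕ∞)) :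
    ∃ m ∈ S, m ≤ (k : ℕ∞) := by
  by_contra hc
  push_neg at hc
  have hk1 : ((k + 1 : ℕ) : ℕ∞) ≤ sInf S := by
    apply le_sInf
    intro m hm
    have hlt := hc m hm
    induction m using ENat.recTopCoe with
    | top => exact le_top
    | coe j =>
      have : k < j := by exact_mod_cast hlt
      exact_mod_cast this
  have : ((k + 1 : ℕ) : ℕ∞) ≤ (k : ℕ∞) := le_trans hk1 h
  have : k + 1 ≤ k := by exact_mod_cast this
  omega

lemma sum_two_pow_lt (m : ℕ) : ∑ j ∈ Finset.range m, 2 ^ j < 2 ^ m := by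
  induction m with
  | zero => simp
  | succ n ih =>
    rw [Finset.sum_range_succ, pow_succ]
    omega

lemma sum_filtered_le (s : Finset ℕ) (N m : ℕ) (h : ∀ n ∈ s, n ≤ N ∧ N - n ≤ m) :
    ∑ n ∈ s, 2 ^ (N - n) ≤ 2 ^ (m + 1) := by
  have himg : ∑ j ∈ s.image (fun n => N - n), 2 ^ j = ∑ n ∈ s, 2 ^ (N - n) := by
    apply Finset.sum_image
    intro a ha b hb hab
    have h1 := h a ha
    have h2 := h b hb
    simp only at hab
    omega
  rw [← himg]
  calc ∑ j ∈ s.image (fun n => N - n), 2 ^ j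
      ≤ ∑ j ∈ Finset.range (m + 1), 2 ^ j := by
        apply Finset.sum_le_sum_of_subset
        intro j hj
        simp only [Finset.mem_image] at hj
        obtain ⟨n, hn, rfl⟩ := hj
        simp only [Finset.mem_range]
        have := h n hn
        omega
    _ ≤ 2 ^ (m + 1) := le_of_lt (sum_two_pow_lt _)

/-- Kraft inequality for finite prefix-free sets of binary strings. -/
lemma kraft_finset (A : Finset BStr) (L : ℕ)
    (hpf : ∀ p ∈ A, ∀ q ∈ A, p <+: q → p = q)
    (hL : ∀ p ∈ A, p.length ≤ L) :
    ∑ p ∈ A, 2 ^ (L - p.length) ≤ 2 ^ L := by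
  classical
  have key := Finset.card_le_card_of_injOn
    (s := A.sigma fun p => (Finset.univ : Finset (Fin (L - p.length) → Bool)))
    (t := (Finset.univ : Finset (Fin L → Bool)))
    (fun s : Σ p : BStr, Fin (L - p.length) → Bool =>
      fun i : Fin L => (s.1 ++ List.ofFn s.2).getD i false)
    (fun _ _ => Finset.mem_univ _)
    (by
      rintro ⟨p, v⟩ hs ⟨p', v'⟩ hs' heq
      simp only [Finset.coe_sigma, Set.mem_sigma_iff, Finset.mem_coe] at hs hs'
      have hp : p ∈ A := hs.1
      have hp' : p' ∈ A := hs'.1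
      have hlen : (p ++ List.ofFn v).length = L := by
        have := hL p hp
        simp only [List.length_append, List.length_ofFn]
        omega
      have hlen' : (p' ++ List.ofFn v').length = L := by
        have := hL p' hp'
        simp only [List.length_append, List.length_ofFn]
        omega
      have hll : p ++ List.ofFn v = p' ++ List.ofFn v' := by
        apply List.ext_getElem (by rw [hlen, hlen'])
        intro i h1 h2
        have hi : i < L := by rwa [hlen] at h1
        have hfun := congrFun heq ⟨i, hi⟩
        simpa [List.getD, List.getElem?_eq_getElem h1, List.getElem?_eq_getElem h2] using hfun
      have hpp : p = p' := by
        rcases List.prefix_or_prefix_of_prefix (List.prefix_append p (List.ofFn v))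
          (hll ▸ List.prefix_append p' (List.ofFn v')) with h | h
        · exact hpf p hp p' hp' h
        · exact (hpf p' hp' p hp h).symm
      subst hpp
      have hv : v = v' := List.ofFn_injective (List.append_cancel_left hll)
      subst hv
      rfl)
  rw [Finset.card_sigma] at key
  simp only [Finset.card_univ, Fintype.card_fun, Fintype.card_bool, Fintype.card_fin] at key
  exact key

end Aux
/-- prefix conditional complexity is bounded by the minimal prefix
complexity of a program mapping `y` to `x`, but the difference is unbounded. -/
theorem Kprog_vs_prefix_conditional
    (V : PFun2) (hV : OptimalPlainK V)
    (U : PFun2) (hU : OptimalPrefixK U)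
    (W : PFun1) (hW : OptimalPrefixKun W) :
    (∃ c : ℕ, ∀ x y : BStr, Kcond U x y ≤ Kprog V W x y + (c : ℕ∞)) ∧
    (∀ c : ℕ, ∃ x y : BStr, Kcond U x y + (c : ℕ∞) < Kprog V W x y) := by
  classical
  obtain ⟨hVm, -⟩ := hV
  obtain ⟨hUm, hUpf, hUopt⟩ := hU
  obtain ⟨hWm, hWpf, -⟩ := hW
  constructor
  · -- Part (i)
    let U' : PFun2 := fun p y => (W p).bind fun q => V q y
    have hU'm : IsMachine U' :=
      Partrec.bind (hWm.comp Computable.fst)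
        (hVm.comp Computable.snd (Computable.snd.comp Computable.fst))
    have hU'pf : PrefixFree U' := by
      intro y p q hp hq hpre
      have hp' : ((W p).bind fun q' => V q' y).Dom := hp
      have hq' : ((W q).bind fun q' => V q' y).Dom := hq
      rw [Part.bind_dom] at hp' hq'
      exact hWpf p q hp'.fst hq'.fst hpre
    obtain ⟨c, hc⟩ := hUopt U' hU'm hU'pf
    refine ⟨c, fun x y => ?_⟩
    have h2 : Kcond U' x y ≤ Kprog V W x y := by
      apply le_sInf
      rintro m ⟨q, hxq, rfl⟩
      apply le_sInf
      rintro b ⟨p, rfl, hqp⟩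
      exact sInf_le ⟨p, rfl, show x ∈ (W p).bind fun q' => V q' y from
        Part.mem_bind_iff.mpr ⟨q, hqp, hxq⟩⟩
    calc Kcond U x y ≤ Kcond U' x y + (c : ℕ∞) := hc y x
      _ ≤ Kprog V W x y + (c : ℕ∞) := add_le_add h2 le_rfl
  · -- Part (ii)
    intro c
    by_contra hcon
    push_neg at hcon
    -- the "copy" machine: M p z = p when |p| = |z|
    let M : PFun2 := fun p z =>
      ((if p.length = z.length then some p else none : Option BStr) : Part BStr)
    have hMm : IsMachine M := by
      have hpred : PrimrecPred (fun a : BStr × BStr => a.1.length = a.2.length) :=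
        Primrec.eq.comp (Primrec.list_length.comp Primrec.fst)
          (Primrec.list_length.comp Primrec.snd)
      exact Computable.ofOption (Primrec.to_comp
        (Primrec.ite hpred (Primrec.option_some.comp Primrec.fst) (Primrec.const none)))
    have hMdom : ∀ p z : BStr, (M p z).Dom → p.length = z.length := by
      intro p z h
      by_contra hne
      have h' : (((if p.length = z.length then some p else none : Option BStr) : Part BStr)).Dom := h
      simp [hne] at h'
    have hMpf : PrefixFree M := by
      intro z p q hp hq hpre
      have h1 := hMdom p z hp
      have h2 := hMdom q z hq
      exact List.IsPrefix.eq_of_length hpre (by omega)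
    obtain ⟨d, hd⟩ := hUopt M hMm hMpf
    -- from the contradiction hypothesis: every x has a short prefix program
    have H : ∀ x : BStr, ∃ p : BStr,
        (∃ q : BStr, q ∈ W p ∧ x ∈ V q (List.replicate x.length false)) ∧
        p.length ≤ x.length + (c + d) := by
      intro x
      have hxM : x ∈ M x (List.replicate x.length false) := by
        have : x ∈ ((if x.length = (List.replicate x.length false).length
            then some x else none : Option BStr) : Part BStr) := by simp
        exact this
      have h1 : Kcond M x (List.replicate x.length false) ≤ (x.length : ℕ∞) :=
        sInf_le ⟨x, rfl, hxM⟩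
      have h2 : Kcond U x (List.replicate x.length false) ≤ (x.length : ℕ∞) + (d : ℕ∞) :=
        le_trans (hd (List.replicate x.length false) x) (add_le_add h1 le_rfl)
      have h3 : Kprog V W x (List.replicate x.length false) ≤ ((x.length + (c + d) : ℕ) : ℕ∞) := by
        calc Kprog V W x (List.replicate x.length false)
            ≤ Kcond U x (List.replicate x.length false) + (c : ℕ∞) := hcon x _
          _ ≤ ((x.length : ℕ∞) + (d : ℕ∞)) + (c : ℕ∞) := add_le_add h2 le_rfl
          _ = ((x.length + (c + d) : ℕ) : ℕ∞) := by push_cast; ring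
      obtain ⟨m, hmS, hmle⟩ := exists_mem_le_of_sInf_le h3
      obtain ⟨q, hxq, rfl⟩ := hmS
      obtain ⟨m', hm'S, hm'le⟩ := exists_mem_le_of_sInf_le hmle
      obtain ⟨p, hplen, hqp⟩ := hm'S
      refine ⟨p, ⟨q, hqp, hxq⟩, ?_⟩
      rw [← hplen] at hm'le
      exact_mod_cast hm'le
    choose P hPex hPlen using H
    choose Q hQW hQV using hPex
    -- uniqueness: the program P x determines x among strings of a given length
    have huniq : ∀ (n : ℕ) (x x' : BStr), x.length = n → x'.length = n → P x = P x' → x = x' := by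
      intro n x x' hx hx' hpp
      have hq : Q x = Q x' := Part.mem_unique (hpp ▸ hQW x) (hQW x')
      have hv : x ∈ V (Q x') (List.replicate n false) := by
        rw [← hq, ← hx]; exact hQV x
      have hv' : x' ∈ V (Q x') (List.replicate n false) := by
        rw [← hx']; exact hQV x'
      exact Part.mem_unique hv hv'
    let A : ℕ → Finset BStr :=
      fun n => Finset.image (fun v : Fin n → Bool => P (List.ofFn v)) Finset.univ
    have hAcard : ∀ n, (A n).card = 2 ^ n := by
      intro n
      rw [Finset.card_image_of_injective _ (fun v v' h =>
        List.ofFn_injective (huniq n _ _ (by simp) (by simp) h))]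
      simp [Fintype.card_fun]
    have hAmem : ∀ n p, p ∈ A n → (W p).Dom ∧ p.length ≤ n + (c + d) := by
      intro n p hp
      simp only [A, Finset.mem_image, Finset.mem_univ, true_and] at hp
      obtain ⟨v, rfl⟩ := hp
      refine ⟨Part.dom_iff_mem.mpr ⟨_, hQW _⟩, ?_⟩
      have := hPlen (List.ofFn v)
      simpa using this
    set N : ℕ := 2 ^ (c + d + 1) + 1 with hN
    set L : ℕ := N + (c + d) with hLdef
    let B : Finset BStr := (Finset.Icc 1 N).biUnion A
    have hBpf : ∀ p ∈ B, ∀ q ∈ B, p <+: q → p = q := by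
      intro p hp q hq hpre
      simp only [B, Finset.mem_biUnion] at hp hq
      obtain ⟨n, -, hp⟩ := hp
      obtain ⟨m, -, hq⟩ := hq
      exact hWpf p q (hAmem n p hp).1 (hAmem m q hq).1 hpre
    have hBL : ∀ p ∈ B, p.length ≤ L := by
      intro p hp
      simp only [B, Finset.mem_biUnion, Finset.mem_Icc] at hp
      obtain ⟨n, hn, hp⟩ := hp
      have := (hAmem n p hp).2
      omega
    -- double counting
    have hswap : ∑ n ∈ Finset.Icc 1 N, ∑ _p ∈ A n, 2 ^ (N - n)
        = ∑ p ∈ B, ∑ n ∈ (Finset.Icc 1 N).filter (fun n => p ∈ A n), 2 ^ (N - n) := by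
      have step1 : ∀ n ∈ Finset.Icc 1 N,
          ∑ _p ∈ A n, 2 ^ (N - n) = ∑ p ∈ B, if p ∈ A n then 2 ^ (N - n) else 0 := by
        intro n hn
        rw [Finset.sum_ite_mem,
          Finset.inter_eq_right.mpr (Finset.subset_biUnion_of_mem A hn)]
      rw [Finset.sum_congr rfl step1, Finset.sum_comm]
      exact Finset.sum_congr rfl fun p _ => (Finset.sum_filter _ _).symm
    have hlhs : ∑ n ∈ Finset.Icc 1 N, ∑ _p ∈ A n, 2 ^ (N - n) = N * 2 ^ N := by
      have h1 : ∀ n ∈ Finset.Icc 1 N, ∑ _p ∈ A n, 2 ^ (N - n) = 2 ^ N := by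
        intro n hn
        simp only [Finset.mem_Icc] at hn
        rw [Finset.sum_const, hAcard n, smul_eq_mul, ← pow_add]
        congr 1
        omega
      rw [Finset.sum_congr rfl h1, Finset.sum_const, Nat.card_Icc, smul_eq_mul]
      congr 1
    have hrhs : ∑ p ∈ B, ∑ n ∈ (Finset.Icc 1 N).filter (fun n => p ∈ A n), 2 ^ (N - n)
        ≤ 2 * 2 ^ L := by
      calc ∑ p ∈ B, ∑ n ∈ (Finset.Icc 1 N).filter (fun n => p ∈ A n), 2 ^ (N - n)
          ≤ ∑ p ∈ B, 2 ^ ((L - p.length) + 1) := by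
            apply Finset.sum_le_sum
            intro p _hp
            apply sum_filtered_le
            intro n hn
            simp only [Finset.mem_filter, Finset.mem_Icc] at hn
            have hle := (hAmem n p hn.2).2
            omega
        _ = ∑ p ∈ B, 2 * 2 ^ (L - p.length) := by
            apply Finset.sum_congr rfl
            intro p _
            rw [pow_succ, mul_comm]
        _ = 2 * ∑ p ∈ B, 2 ^ (L - p.length) := by rw [Finset.mul_sum]
        _ ≤ 2 * 2 ^ L := by
            have := kraft_finset B L hBpf hBL
            omega
    have hmain : N * 2 ^ N ≤ 2 * 2 ^ L := by
      rw [← hlhs]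
      rw [hswap]
      exact hrhs
    have hfin : N * 2 ^ N ≤ 2 ^ (c + d + 1) * 2 ^ N := by
      calc N * 2 ^ N ≤ 2 * 2 ^ L := hmain
        _ = 2 ^ (c + d + 1) * 2 ^ N := by
            rw [hLdef, pow_add, pow_succ]
            ring
    have hNle : N ≤ 2 ^ (c + d + 1) :=
      Nat.le_of_mul_le_mul_right hfin (Nat.two_pow_pos N)
    omega
end

section
/- Let D be the prefix-free non-bipartite information distance. There is a constant c such that for all binary strings x,y: E(x,y) − c ≤ D(x,y) ≤ E(x,y) + c·log₂(E(x,y) + 2) + c. That is, the prefix information distance equals E(x,y) up to an additive term O(log E(x,y)). -/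
open scoped ENNReal

/-- `U` is a prefix-free machine making the (non-bipartite) information distance
minimal up to additive constants among prefix-free machines. -/
def OptimalPrefixDist (U : PFun2) : Prop :=
  IsMachine U ∧ PrefixFree U ∧ ∀ V : PFun2, IsMachine V → PrefixFree V →
    ∃ c : ℕ, ∀ x y : BStr, IDist U x y ≤ IDist V x y + (c : ℕ∞)

/-- Base-2 logarithm on `ℕ∞` (with `log ∞ = ∞`). -/
noncomputable def elog (e : ℕ∞) : ℕ∞ :=
  if e = ⊤ then ⊤ else ((Nat.log 2 e.toNat : ℕ) : ℕ∞)


set_option maxHeartbeats 1000000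

namespace KP

/-- value of a bit list, head = least significant bit -/
def bval : List Bool → ℕ
  | [] => 0
  | b :: l => 2 * bval l + cond b 1 0

/-- binary digits of a number, little-endian -/
def ebits : ℕ → List Bool
  | 0 => []
  | (n+1) => decide ((n+1) % 2 = 1) :: ebits ((n+1) / 2)
  decreasing_by exact Nat.div_lt_self (Nat.succ_pos n) one_lt_two

lemma bval_ebits (n : ℕ) : bval (ebits n) = n := by
  induction n using Nat.strong_induction_on with
  | _ n ih =>
    match n with
    | 0 => simp [ebits, bval]
    | (m+1) =>
      rw [ebits, bval, ih ((m+1)/2) (Nat.div_lt_self (Nat.succ_pos m) one_lt_two)]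
      rcases Nat.even_or_odd (m+1) with h | h
      · have h2 : (m+1) % 2 = 0 := Nat.even_iff.1 h
        simp [h2]
        omega
      · have h2 : (m+1) % 2 = 1 := Nat.odd_iff.1 h
        simp [h2]
        omega

lemma ebits_length {n k : ℕ} (h : n < 2 ^ k) : (ebits n).length ≤ k := by
  induction k generalizing n with
  | zero =>
    interval_cases n
    simp [ebits]
  | succ k ih =>
    match n with
    | 0 => simp [ebits]
    | (m+1) =>
      rw [ebits]
      simp only [List.length_cons]
      have : (m+1)/2 < 2 ^ k := by
        rw [Nat.div_lt_iff_lt_mul (by norm_num)]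
        calc m+1 < 2^(k+1) := h
        _ = 2^k * 2 := by ring
      exact Nat.succ_le_succ (ih this)

lemma bval_append_replicate (l : List Bool) (m : ℕ) :
    bval (l ++ List.replicate m false) = bval l := by
  induction l with
  | nil =>
    simp only [List.nil_append]
    induction m with
    | zero => rfl
    | succ m ih => simpa [List.replicate_succ, bval] using ih
  | cons b l ih => simp [bval, ih]

/-- pad to length k -/
def padbits (k i : ℕ) : List Bool := ebits i ++ List.replicate (k - (ebits i).length) false

lemma padbits_length {k i : ℕ} (h : i < 2 ^ k) : (padbits k i).length = k := by
  have := ebits_length h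
  simp [padbits]
  omega

lemma bval_padbits (k i : ℕ) : bval (padbits k i) = i := by
  rw [padbits, bval_append_replicate, bval_ebits]

/-- double each bit -/
def dbl : List Bool → List Bool
  | [] => []
  | b :: l => b :: b :: dbl l

lemma dbl_length (l : List Bool) : (dbl l).length = 2 * l.length := by
  induction l with
  | nil => rfl
  | cons b l ih => simp [dbl, ih]; omega

/-- value of a list with implicit leading 1 (injective into [2^|l|, 2^(|l|+1))) -/
def n1 : List Bool → ℕ
  | [] => 1
  | b :: l => 2 * n1 l + cond b 1 0

lemma n1_pos (l : List Bool) : 1 ≤ n1 l := by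
  induction l with
  | nil => simp [n1]
  | cons b l ih => simp [n1]; omega

lemma n1_lt {l : List Bool} {e : ℕ} (h : l.length ≤ e) : n1 l < 2 ^ (e+1) := by
  induction l generalizing e with
  | nil => simp [n1]
  | cons b l ih =>
    match e with
    | 0 => simp at h
    | (e+1) =>
      have := ih (e := e) (by simpa using h)
      have hb : cond b 1 0 ≤ 1 := by cases b <;> simp
      calc n1 (b :: l) = 2 * n1 l + cond b 1 0 := rfl
      _ < 2 ^ (e+1+1) := by
        rw [pow_succ]
        omega

lemma n1_inj : ∀ {l l' : List Bool}, n1 l = n1 l' → l = l' := by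
  intro l
  induction l with
  | nil =>
    intro l' h
    match l' with
    | [] => rfl
    | b :: l' =>
      exfalso
      have := n1_pos l'
      simp [n1] at h
      cases b <;> simp at h <;> omega
  | cons b l ih =>
    intro l' h
    match l' with
    | [] =>
      exfalso
      have := n1_pos l
      simp [n1] at h
      cases b <;> simp at h <;> omega
    | b' :: l' =>
      have hb : cond b 1 0 < 2 := by cases b <;> simp
      have hb' : cond b' 1 0 < 2 := by cases b' <;> simp
      simp only [n1] at h
      have h1 : cond b 1 0 = cond b' 1 0 := by omega
      have h2 : n1 l = n1 l' := by omega
      have hbb : b = b' := by cases b <;> cases b' <;> simp_all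
      rw [hbb, ih h2]



/-- parse state: (parseH l, parseH (false::l), parseH (true::l)) -/
abbrev PR := Option (List Bool × List Bool)

def G : List Bool → PR × PR × PR
  | [] => (none, none, none)
  | c :: l =>
    let ih := G l
    (if c then ih.2.2 else ih.2.1,
     if c then some ([], l) else ih.1.map (fun ds => (false :: ds.1, ds.2)),
     if c then ih.1.map (fun ds => (true :: ds.1, ds.2)) else none)

def parseH (l : List Bool) : PR := (G l).1

lemma parseH_nil : parseH [] = none := rfl

lemma parseH_single (a : Bool) : parseH [a] = none := by
  cases a <;> rfl

lemma parseH_cons2 (a b : Bool) (l : List Bool) :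
    parseH (a :: b :: l) =
      if a = b then (parseH l).map (fun ds => (a :: ds.1, ds.2))
      else if a = false ∧ b = true then some ([], l) else none := by
  cases a <;> cases b <;> simp [parseH, G]

lemma G_append (u : List Bool) : ∀ l : List Bool,
    (∀ d s, (G l).1 = some (d,s) → (G (l++u)).1 = some (d, s++u)) ∧
    (∀ d s, (G l).2.1 = some (d,s) → (G (l++u)).2.1 = some (d, s++u)) ∧
    (∀ d s, (G l).2.2 = some (d,s) → (G (l++u)).2.2 = some (d, s++u)) := by
  intro l
  induction l with
  | nil => refine ⟨?_, ?_, ?_⟩ <;> intro d s h <;> simp [G] at h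
  | cons c l ih =>
    obtain ⟨ih1, ih2, ih3⟩ := ih
    cases c
    case false =>
      refine ⟨?_, ?_, ?_⟩
      · intro d s h
        have h' : (G l).2.1 = some (d, s) := by simpa [G] using h
        have := ih2 d s h'
        rw [List.cons_append]
        simpa [G] using this
      · intro d s h
        have h' : ∃ d' s', (G l).1 = some (d', s') ∧ false :: d' = d ∧ s' = s := by
          simpa [G] using h
        obtain ⟨d', s', hG, hd, hs⟩ := h'
        have := ih1 d' s' hG
        rw [List.cons_append]
        simp [G, this, ← hd, ← hs]
      · intro d s h
        simp [G] at h
    case true =>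
      refine ⟨?_, ?_, ?_⟩
      · intro d s h
        have h' : (G l).2.2 = some (d, s) := by simpa [G] using h
        have := ih3 d s h'
        rw [List.cons_append]
        simpa [G] using this
      · intro d s h
        have h' : d = [] ∧ l = s := by simpa [G] using h
        rw [List.cons_append]
        simp [G, h'.1, ← h'.2]
      · intro d s h
        have h' : ∃ d' s', (G l).1 = some (d', s') ∧ true :: d' = d ∧ s' = s := by
          simpa [G] using h
        obtain ⟨d', s', hG, hd, hs⟩ := h'
        have := ih1 d' s' hG
        rw [List.cons_append]
        simp [G, this, ← hd, ← hs]

lemma parseH_append {l u : List Bool} {d s : List Bool} (h : parseH l = some (d, s)) :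
    parseH (l ++ u) = some (d, s ++ u) :=
  (G_append u l).1 d s h

lemma parseH_dbl (d s : List Bool) : parseH (dbl d ++ false :: true :: s) = some (d, s) := by
  induction d with
  | nil =>
    show parseH (false :: true :: s) = _
    rw [parseH_cons2]
    simp
  | cons b d ih =>
    rw [show dbl (b::d) ++ false :: true :: s = b :: b :: (dbl d ++ false :: true :: s) by
      simp [dbl]]
    rw [parseH_cons2]
    simp [ih]

/-- full parse: e followed by e+3 bits of color -/
def parseO (r : List Bool) : Option (ℕ × ℕ) :=
  (parseH r).bind fun ds =>
    if ds.2.length = bval ds.1 + 3 then some (bval ds.1, bval ds.2) else none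

/-- parse for the trivial print machine: databits with empty suffix -/
def parse0 (r : List Bool) : Option (List Bool) :=
  (parseH r).bind fun ds => if ds.2 = ([] : List Bool) then some ds.1 else none

lemma parseO_prefix {r r' : List Bool} {e i e' i' : ℕ} (h : parseO r = some (e, i))
    (h' : parseO r' = some (e', i')) (hp : r <+: r') : r = r' := by
  obtain ⟨u, rfl⟩ := hp
  rcases Option.bind_eq_some_iff.1 h with ⟨⟨d, s⟩, hd, hif⟩
  rcases Option.bind_eq_some_iff.1 h' with ⟨⟨d', s'⟩, hd', hif'⟩
  rw [parseH_append hd] at hd'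
  obtain ⟨rfl, rfl⟩ : d = d' ∧ s ++ u = s' := by
    have := Option.some.inj hd'
    exact ⟨congrArg Prod.fst this, congrArg Prod.snd this⟩
  simp only [Option.ite_none_right_eq_some] at hif hif'
  have h1 := hif.1
  have h2 := hif'.1
  simp only [List.length_append] at h2
  have : u = [] := List.eq_nil_of_length_eq_zero (by omega)
  simp [this]

lemma parse0_prefix {r r' : List Bool} {y y' : List Bool} (h : parse0 r = some y)
    (h' : parse0 r' = some y') (hp : r <+: r') : r = r' := by
  obtain ⟨u, rfl⟩ := hp
  rcases Option.bind_eq_some_iff.1 h with ⟨⟨d, s⟩, hd, hif⟩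
  rcases Option.bind_eq_some_iff.1 h' with ⟨⟨d', s'⟩, hd', hif'⟩
  rw [parseH_append hd] at hd'
  obtain ⟨rfl, rfl⟩ : d = d' ∧ s ++ u = s' := by
    have := Option.some.inj hd'
    exact ⟨congrArg Prod.fst this, congrArg Prod.snd this⟩
  simp only [Option.ite_none_right_eq_some] at hif hif'
  have h1 := hif.1
  have h2 := hif'.1
  rw [h1] at h2
  simp only [List.nil_append] at h2
  simp [h2]

/-- the program for level e, color i -/
def progr (e i : ℕ) : List Bool := dbl (ebits e) ++ false :: true :: padbits (e+3) i

lemma parseO_progr {e i : ℕ} (h : i < 2 ^ (e+3)) : parseO (progr e i) = some (e, i) := by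
  rw [progr, parseO, parseH_dbl]
  simp [padbits_length h, bval_ebits, bval_padbits]

lemma progr_length {e i : ℕ} (h : i < 2 ^ (e+3)) :
    (progr e i).length ≤ e + 2 * Nat.log 2 (e + 2) + 7 := by
  have h1 : (ebits e).length ≤ Nat.log 2 e + 1 :=
    ebits_length (Nat.lt_pow_succ_log_self (by norm_num) e)
  have h2 : Nat.log 2 e ≤ Nat.log 2 (e+2) := Nat.log_mono_right (by omega)
  rw [progr]
  simp [dbl_length, padbits_length h]
  omega

lemma foldr_or_iff {α : Type*} (f : α → Bool) (l : List α) :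
    l.foldr (fun x acc => f x || acc) false = true ↔ ∃ x ∈ l, f x = true := by
  induction l with
  | nil => simp
  | cons a l ih => simp [ih]

def myfilter {α : Type*} (f : α → Bool) (l : List α) : List α :=
  l.foldr (fun x acc => if f x then x :: acc else acc) []

lemma myfilter_eq {α : Type*} (f : α → Bool) (l : List α) : myfilter f l = l.filter f := by
  induction l with
  | nil => rfl
  | cons a l ih =>
    by_cases h : f a = true <;> simp [myfilter, List.filter_cons, h] at ih ⊢ <;> exact ih

def myfind? {α : Type*} (f : α → Bool) (l : List α) : Option α :=
  l.foldr (fun x r => if f x then some x else r) none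

lemma myfind?_eq {α : Type*} (f : α → Bool) (l : List α) : myfind? f l = l.find? f := by
  induction l with
  | nil => rfl
  | cons a l ih =>
    rw [List.find?_cons]
    by_cases h : f a <;> simp [myfind?, h] <;> simpa [myfind?] using ih

lemma foldr_and_iff {α : Type*} (f : α → Bool) (l : List α) :
    l.foldr (fun x acc => acc && f x) true = true ↔ ∀ x ∈ l, f x = true := by
  induction l with
  | nil => simp
  | cons a l ih => simp [ih]; tauto

lemma find?_unique {α : Type*} {p : α → Bool} {l : List α} {a : α}
    (hmem : a ∈ l) (hp : p a = true) (huniq : ∀ b ∈ l, p b = true → b = a) :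
    l.find? p = some a := by
  induction l with
  | nil => simp at hmem
  | cons b l ih =>
    by_cases hb : p b = true
    · rw [List.find?_cons_of_pos hb, huniq b (by simp) hb]
    · rw [List.find?_cons_of_neg (by simp [hb])]
      rcases List.mem_cons.1 hmem with rfl | hmem'
      · exact absurd hp hb
      · exact ih hmem' (fun c hc => huniq c (List.mem_cons_of_mem _ hc))

lemma range_find?_le {p : ℕ → Bool} {n r c : ℕ}
    (h : (List.range n).find? p = some r) (hc : p c = true) (hcn : c < n) : r ≤ c := by
  by_contra hlt
  push_neg at hlt
  rw [List.find?_eq_some_iff_append] at h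
  obtain ⟨hpr, as, bs, hx, has⟩ := h
  have hlen : as.length + 1 + bs.length = n := by
    have := congrArg List.length hx
    simp at this
    omega
  have hr : r = as.length := by
    have h1 : (List.range n)[as.length]? = some as.length :=
      List.getElem?_range (by omega)
    rw [hx] at h1
    rw [List.getElem?_append_right (le_refl _)] at h1
    simp at h1
    omega
  have hcas : c ∈ as := by
    have h2 : as = (List.range n).take as.length := by
      rw [hx, List.take_left]
    rw [h2, List.take_range]
    simp
    omega
  have := has c hcas
  rw [hc] at this
  simp at this

lemma exists_lt_not_mem (l : List ℕ) (n : ℕ) (h : l.length < n) : ∃ c < n, c ∉ l := by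
  by_contra hc
  push_neg at hc
  have hsub : Finset.range n ⊆ l.toFinset := by
    intro c hcn
    simp only [List.mem_toFinset]
    exact hc c (Finset.mem_range.1 hcn)
  have := Finset.card_le_card hsub
  rw [Finset.card_range] at this
  have := l.toFinset_card_le
  omega

lemma nodup_lt_length_le {l : List ℕ} {n : ℕ} (hnd : l.Nodup) (hb : ∀ x ∈ l, x < n) :
    l.length ≤ n := by
  have hsub : l.toFinset ⊆ Finset.range n := by
    intro c hcl
    simp only [List.mem_toFinset] at hcl
    exact Finset.mem_range.2 (hb c hcl)
  have h1 := Finset.card_le_card hsub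
  rw [Finset.card_range, List.toFinset_card_of_nodup hnd] at h1
  exact h1

lemma snd_unique_of_fst_nodup {α β : Type*} {l : List (α × β)} (h : (l.map Prod.fst).Nodup)
    {a : α} {b b' : β} (h1 : (a, b) ∈ l) (h2 : (a, b') ∈ l) : b = b' := by
  induction l with
  | nil => simp at h1
  | cons q l ih =>
    rw [List.map_cons, List.nodup_cons] at h
    rcases List.mem_cons.1 h1 with h1' | h1' <;> rcases List.mem_cons.1 h2 with h2' | h2'
    · exact congrArg Prod.snd (h1'.trans h2'.symm)
    · exfalso
      rw [← h1'] at h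
      exact h.1 (List.mem_map.2 ⟨_, h2', rfl⟩)
    · exfalso
      rw [← h2'] at h
      exact h.1 (List.mem_map.2 ⟨_, h1', rfl⟩)
    · exact ih h.2 h1' h2'

open Nat.Partrec (Code)
open Nat.Partrec.Code

section Enum
variable (cW : Code)

/-- is p the encoding of a program (bit string) of length ≤ e? -/
def okp (e p : ℕ) : Bool :=
  ((Encodable.decode₂ (List Bool) p).map (fun pl => decide (pl.length ≤ e))).getD false

lemma okp_iff {e p : ℕ} : okp e p = true ↔
    ∃ pl : List Bool, Encodable.encode pl = p ∧ pl.length ≤ e := by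
  unfold okp
  cases h : Encodable.decode₂ (List Bool) p with
  | none =>
    constructor
    · intro h'
      simp at h'
    · rintro ⟨pl, rfl, -⟩
      rw [Encodable.decode₂_encode] at h
      simp at h
  | some pl =>
    have := Encodable.mem_decode₂.1 (h ▸ rfl : pl ∈ Encodable.decode₂ (List Bool) p)
    simp only [Option.map_some, Option.getD_some, decide_eq_true_eq]
    constructor
    · intro hle
      exact ⟨pl, this, hle⟩
    · rintro ⟨pl', hpl', hle⟩
      have : pl' = pl := by
        have h2 := Encodable.mem_decode₂.2 hpl'
        rw [h] at h2
        simpa using h2.symm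
      exact this ▸ hle

/-- bounded-time witnessed relation: some program of length ≤ e maps a to b in time t -/
def relB (e t a b : ℕ) : Bool :=
  (List.range t).foldr
    (fun p acc => (okp e p && decide (evaln t cW (Nat.pair p a) = some b)) || acc) false

/-- the limit relation: some program of length ≤ e maps a to b -/
def Rel (e a b : ℕ) : Prop :=
  ∃ pl : List Bool, pl.length ≤ e ∧ b ∈ eval cW (Nat.pair (Encodable.encode pl) a)

lemma relB_iff {e t a b : ℕ} : relB cW e t a b = true ↔
    ∃ p ∈ List.range t, (okp e p && decide (evaln t cW (Nat.pair p a) = some b)) = true :=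
  foldr_or_iff _ _

lemma relB_sound {e t a b : ℕ} (h : relB cW e t a b = true) : Rel cW e a b := by
  rcases (relB_iff cW).1 h with ⟨p, -, hp⟩
  simp only [Bool.and_eq_true, decide_eq_true_eq] at hp
  obtain ⟨hok, hev⟩ := hp
  obtain ⟨pl, rfl, hle⟩ := okp_iff.1 hok
  exact ⟨pl, hle, evaln_sound (by rw [hev]; exact rfl : b ∈ evaln t cW (Nat.pair (Encodable.encode pl) a))⟩

lemma relB_mono {e t t' a b : ℕ} (htt : t ≤ t') (h : relB cW e t a b = true) :
    relB cW e t' a b = true := by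
  rcases (relB_iff cW).1 h with ⟨p, hpm, hp⟩
  simp only [Bool.and_eq_true, decide_eq_true_eq] at hp
  refine (relB_iff cW).2 ⟨p, ?_, ?_⟩
  · simp only [List.mem_range] at hpm ⊢
    omega
  · simp only [Bool.and_eq_true, decide_eq_true_eq]
    refine ⟨hp.1, ?_⟩
    have := evaln_mono htt (by rw [hp.2]; exact rfl : b ∈ evaln t cW (Nat.pair p a))
    simpa using this

lemma relB_complete {e a b : ℕ} (h : Rel cW e a b) : ∃ t, relB cW e t a b = true := by
  obtain ⟨pl, hle, hev⟩ := h
  obtain ⟨k, hk⟩ := evaln_complete.1 hev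
  refine ⟨max k (Encodable.encode pl + 1), (relB_iff cW).2 ⟨Encodable.encode pl, ?_, ?_⟩⟩
  · simp only [List.mem_range]
    omega
  · simp only [Bool.and_eq_true, decide_eq_true_eq]
    refine ⟨okp_iff.2 ⟨pl, rfl, hle⟩, ?_⟩
    have h2 : b ∈ evaln (max k (Encodable.encode pl + 1)) cW (Nat.pair (Encodable.encode pl) a) :=
      evaln_mono (le_max_left _ _) hk
    simpa using h2

def isEdgeB (e t m : ℕ) : Bool :=
  decide (m.unpair.1 ≤ m.unpair.2) && relB cW e t m.unpair.1 m.unpair.2 &&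
    relB cW e t m.unpair.2 m.unpair.1

def EdgeP (e m : ℕ) : Prop :=
  m.unpair.1 ≤ m.unpair.2 ∧ Rel cW e m.unpair.1 m.unpair.2 ∧ Rel cW e m.unpair.2 m.unpair.1

lemma isEdgeB_sound {e t m : ℕ} (h : isEdgeB cW e t m = true) : EdgeP cW e m := by
  simp only [isEdgeB, Bool.and_eq_true, decide_eq_true_eq] at h
  exact ⟨h.1.1, relB_sound cW h.1.2, relB_sound cW h.2⟩

lemma isEdgeB_mono {e t t' m : ℕ} (htt : t ≤ t') (h : isEdgeB cW e t m = true) :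
    isEdgeB cW e t' m = true := by
  simp only [isEdgeB, Bool.and_eq_true, decide_eq_true_eq] at h ⊢
  exact ⟨⟨h.1.1, relB_mono cW htt h.1.2⟩, relB_mono cW htt h.2⟩

def memB (l : List ℕ) (m : ℕ) : Bool := l.foldr (fun x acc => decide (x = m) || acc) false

lemma memB_iff {l : List ℕ} {m : ℕ} : memB l m = true ↔ m ∈ l := by
  rw [memB, foldr_or_iff]
  simp [eq_comm]

/-- the enumeration of discovered edges at level e, by stage -/
def LL (e : ℕ) (t : ℕ) : List ℕ :=
  Nat.rec [] (fun t prev =>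
    prev ++ myfilter (fun m => isEdgeB cW e (t+1) m && !(memB prev m)) (List.range (t+1))) t

lemma LL_zero (e : ℕ) : LL cW e 0 = [] := rfl

lemma LL_succ (e t : ℕ) : LL cW e (t+1) =
    LL cW e t ++ myfilter (fun m => isEdgeB cW e (t+1) m && !(memB (LL cW e t) m))
      (List.range (t+1)) := rfl

lemma LL_prefix {e t t' : ℕ} (h : t ≤ t') : LL cW e t <+: LL cW e t' := by
  induction t' with
  | zero =>
    obtain rfl : t = 0 := by omega
    exact List.prefix_refl _
  | succ t' ih =>
    rcases Nat.lt_or_ge t (t'+1) with h' | h'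
    · exact (ih (by omega)).trans (by rw [LL_succ]; exact List.prefix_append _ _)
    · obtain rfl : t = t' + 1 := by omega
      exact List.prefix_refl _

lemma LL_sound {e t : ℕ} : ∀ m ∈ LL cW e t, EdgeP cW e m := by
  induction t with
  | zero => simp [LL_zero]
  | succ t ih =>
    intro m hm
    rw [LL_succ] at hm
    rcases List.mem_append.1 hm with hm | hm
    · exact ih m hm
    · rw [myfilter_eq, List.mem_filter] at hm
      have := hm.2
      simp only [Bool.and_eq_true] at this
      exact isEdgeB_sound cW this.1

lemma LL_nodup {e t : ℕ} : (LL cW e t).Nodup := by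
  induction t with
  | zero => simp [LL_zero]
  | succ t ih =>
    rw [LL_succ, List.nodup_append]
    refine ⟨ih, ?_, ?_⟩
    · rw [myfilter_eq]
      exact List.filter_sublist.nodup List.nodup_range
    · intro m hm m' hm' hmm'
      subst hmm'
      rw [myfilter_eq, List.mem_filter] at hm'
      have h2 := hm'.2
      simp only [Bool.and_eq_true, Bool.not_eq_true'] at h2
      rw [← memB_iff (l := LL cW e t) (m := m)] at hm
      rw [h2.2] at hm
      simp at hm

lemma LL_mem_succ {e t m : ℕ} (hE : isEdgeB cW e (t+1) m = true) (hm : m ≤ t) :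
    m ∈ LL cW e (t+1) := by
  by_cases h : m ∈ LL cW e t
  · rw [LL_succ]
    exact List.mem_append.2 (Or.inl h)
  · rw [LL_succ]
    refine List.mem_append.2 (Or.inr ?_)
    rw [myfilter_eq, List.mem_filter]
    refine ⟨List.mem_range.2 (by omega), ?_⟩
    simp only [Bool.and_eq_true, Bool.not_eq_true']
    refine ⟨hE, ?_⟩
    rw [← Bool.not_eq_true, memB_iff]
    exact h

lemma LL_complete {e m : ℕ} (h : EdgeP cW e m) : ∃ t, m ∈ LL cW e t := by
  obtain ⟨t1, h1⟩ := relB_complete cW h.2.1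
  obtain ⟨t2, h2⟩ := relB_complete cW h.2.2
  set T := max (max t1 t2) (m+1) with hT
  have hT1 : 1 ≤ T := by omega
  refine ⟨(T-1)+1, LL_mem_succ cW ?_ (by omega)⟩
  have hTT : (T-1)+1 = T := by omega
  rw [hTT]
  simp only [isEdgeB, Bool.and_eq_true, decide_eq_true_eq]
  exact ⟨⟨h.1, relB_mono cW (by omega) h1⟩, relB_mono cW (by omega) h2⟩

/-- do two sorted pairs share an endpoint? -/
def touchB (m m' : ℕ) : Bool :=
  decide (m.unpair.1 = m'.unpair.1) || decide (m.unpair.1 = m'.unpair.2) ||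
  decide (m.unpair.2 = m'.unpair.1) || decide (m.unpair.2 = m'.unpair.2)

lemma touchB_comm {m m' : ℕ} : touchB m m' = true ↔ touchB m' m = true := by
  simp only [touchB, Bool.or_eq_true, decide_eq_true_eq]
  tauto

def lfok (acc : List (ℕ × ℕ)) (m : ℕ) (c : ℕ) : Bool :=
  acc.foldr (fun q ok => ok && !(touchB m q.1 && decide (q.2 = c))) true

lemma lfok_iff {acc m c} : lfok acc m c = true ↔
    ∀ q ∈ acc, ¬(touchB m q.1 = true ∧ q.2 = c) := by
  rw [lfok, foldr_and_iff]
  constructor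
  · intro h q hq hcon
    have := h q hq
    simp only [Bool.not_eq_true', Bool.and_eq_false_iff, decide_eq_false_iff_not] at this
    rcases this with h' | h'
    · rw [hcon.1] at h'; simp at h'
    · exact h' hcon.2
  · intro h q hq
    have := h q hq
    simp only [Bool.not_eq_true', Bool.and_eq_false_iff, decide_eq_false_iff_not]
    by_cases ht : touchB m q.1 = true
    · exact Or.inr (fun hc => this ⟨ht, hc⟩)
    · exact Or.inl (by simpa using ht)

/-- least free color -/
def lf (acc : List (ℕ × ℕ)) (m : ℕ) : ℕ :=
  (myfind? (fun c => lfok acc m c) (List.range (acc.length + 1))).getD 0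

lemma lf_isok (acc : List (ℕ × ℕ)) (m : ℕ) : lfok acc m (lf acc m) = true := by
  obtain ⟨c, hcn, hc⟩ := exists_lt_not_mem (acc.map Prod.snd) (acc.length + 1) (by simp)
  have hok : lfok acc m c = true := lfok_iff.2 (fun q hq hcon =>
    hc (hcon.2 ▸ List.mem_map.2 ⟨q, hq, rfl⟩))
  have : ((List.range (acc.length + 1)).find? (fun c => lfok acc m c)).isSome := by
    rw [List.find?_isSome]
    exact ⟨c, List.mem_range.2 hcn, hok⟩
  obtain ⟨r, hr⟩ := Option.isSome_iff_exists.1 this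
  have hro := List.find?_some hr
  rw [lf, myfind?_eq, hr, Option.getD_some]
  exact hro

lemma lf_spec {acc : List (ℕ × ℕ)} {m : ℕ} :
    ∀ q ∈ acc, touchB m q.1 = true → q.2 ≠ lf acc m := by
  intro q hq ht hc
  exact lfok_iff.1 (lf_isok acc m) q hq ⟨ht, hc⟩

lemma lf_le (acc : List (ℕ × ℕ)) (m : ℕ) :
    lf acc m ≤ acc.countP (fun q => touchB m q.1) := by
  set tc := acc.countP (fun q => touchB m q.1) with htc
  obtain ⟨c, hcn, hc⟩ := exists_lt_not_mem ((acc.filter (fun q => touchB m q.1)).map Prod.snd)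
    (tc + 1) (by simp [htc, List.countP_eq_length_filter])
  have hok : lfok acc m c = true := lfok_iff.2 (by
    intro q hq hcon
    exact hc (hcon.2 ▸ List.mem_map.2 ⟨q, List.mem_filter.2 ⟨hq, hcon.1⟩, rfl⟩))
  have htcl : tc ≤ acc.length := by
    rw [htc]
    exact List.countP_le_length
  have : ((List.range (acc.length + 1)).find? (fun c => lfok acc m c)).isSome := by
    rw [List.find?_isSome]
    exact ⟨c, List.mem_range.2 (by omega), hok⟩
  obtain ⟨r, hr⟩ := Option.isSome_iff_exists.1 this
  have := range_find?_le hr hok (by omega)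
  rw [lf, myfind?_eq, hr, Option.getD_some]
  omega

/-- greedy coloring -/
def CFgo (acc : List (ℕ × ℕ)) (l : List ℕ) : List (ℕ × ℕ) :=
  l.foldl (fun acc m => acc ++ [(m, lf acc m)]) acc

def CF (l : List ℕ) : List (ℕ × ℕ) := CFgo [] l

lemma CFgo_nil (acc) : CFgo acc [] = acc := rfl

lemma CFgo_cons (acc m l) : CFgo acc (m :: l) = CFgo (acc ++ [(m, lf acc m)]) l := rfl

lemma CFgo_append (acc l l') : CFgo acc (l ++ l') = CFgo (CFgo acc l) l' := by
  simp [CFgo, List.foldl_append]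

lemma CFgo_prefix (acc l) : acc <+: CFgo acc l := by
  induction l generalizing acc with
  | nil => exact List.prefix_refl _
  | cons m l ih =>
    rw [CFgo_cons]
    exact (List.prefix_append _ _).trans (ih _)

lemma CFgo_map_fst (l) : ∀ acc, (CFgo acc l).map Prod.fst = acc.map Prod.fst ++ l := by
  induction l with
  | nil => simp [CFgo_nil]
  | cons m l ih =>
    intro acc
    rw [CFgo_cons, ih]
    simp

def GoodC (acc : List (ℕ × ℕ)) : Prop :=
  acc.Pairwise (fun q q' => touchB q.1 q'.1 = true → q.2 ≠ q'.2) ∧ (acc.map Prod.fst).Nodup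

lemma CFgo_good {l : List ℕ} : ∀ {acc : List (ℕ × ℕ)}, GoodC acc →
    (∀ m ∈ l, m ∉ acc.map Prod.fst) → l.Nodup → GoodC (CFgo acc l) := by
  induction l with
  | nil => intro acc h _ _; exact h
  | cons m l ih =>
    intro acc hG hdisj hnd
    rw [CFgo_cons]
    have hGood' : GoodC (acc ++ [(m, lf acc m)]) := by
      constructor
      · rw [List.pairwise_append]
        refine ⟨hG.1, by simp, ?_⟩
        intro q hq q' hq'
        simp only [List.mem_singleton] at hq'
        subst hq'
        intro ht
        exact lf_spec q hq (touchB_comm.1 ht)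
      · rw [List.map_append, List.nodup_append]
        refine ⟨hG.2, by simp, ?_⟩
        intro x hx y hy hxy
        simp only [List.map_cons, List.map_nil, List.mem_singleton] at hy
        subst hy hxy
        exact hdisj _ (by simp) hx
    refine ih hGood' ?_ (List.Nodup.of_cons hnd)
    intro m' hm'
    rw [List.map_append]
    intro hmem
    rcases List.mem_append.1 hmem with h' | h'
    · exact hdisj m' (by simp [hm']) h'
    · simp only [List.map_cons, List.map_nil, List.mem_singleton] at h'
      subst h'
      exact (List.nodup_cons.1 hnd).1 hm'

lemma CF_good {l : List ℕ} (hnd : l.Nodup) : GoodC (CF l) :=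
  CFgo_good ⟨List.Pairwise.nil, List.nodup_nil⟩ (by simp) hnd

lemma CFgo_mem_bound {B : ℕ} {S : ℕ → Prop}
    (HB : ∀ m (tl : List ℕ), tl.Nodup → (∀ m' ∈ tl, S m' ∧ touchB m m' = true) →
      tl.length ≤ B) :
    ∀ (l : List ℕ) (acc : List (ℕ × ℕ)), (acc.map Prod.fst).Nodup →
    (∀ q ∈ acc, S q.1) → (∀ m ∈ l, S m) → (∀ m ∈ l, m ∉ acc.map Prod.fst) → l.Nodup →
    ∀ q ∈ CFgo acc l, q ∈ acc ∨ q.2 ≤ B := by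
  intro l
  induction l with
  | nil => intro acc _ _ _ _ _ q hq; exact Or.inl hq
  | cons m l ih =>
    intro acc hnd hS hSl hdisj hlnd q hq
    rw [CFgo_cons] at hq
    have hnew : (m, lf acc m).2 ≤ B := by
      have hle := lf_le acc m
      have : acc.countP (fun q => touchB m q.1) ≤ B := by
        set tl := (acc.filter (fun q => touchB m q.1)).map Prod.fst with htl
        have h1 : tl.Nodup := by
          rw [htl]
          exact hnd.sublist (List.Sublist.map _ List.filter_sublist)
        have h2 : ∀ m' ∈ tl, S m' ∧ touchB m m' = true := by
          intro m' hm'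
          rw [htl] at hm'
          obtain ⟨q', hq', rfl⟩ := List.mem_map.1 hm'
          rw [List.mem_filter] at hq'
          exact ⟨hS q' hq'.1, hq'.2⟩
        have h3 := HB m tl h1 h2
        rw [htl, List.length_map, ← List.countP_eq_length_filter] at h3
        exact h3
      omega
    have hacc' : ((acc ++ [(m, lf acc m)]).map Prod.fst).Nodup := by
      rw [List.map_append, List.nodup_append]
      refine ⟨hnd, by simp, ?_⟩
      intro x hx y hy hxy
      simp only [List.map_cons, List.map_nil, List.mem_singleton] at hy
      subst hy hxy
      exact hdisj _ (by simp) hx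
    have := ih (acc ++ [(m, lf acc m)]) hacc'
      (by
        intro q' hq'
        rcases List.mem_append.1 hq' with h' | h'
        · exact hS q' h'
        · simp only [List.mem_singleton] at h'
          subst h'
          exact hSl m (by simp))
      (fun m' hm' => hSl m' (by simp [hm']))
      (by
        intro m' hm'
        rw [List.map_append]
        intro hmem
        rcases List.mem_append.1 hmem with h' | h'
        · exact hdisj m' (by simp [hm']) h'
        · simp only [List.map_cons, List.map_nil, List.mem_singleton] at h'
          subst h'
          exact (List.nodup_cons.1 hlnd).1 hm')
      (List.Nodup.of_cons hlnd) q hq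
    rcases this with h' | h'
    · rcases List.mem_append.1 h' with h'' | h''
      · exact Or.inl h''
      · simp only [List.mem_singleton] at h''
        subst h''
        exact Or.inr hnew
    · exact Or.inr h'

end Enum

open Nat.Partrec (Code)
open Nat.Partrec.Code

section Deg
open scoped Classical
variable (cW : Code)

/-- a canonical program witnessing `Rel e a v`, coded with a leading-one binary value -/
noncomputable def pick (e a v : ℕ) : ℕ :=
  if h : Rel cW e a v then n1 h.choose else 0

lemma pick_lt {e a v : ℕ} (h : Rel cW e a v) : pick cW e a v < 2 ^ (e + 1) := by
  rw [pick, dif_pos h]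
  exact n1_lt h.choose_spec.1

lemma pick_inj {e a v v' : ℕ} (h : Rel cW e a v) (h' : Rel cW e a v')
    (he : pick cW e a v = pick cW e a v') : v = v' := by
  rw [pick, dif_pos h, pick, dif_pos h'] at he
  have hpl := h.choose_spec.2
  have hpl' := h'.choose_spec.2
  rw [n1_inj he] at hpl
  exact Part.mem_unique hpl hpl'

/-- the endpoint of m other than v -/
def other (v m : ℕ) : ℕ := if m.unpair.1 = v then m.unpair.2 else m.unpair.1

lemma edge_eq_of_other {a m' : ℕ} (hs : m'.unpair.1 ≤ m'.unpair.2)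
    (h : m'.unpair.1 = a ∨ m'.unpair.2 = a) :
    m' = Nat.pair (min a (other a m')) (max a (other a m')) := by
  by_cases h1 : m'.unpair.1 = a
  · rw [other, if_pos h1]
    rw [min_eq_left (h1 ▸ hs), max_eq_right (h1 ▸ hs), ← h1, Nat.pair_unpair]
  · have h2 : m'.unpair.2 = a := h.resolve_left h1
    rw [other, if_neg h1]
    rw [min_eq_right (h2 ▸ hs), max_eq_left (h2 ▸ hs), ← h2, Nat.pair_unpair]

lemma rel_other {e m' a : ℕ} (hE : EdgeP cW e m') (h : m'.unpair.1 = a ∨ m'.unpair.2 = a) :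
    Rel cW e a (other a m') := by
  by_cases h1 : m'.unpair.1 = a
  · rw [other, if_pos h1, ← h1]
    exact hE.2.1
  · have h2 : m'.unpair.2 = a := h.resolve_left h1
    rw [other, if_neg h1, ← h2]
    exact hE.2.2

lemma deg_bound {e : ℕ} (m : ℕ) (tl : List ℕ) (hnd : tl.Nodup)
    (h : ∀ m' ∈ tl, EdgeP cW e m' ∧ touchB m m' = true) : tl.length ≤ 2 ^ (e + 2) := by
  set a := m.unpair.1 with ha
  set b := m.unpair.2 with hb
  set F : ℕ → ℕ := fun m' =>
    if m'.unpair.1 = a ∨ m'.unpair.2 = a then 2 * pick cW e a (other a m')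
    else 2 * pick cW e b (other b m') + 1 with hF
  have htouch : ∀ m' ∈ tl, (m'.unpair.1 = a ∨ m'.unpair.2 = a) ∨
      (m'.unpair.1 = b ∨ m'.unpair.2 = b) := by
    intro m' hm'
    have := (h m' hm').2
    simp only [touchB, Bool.or_eq_true, decide_eq_true_eq, ← ha, ← hb] at this
    tauto
  have hrel : ∀ m' ∈ tl, ∀ c : ℕ, (m'.unpair.1 = c ∨ m'.unpair.2 = c) →
      Rel cW e c (other c m') := fun m' hm' c hc => rel_other cW (h m' hm').1 hc
  have hFlt : ∀ m' ∈ tl, F m' < 2 ^ (e + 2) := by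
    intro m' hm'
    by_cases hc : m'.unpair.1 = a ∨ m'.unpair.2 = a
    · simp only [hF]
      rw [if_pos hc]
      have := pick_lt cW (hrel m' hm' a hc)
      have h2 : (2:ℕ) ^ (e+2) = 2 * 2 ^ (e+1) := by ring
      omega
    · simp only [hF]
      rw [if_neg hc]
      have := pick_lt cW (hrel m' hm' b ((htouch m' hm').resolve_left hc))
      have h2 : (2:ℕ) ^ (e+2) = 2 * 2 ^ (e+1) := by ring
      omega
  have hFinj : ∀ m' ∈ tl, ∀ m'' ∈ tl, F m' = F m'' → m' = m'' := by
    intro m' hm' m'' hm'' hFe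
    simp only [hF] at hFe
    by_cases hc : m'.unpair.1 = a ∨ m'.unpair.2 = a <;>
      by_cases hc' : m''.unpair.1 = a ∨ m''.unpair.2 = a
    · rw [if_pos hc, if_pos hc'] at hFe
      have hp := pick_inj cW (hrel m' hm' a hc) (hrel m'' hm'' a hc') (by omega)
      rw [edge_eq_of_other (h m' hm').1.1 hc, edge_eq_of_other (h m'' hm'').1.1 hc', hp]
    · rw [if_pos hc, if_neg hc'] at hFe
      omega
    · rw [if_neg hc, if_pos hc'] at hFe
      omega
    · rw [if_neg hc, if_neg hc'] at hFe
      have hcb := (htouch m' hm').resolve_left hc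
      have hcb' := (htouch m'' hm'').resolve_left hc'
      have hp := pick_inj cW (hrel m' hm' b hcb) (hrel m'' hm'' b hcb') (by omega)
      rw [edge_eq_of_other (h m' hm').1.1 hcb, edge_eq_of_other (h m'' hm'').1.1 hcb', hp]
  have hmapnd : (tl.map F).Nodup := hnd.map_on hFinj
  have : (tl.map F).length ≤ 2 ^ (e+2) := by
    apply nodup_lt_length_le hmapnd
    intro x hx
    obtain ⟨m', hm', rfl⟩ := List.mem_map.1 hx
    exact hFlt m' hm'
  simpa using this

lemma CF_LL_color_lt {e t : ℕ} : ∀ q ∈ CF (LL cW e t), q.2 < 2 ^ (e + 3) := by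
  intro q hq
  have := CFgo_mem_bound (B := 2^(e+2)) (S := EdgeP cW e)
    (fun m tl hnd h => deg_bound cW m tl hnd h) (LL cW e t) []
    (by simp) (by simp) (LL_sound cW) (by simp) (LL_nodup cW) q hq
  rcases this with h | h
  · simp at h
  · have h2 : (2:ℕ)^(e+2) < 2^(e+3) := by
      have : (2:ℕ)^(e+3) = 2 * 2^(e+2) := by ring
      have h3 : 0 < (2:ℕ)^(e+2) := by positivity
      omega
    omega

lemma Edge_of_rels {e x y : ℕ} (h1 : Rel cW e x y) (h2 : Rel cW e y x) :
    EdgeP cW e (Nat.pair (min x y) (max x y)) := by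
  rcases le_total x y with h | h
  · rw [min_eq_left h, max_eq_right h]
    exact ⟨by simp [h], by simpa using h1, by simpa using h2⟩
  · rw [min_eq_right h, max_eq_left h]
    exact ⟨by simp [h], by simpa using h2, by simpa using h1⟩

lemma mem_CF_of_mem_LL {e t m : ℕ} (h : m ∈ LL cW e t) : ∃ i, (m, i) ∈ CF (LL cW e t) := by
  have : m ∈ (CF (LL cW e t)).map Prod.fst := by
    rw [CF, CFgo_map_fst]
    simpa using h
  obtain ⟨q, hq, hq2⟩ := List.mem_map.1 this
  exact ⟨q.2, by rw [← hq2]; exact hq⟩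

/-- the search predicate -/
def srchp (v i : ℕ) (q : ℕ × ℕ) : Bool :=
  (decide (q.1.unpair.1 = v) || decide (q.1.unpair.2 = v)) && decide (q.2 = i)

/-- search the coloring at stage t for the edge at v with color i, return other endpoint -/
def srch (e i v t : ℕ) : Option ℕ :=
  (myfind? (srchp v i) (CF (LL cW e t))).map (fun q => other v q.1)

lemma CF_LL_prefix {e t t' : ℕ} (htt : t ≤ t') : CF (LL cW e t) <+: CF (LL cW e t') := by
  obtain ⟨u, hu⟩ := LL_prefix cW (e := e) htt
  rw [← hu]
  show CFgo [] (LL cW e t) <+: CFgo [] (LL cW e t ++ u)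
  rw [CFgo_append]
  exact CFgo_prefix _ _

lemma srch_eq {e t m i v : ℕ} (hCF : (m, i) ∈ CF (LL cW e t))
    (hv : m.unpair.1 = v ∨ m.unpair.2 = v) :
    srch cW e i v t = some (other v m) := by
  have hGood := CF_good (LL_nodup cW (e := e) (t := t))
  have hp : srchp v i (m, i) = true := by
    simp [srchp, hv]
  have huniq : ∀ q ∈ CF (LL cW e t), srchp v i q = true → q = (m, i) := by
    intro q hq hqp
    simp only [srchp, Bool.and_eq_true, Bool.or_eq_true, decide_eq_true_eq] at hqp
    by_cases hqm : q.1 = m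
    · have : q = (q.1, q.2) := rfl
      rw [this, hqm, hqp.2]
    · exfalso
      have htch : touchB q.1 m = true := by
        simp only [touchB, Bool.or_eq_true, decide_eq_true_eq]
        rcases hqp.1 with h' | h' <;> rcases hv with h'' | h''
        · exact Or.inl (Or.inl (Or.inl (h'.trans h''.symm)))
        · exact Or.inl (Or.inl (Or.inr (h'.trans h''.symm)))
        · exact Or.inl (Or.inr (h'.trans h''.symm))
        · exact Or.inr (h'.trans h''.symm)
      have hsym : Symmetric (fun q q' : ℕ × ℕ => touchB q.1 q'.1 = true → q.2 ≠ q'.2) := by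
        intro q q' hR ht
        exact fun h2 => hR (touchB_comm.1 ht) h2.symm
      have hne : q ≠ (m, i) := fun hc => hqm (congrArg Prod.fst hc)
      haveI : Std.Symm (fun q q' : ℕ × ℕ => touchB q.1 q'.1 = true → q.2 ≠ q'.2) := ⟨fun a b h => hsym h⟩
      exact hGood.1.forall hq hCF hne htch hqp.2
  rw [srch, myfind?_eq, find?_unique hCF hp huniq]
  rfl

lemma srch_mono {e i v t t' y : ℕ} (htt : t ≤ t') (h : srch cW e i v t = some y) :
    srch cW e i v t' = some y := by
  rw [srch, myfind?_eq] at h ⊢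
  obtain ⟨q, hq, rfl⟩ := Option.map_eq_some_iff.1 h
  rw [(CF_LL_prefix cW htt).find?_eq_some hq]
  rfl

end Deg

lemma bval_eq_foldr (l : List Bool) : bval l = l.foldr (fun b n => 2 * n + cond b 1 0) 0 := by
  induction l with
  | nil => rfl
  | cons b l ih => simp [bval, ih]

lemma primrec_bval : Primrec bval := by
  have hstep : Primrec₂ (fun (_ : List Bool) (p : Bool × ℕ) => 2 * p.2 + cond p.1 1 0) := by
    apply Primrec₂.comp₂ (f := fun (x y : ℕ) => x + y) Primrec.nat_add
    · exact (Primrec.nat_mul.comp (Primrec.const 2)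
        (Primrec.snd.comp Primrec.snd)).to₂
    · exact (Primrec.cond (Primrec.fst.comp Primrec.snd)
        (Primrec.const 1) (Primrec.const 0)).to₂
  have := Primrec.list_foldr Primrec.id (Primrec.const 0) hstep
  exact Primrec.of_eq this (fun l => (bval_eq_foldr l).symm)

/-- G as a List.rec -/
def GR : List Bool → PR × PR × PR := fun l =>
  l.rec (none, none, none) (fun c l ih =>
    (cond c ih.2.2 ih.2.1,
     cond c (some ([], l)) (ih.1.map (fun ds => (false :: ds.1, ds.2))),
     cond c (ih.1.map (fun ds => (true :: ds.1, ds.2))) none))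

lemma GR_eq (l : List Bool) : GR l = G l := by
  induction l with
  | nil => rfl
  | cons c l ih =>
    have h : GR (c :: l) = (cond c (GR l).2.2 (GR l).2.1,
        cond c (some (([] : List Bool), l)) ((GR l).1.map (fun ds => (false :: ds.1, ds.2))),
        cond c ((GR l).1.map (fun ds => (true :: ds.1, ds.2))) none) := rfl
    rw [h, ih]
    cases c <;> simp [G]

lemma primrec_G : Primrec G := by
  have hstep : Primrec₂ (fun (_ : List Bool) (p : Bool × List Bool × (PR × PR × PR)) =>
      ((cond p.1 p.2.2.2.2 p.2.2.2.1,
        cond p.1 (some (([] : List Bool), p.2.1)) (p.2.2.1.map (fun ds => (false :: ds.1, ds.2))),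
        cond p.1 (p.2.2.1.map (fun ds => (true :: ds.1, ds.2))) none) : PR × PR × PR)) := by
    have hc : Primrec (fun p : List Bool × (Bool × List Bool × (PR × PR × PR)) => p.2.1) :=
      Primrec.fst.comp Primrec.snd
    have hl : Primrec (fun p : List Bool × (Bool × List Bool × (PR × PR × PR)) => p.2.2.1) :=
      Primrec.fst.comp (Primrec.snd.comp Primrec.snd)
    have hih1 : Primrec (fun p : List Bool × (Bool × List Bool × (PR × PR × PR)) => p.2.2.2.1) :=
      Primrec.fst.comp (Primrec.snd.comp (Primrec.snd.comp Primrec.snd))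
    have hih21 : Primrec (fun p : List Bool × (Bool × List Bool × (PR × PR × PR)) =>
        p.2.2.2.2.1) :=
      Primrec.fst.comp (Primrec.snd.comp (Primrec.snd.comp (Primrec.snd.comp Primrec.snd)))
    have hih22 : Primrec (fun p : List Bool × (Bool × List Bool × (PR × PR × PR)) =>
        p.2.2.2.2.2) :=
      Primrec.snd.comp (Primrec.snd.comp (Primrec.snd.comp (Primrec.snd.comp Primrec.snd)))
    have hmapf : Primrec (fun p : List Bool × (Bool × List Bool × (PR × PR × PR)) =>
        p.2.2.2.1.map (fun ds => (false :: ds.1, ds.2))) := by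
      apply Primrec.option_map hih1
      exact (Primrec.pair (Primrec.list_cons.comp (Primrec.const false)
        (Primrec.fst.comp Primrec.snd)) (Primrec.snd.comp Primrec.snd)).to₂
    have hmapt : Primrec (fun p : List Bool × (Bool × List Bool × (PR × PR × PR)) =>
        p.2.2.2.1.map (fun ds => (true :: ds.1, ds.2))) := by
      apply Primrec.option_map hih1
      exact (Primrec.pair (Primrec.list_cons.comp (Primrec.const true)
        (Primrec.fst.comp Primrec.snd)) (Primrec.snd.comp Primrec.snd)).to₂
    have hA : Primrec (fun p : List Bool × (Bool × List Bool × (PR × PR × PR)) =>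
        cond p.2.1 p.2.2.2.2.2 p.2.2.2.2.1) := Primrec.cond hc hih22 hih21
    have hB : Primrec (fun p : List Bool × (Bool × List Bool × (PR × PR × PR)) =>
        cond p.2.1 (some (([] : List Bool), p.2.2.1))
          (p.2.2.2.1.map (fun ds => (false :: ds.1, ds.2)))) := Primrec.cond hc
        (Primrec.option_some.comp (Primrec.pair (Primrec.const ([] : List Bool)) hl)) hmapf
    have hC : Primrec (fun p : List Bool × (Bool × List Bool × (PR × PR × PR)) =>
        cond p.2.1 (p.2.2.2.1.map (fun ds => (true :: ds.1, ds.2))) (none : PR)) :=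
      Primrec.cond hc hmapt (Primrec.const none)
    exact (hA.pair (hB.pair hC)).to₂
  have := Primrec.list_rec Primrec.id (Primrec.const ((none, none, none) : PR × PR × PR)) hstep
  refine Primrec.of_eq this (fun l => ?_)
  rw [← GR_eq]
  rfl

lemma primrec_parseH : Primrec parseH :=
  Primrec.fst.comp primrec_G

lemma primrec_parseO : Primrec parseO := by
  apply Primrec.option_bind primrec_parseH
  apply Primrec.ite
  · exact PrimrecRel.comp Primrec.eq
      (Primrec.list_length.comp (Primrec.snd.comp Primrec.snd))
      (Primrec.nat_add.comp (primrec_bval.comp (Primrec.fst.comp Primrec.snd))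
        (Primrec.const 3))
  · exact Primrec.option_some.comp (Primrec.pair
      (primrec_bval.comp (Primrec.fst.comp Primrec.snd))
      (primrec_bval.comp (Primrec.snd.comp Primrec.snd)))
  · exact Primrec.const none

lemma primrec_parse0 : Primrec parse0 := by
  apply Primrec.option_bind primrec_parseH
  apply Primrec.ite
  · exact PrimrecRel.comp Primrec.eq (Primrec.snd.comp Primrec.snd)
      (Primrec.const ([] : List Bool))
  · exact Primrec.option_some.comp (Primrec.fst.comp Primrec.snd)
  · exact Primrec.const none

set_option maxHeartbeats 1000000
open Nat.Partrec (Code)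
open Nat.Partrec.Code

lemma primrec_bool_prop {α : Type*} [Primcodable α] {f : α → Bool} (hf : Primrec f) :
    PrimrecPred (fun a => f a = true) :=
  Primrec.primrecPred (hf.of_eq (fun a => by cases h : f a <;> simp [h]))

section Comp2
variable (cW : Code)

lemma primrec_okp : Primrec₂ okp := by
  have hd : Primrec (fun p : ℕ × ℕ => Encodable.decode₂ (List Bool) p.2) :=
    Primrec.decode₂.comp Primrec.snd
  have hmap : Primrec (fun p : ℕ × ℕ =>
      (Encodable.decode₂ (List Bool) p.2).map (fun pl => decide (pl.length ≤ p.1))) := by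
    apply Primrec.option_map hd
    exact (PrimrecRel.comp Primrec.nat_le (Primrec.list_length.comp Primrec.snd)
      (Primrec.fst.comp Primrec.fst)).decide.to₂
  exact (Primrec.option_getD.comp hmap (Primrec.const false)).to₂

/-- uncurried relB; packing: ((e,t),(a,b)) -/
lemma primrec_relB : Primrec (fun x : (ℕ × ℕ) × (ℕ × ℕ) => relB cW x.1.1 x.1.2 x.2.1 x.2.2) := by
  have hrange : Primrec (fun x : (ℕ × ℕ) × (ℕ × ℕ) => List.range x.1.2) :=
    Primrec.list_range.comp (Primrec.snd.comp Primrec.fst)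
  have hstep : Primrec₂ (fun (x : (ℕ × ℕ) × (ℕ × ℕ)) (p : ℕ × Bool) =>
      (okp x.1.1 p.1 && decide (evaln x.1.2 cW (Nat.pair p.1 x.2.1) = some x.2.2)) || p.2) := by
    have hokp : Primrec (fun y : ((ℕ × ℕ) × (ℕ × ℕ)) × (ℕ × Bool) => okp y.1.1.1 y.2.1) :=
      primrec_okp.comp (Primrec.fst.comp (Primrec.fst.comp Primrec.fst))
        (Primrec.fst.comp Primrec.snd)
    have hev : Primrec (fun y : ((ℕ × ℕ) × (ℕ × ℕ)) × (ℕ × Bool) =>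
        evaln y.1.1.2 cW (Nat.pair y.2.1 y.1.2.1)) :=
      primrec_evaln.comp (Primrec.pair
        (Primrec.pair (Primrec.snd.comp (Primrec.fst.comp Primrec.fst)) (Primrec.const cW))
        (Primrec₂.natPair.comp (Primrec.fst.comp Primrec.snd)
          (Primrec.fst.comp (Primrec.snd.comp Primrec.fst))))
    have hdec : Primrec (fun y : ((ℕ × ℕ) × (ℕ × ℕ)) × (ℕ × Bool) =>
        decide (evaln y.1.1.2 cW (Nat.pair y.2.1 y.1.2.1) = some y.1.2.2)) :=
      PrimrecPred.decide <| PrimrecRel.comp Primrec.eq hev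
        (Primrec.option_some.comp (Primrec.snd.comp (Primrec.snd.comp Primrec.fst)))
    have hand : Primrec (fun y : ((ℕ × ℕ) × (ℕ × ℕ)) × (ℕ × Bool) =>
        okp y.1.1.1 y.2.1 && decide (evaln y.1.1.2 cW (Nat.pair y.2.1 y.1.2.1)
          = some y.1.2.2)) := Primrec.and.comp hokp hdec
    exact (Primrec.or.comp hand (Primrec.snd.comp Primrec.snd)).to₂
  have := Primrec.list_foldr hrange (Primrec.const false) hstep
  exact this.of_eq (fun x => rfl)

/-- packing: ((e,t), m) -/
lemma primrec_isEdgeB : Primrec (fun x : (ℕ × ℕ) × ℕ => isEdgeB cW x.1.1 x.1.2 x.2) := by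
  have hu1 : Primrec (fun x : (ℕ × ℕ) × ℕ => x.2.unpair.1) :=
    Primrec.fst.comp (Primrec.unpair.comp Primrec.snd)
  have hu2 : Primrec (fun x : (ℕ × ℕ) × ℕ => x.2.unpair.2) :=
    Primrec.snd.comp (Primrec.unpair.comp Primrec.snd)
  have h1 : Primrec (fun x : (ℕ × ℕ) × ℕ => decide (x.2.unpair.1 ≤ x.2.unpair.2)) :=
    PrimrecPred.decide <| PrimrecRel.comp Primrec.nat_le hu1 hu2
  have h2 : Primrec (fun x : (ℕ × ℕ) × ℕ => relB cW x.1.1 x.1.2 x.2.unpair.1 x.2.unpair.2) :=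
    (primrec_relB cW).comp (Primrec.pair Primrec.fst (Primrec.pair hu1 hu2))
  have h3 : Primrec (fun x : (ℕ × ℕ) × ℕ => relB cW x.1.1 x.1.2 x.2.unpair.2 x.2.unpair.1) :=
    (primrec_relB cW).comp (Primrec.pair Primrec.fst (Primrec.pair hu2 hu1))
  exact Primrec.and.comp (Primrec.and.comp h1 h2) h3

lemma primrec_memB : Primrec₂ memB := by
  have hstep : Primrec₂ (fun (a : List ℕ × ℕ) (p : ℕ × Bool) =>
      decide (p.1 = a.2) || p.2) := by
    have hd : Primrec (fun y : (List ℕ × ℕ) × (ℕ × Bool) => decide (y.2.1 = y.1.2)) :=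
      PrimrecPred.decide <| PrimrecRel.comp Primrec.eq (Primrec.fst.comp Primrec.snd)
        (Primrec.snd.comp Primrec.fst)
    exact (Primrec.or.comp hd (Primrec.snd.comp Primrec.snd)).to₂
  have := Primrec.list_foldr Primrec.fst (Primrec.const false) hstep
  exact (this.of_eq (fun x => rfl)).to₂

lemma primrec_LL : Primrec₂ (LL cW) := by
  have hstep : Primrec₂ (fun (e : ℕ) (p : ℕ × List ℕ) =>
      p.2 ++ myfilter (fun m => isEdgeB cW e (p.1+1) m && !(memB p.2 m))
        (List.range (p.1+1))) := by
    have hrange : Primrec (fun y : ℕ × (ℕ × List ℕ) => List.range (y.2.1+1)) :=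
      Primrec.list_range.comp (Primrec.succ.comp (Primrec.fst.comp Primrec.snd))
    have hfstep : Primrec₂ (fun (y : ℕ × (ℕ × List ℕ)) (q : ℕ × List ℕ) =>
        if (isEdgeB cW y.1 (y.2.1+1) q.1 && !(memB y.2.2 q.1)) = true
        then q.1 :: q.2 else q.2) := by
      have hie : Primrec (fun z : (ℕ × (ℕ × List ℕ)) × (ℕ × List ℕ) =>
          isEdgeB cW z.1.1 (z.1.2.1+1) z.2.1) :=
        (primrec_isEdgeB cW).comp (Primrec.pair
          (Primrec.pair (Primrec.fst.comp Primrec.fst)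
            (Primrec.succ.comp (Primrec.fst.comp (Primrec.snd.comp Primrec.fst))))
          (Primrec.fst.comp Primrec.snd))
      have hmem : Primrec (fun z : (ℕ × (ℕ × List ℕ)) × (ℕ × List ℕ) =>
          !(memB z.1.2.2 z.2.1)) :=
        Primrec.not.comp (primrec_memB.comp
          (Primrec.snd.comp (Primrec.snd.comp Primrec.fst)) (Primrec.fst.comp Primrec.snd))
      have hcond : Primrec (fun z : (ℕ × (ℕ × List ℕ)) × (ℕ × List ℕ) =>
          isEdgeB cW z.1.1 (z.1.2.1+1) z.2.1 && !(memB z.1.2.2 z.2.1)) :=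
        Primrec.and.comp hie hmem
      exact (Primrec.ite (primrec_bool_prop hcond)
        (Primrec.list_cons.comp (Primrec.fst.comp Primrec.snd)
          (Primrec.snd.comp Primrec.snd))
        (Primrec.snd.comp Primrec.snd)).to₂
    have hfilter : Primrec (fun y : ℕ × (ℕ × List ℕ) =>
        myfilter (fun m => isEdgeB cW y.1 (y.2.1+1) m && !(memB y.2.2 m))
          (List.range (y.2.1+1))) := by
      have := Primrec.list_foldr hrange (Primrec.const ([] : List ℕ)) hfstep
      exact this.of_eq (fun y => rfl)
    exact (Primrec.list_append.comp (Primrec.snd.comp Primrec.snd) hfilter).to₂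
  have := Primrec.nat_rec (Primrec.const ([] : List ℕ)) hstep
  exact this.of_eq (fun e t => rfl)

lemma primrec_touchB : Primrec₂ touchB := by
  have u11 : Primrec (fun x : ℕ × ℕ => x.1.unpair.1) :=
    Primrec.fst.comp (Primrec.unpair.comp Primrec.fst)
  have u12 : Primrec (fun x : ℕ × ℕ => x.1.unpair.2) :=
    Primrec.snd.comp (Primrec.unpair.comp Primrec.fst)
  have u21 : Primrec (fun x : ℕ × ℕ => x.2.unpair.1) :=
    Primrec.fst.comp (Primrec.unpair.comp Primrec.snd)
  have u22 : Primrec (fun x : ℕ × ℕ => x.2.unpair.2) :=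
    Primrec.snd.comp (Primrec.unpair.comp Primrec.snd)
  have e1 := PrimrecPred.decide <| PrimrecRel.comp Primrec.eq u11 u21
  have e2 := PrimrecPred.decide <| PrimrecRel.comp Primrec.eq u11 u22
  have e3 := PrimrecPred.decide <| PrimrecRel.comp Primrec.eq u12 u21
  have e4 := PrimrecPred.decide <| PrimrecRel.comp Primrec.eq u12 u22
  exact (Primrec.or.comp (Primrec.or.comp (Primrec.or.comp e1 e2) e3) e4).to₂

/-- packing: ((acc, m), c) -/
lemma primrec_lfok : Primrec (fun x : (List (ℕ × ℕ) × ℕ) × ℕ => lfok x.1.1 x.1.2 x.2) := by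
  have hstep : Primrec₂ (fun (x : (List (ℕ × ℕ) × ℕ) × ℕ) (p : (ℕ × ℕ) × Bool) =>
      p.2 && !(touchB x.1.2 p.1.1 && decide (p.1.2 = x.2))) := by
    have ht : Primrec (fun y : ((List (ℕ × ℕ) × ℕ) × ℕ) × ((ℕ × ℕ) × Bool) =>
        touchB y.1.1.2 y.2.1.1) :=
      primrec_touchB.comp (Primrec.snd.comp (Primrec.fst.comp Primrec.fst))
        (Primrec.fst.comp (Primrec.fst.comp Primrec.snd))
    have hd : Primrec (fun y : ((List (ℕ × ℕ) × ℕ) × ℕ) × ((ℕ × ℕ) × Bool) =>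
        decide (y.2.1.2 = y.1.2)) :=
      PrimrecPred.decide <| PrimrecRel.comp Primrec.eq (Primrec.snd.comp (Primrec.fst.comp Primrec.snd))
        (Primrec.snd.comp Primrec.fst)
    exact (Primrec.and.comp (Primrec.snd.comp Primrec.snd)
      (Primrec.not.comp (Primrec.and.comp ht hd))).to₂
  have := Primrec.list_foldr (Primrec.fst.comp Primrec.fst) (Primrec.const true) hstep
  exact this.of_eq (fun x => rfl)

lemma primrec_lf : Primrec₂ lf := by
  have hrange : Primrec (fun x : List (ℕ × ℕ) × ℕ => List.range (x.1.length + 1)) :=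
    Primrec.list_range.comp (Primrec.succ.comp (Primrec.list_length.comp Primrec.fst))
  have hstep : Primrec₂ (fun (x : List (ℕ × ℕ) × ℕ) (p : ℕ × Option ℕ) =>
      if lfok x.1 x.2 p.1 = true then some p.1 else p.2) := by
    have hok : Primrec (fun y : (List (ℕ × ℕ) × ℕ) × (ℕ × Option ℕ) =>
        lfok y.1.1 y.1.2 y.2.1) := by
      have hpack : Primrec (fun y : (List (ℕ × ℕ) × ℕ) × (ℕ × Option ℕ) => (y.1, y.2.1)) :=
        Primrec.pair Primrec.fst (Primrec.fst.comp Primrec.snd)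
      have h2 := primrec_lfok.comp hpack
      exact h2.of_eq (fun y => rfl)
    have hcond := Primrec.cond hok
      (Primrec.option_some.comp (Primrec.fst.comp Primrec.snd))
      (Primrec.snd.comp Primrec.snd)
    exact (hcond.of_eq (fun y => by rw [Bool.cond_eq_ite])).to₂
  have hfind : Primrec (fun x : List (ℕ × ℕ) × ℕ =>
      myfind? (fun c => lfok x.1 x.2 c) (List.range (x.1.length + 1))) := by
    have := Primrec.list_foldr hrange (Primrec.const (none : Option ℕ)) hstep
    exact this.of_eq (fun x => rfl)
  exact ((Primrec.option_getD.comp hfind (Primrec.const 0)).of_eq (fun x => rfl)).to₂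

lemma primrec_CF : Primrec CF := by
  have hstep : Primrec₂ (fun (_ : List ℕ) (p : List (ℕ × ℕ) × ℕ) =>
      p.1 ++ [(p.2, lf p.1 p.2)]) := by
    have hpair : Primrec (fun y : List ℕ × (List (ℕ × ℕ) × ℕ) => (y.2.2, lf y.2.1 y.2.2)) :=
      Primrec.pair (Primrec.snd.comp Primrec.snd)
        (primrec_lf.comp (Primrec.fst.comp Primrec.snd) (Primrec.snd.comp Primrec.snd))
    exact (Primrec.list_append.comp (Primrec.fst.comp Primrec.snd)
      (Primrec.list_cons.comp hpair (Primrec.const []))).to₂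
  have := Primrec.list_foldl Primrec.id (Primrec.const ([] : List (ℕ × ℕ))) hstep
  exact this.of_eq (fun l => rfl)

/-- packing: (((e,i),v),t) -/
lemma primrec_srch : Primrec (fun x : ((ℕ × ℕ) × ℕ) × ℕ =>
    srch cW x.1.1.1 x.1.1.2 x.1.2 x.2) := by
  have hCF : Primrec (fun x : ((ℕ × ℕ) × ℕ) × ℕ => CF (LL cW x.1.1.1 x.2)) :=
    primrec_CF.comp ((primrec_LL cW).comp (Primrec.fst.comp (Primrec.fst.comp Primrec.fst))
      Primrec.snd)
  have hstep : Primrec₂ (fun (x : ((ℕ × ℕ) × ℕ) × ℕ) (p : (ℕ × ℕ) × Option (ℕ × ℕ)) =>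
      if srchp x.1.2 x.1.1.2 p.1 = true then some p.1 else p.2) := by
    have hsp : Primrec (fun y : (((ℕ × ℕ) × ℕ) × ℕ) × ((ℕ × ℕ) × Option (ℕ × ℕ)) =>
        srchp y.1.1.2 y.1.1.1.2 y.2.1) := by
      have hq1 : Primrec (fun y : (((ℕ × ℕ) × ℕ) × ℕ) × ((ℕ × ℕ) × Option (ℕ × ℕ)) =>
          y.2.1.1.unpair) := Primrec.unpair.comp (Primrec.fst.comp (Primrec.fst.comp
            Primrec.snd))
      have hv : Primrec (fun y : (((ℕ × ℕ) × ℕ) × ℕ) × ((ℕ × ℕ) × Option (ℕ × ℕ)) =>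
          y.1.1.2) := Primrec.snd.comp (Primrec.fst.comp Primrec.fst)
      have hi : Primrec (fun y : (((ℕ × ℕ) × ℕ) × ℕ) × ((ℕ × ℕ) × Option (ℕ × ℕ)) =>
          y.1.1.1.2) := Primrec.snd.comp (Primrec.fst.comp (Primrec.fst.comp Primrec.fst))
      have e1 := PrimrecPred.decide <| PrimrecRel.comp Primrec.eq (Primrec.fst.comp hq1) hv
      have e2 := PrimrecPred.decide <| PrimrecRel.comp Primrec.eq (Primrec.snd.comp hq1) hv
      have e3 := PrimrecPred.decide <| PrimrecRel.comp Primrec.eq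
        (Primrec.snd.comp (Primrec.fst.comp Primrec.snd)) hi
      exact Primrec.and.comp (Primrec.or.comp e1 e2) e3
    exact (Primrec.ite (primrec_bool_prop hsp)
      (Primrec.option_some.comp (Primrec.fst.comp Primrec.snd))
      (Primrec.snd.comp Primrec.snd)).to₂
  have hfind : Primrec (fun x : ((ℕ × ℕ) × ℕ) × ℕ =>
      myfind? (srchp x.1.2 x.1.1.2) (CF (LL cW x.1.1.1 x.2))) := by
    have := Primrec.list_foldr hCF (Primrec.const (none : Option (ℕ × ℕ))) hstep
    exact this.of_eq (fun x => rfl)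
  have hmap : Primrec (fun x : ((ℕ × ℕ) × ℕ) × ℕ =>
      (myfind? (srchp x.1.2 x.1.1.2) (CF (LL cW x.1.1.1 x.2))).map
        (fun q => other x.1.2 q.1)) := by
    apply Primrec.option_map hfind
    have hq1u : Primrec (fun y : (((ℕ × ℕ) × ℕ) × ℕ) × (ℕ × ℕ) => y.2.1.unpair) :=
      Primrec.unpair.comp (Primrec.fst.comp Primrec.snd)
    have hv : Primrec (fun y : (((ℕ × ℕ) × ℕ) × ℕ) × (ℕ × ℕ) => y.1.1.2) :=
      Primrec.snd.comp (Primrec.fst.comp Primrec.fst)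
    exact (Primrec.ite (PrimrecRel.comp Primrec.eq (Primrec.fst.comp hq1u) hv)
      (Primrec.snd.comp hq1u) (Primrec.fst.comp hq1u)).to₂
  exact hmap.of_eq (fun x => rfl)

/-- the stage function of the machine -/
def gq (r z : List Bool) (t : ℕ) : Option ℕ :=
  (parseO r).bind fun ei => srch cW ei.1 ei.2 (Encodable.encode z) t

lemma computable_gq : Computable₂ (fun (rz : List Bool × List Bool) (t : ℕ) =>
    gq cW rz.1 rz.2 t) := by
  have h : Primrec₂ (fun (rz : List Bool × List Bool) (t : ℕ) => gq cW rz.1 rz.2 t) := by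
    have hpo : Primrec (fun x : (List Bool × List Bool) × ℕ => parseO x.1.1) :=
      primrec_parseO.comp (Primrec.fst.comp Primrec.fst)
    have hbind : Primrec₂ (fun (x : (List Bool × List Bool) × ℕ) (ei : ℕ × ℕ) =>
        srch cW ei.1 ei.2 (Encodable.encode x.1.2) x.2) := by
      have hpack : Primrec (fun y : ((List Bool × List Bool) × ℕ) × (ℕ × ℕ) =>
          ((y.2, Encodable.encode y.1.1.2), y.1.2)) :=
        Primrec.pair (Primrec.pair Primrec.snd
          (Primrec.encode.comp (Primrec.snd.comp (Primrec.fst.comp Primrec.fst))))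
          (Primrec.snd.comp Primrec.fst)
      have := (primrec_srch cW).comp hpack
      exact this.to₂
    exact (Primrec.option_bind hpo hbind).to₂
  exact h.to_comp

end Comp2

open Nat.Partrec (Code)
open Nat.Partrec.Code

/-- the print machine: outputs the databits of its self-delimiting program -/
def V0 : List Bool → List Bool →. List Bool := fun r _ => Part.ofOption (parse0 r)

lemma partrec_V0 : Partrec₂ V0 := by
  have h : Computable (fun p : List Bool × List Bool => parse0 p.1) :=
    (primrec_parse0.comp Primrec.fst).to_comp
  exact h.ofOption

lemma prefix_free_V0 : ∀ (x p q : List Bool), (V0 p x).Dom → (V0 q x).Dom → p <+: q → p = q := by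
  intro x p q hp hq hpre
  have hp' : ∃ y, parse0 p = some y := by
    rcases Part.dom_iff_mem.1 hp with ⟨y, hy⟩
    exact ⟨y, by simpa [V0, Part.mem_ofOption] using hy⟩
  have hq' : ∃ y, parse0 q = some y := by
    rcases Part.dom_iff_mem.1 hq with ⟨y, hy⟩
    exact ⟨y, by simpa [V0, Part.mem_ofOption] using hy⟩
  obtain ⟨y, hy⟩ := hp'
  obtain ⟨y', hy'⟩ := hq'
  exact parse0_prefix hy hy' hpre

lemma V0_works (y z : List Bool) : y ∈ V0 (dbl y ++ [false, true]) z := by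
  have h : parse0 (dbl y ++ [false, true]) = some y := by
    rw [parse0, show dbl y ++ [false, true] = dbl y ++ false :: true :: [] from rfl,
      parseH_dbl]
    simp
  simp [V0, Part.mem_ofOption, h]

lemma V0_prog_length (y : List Bool) : (dbl y ++ [false, true]).length = 2 * y.length + 2 := by
  simp [dbl_length]

section Mach
variable (cW : Code)

/-- the bidirectional machine -/
def Vm : List Bool → List Bool →. List Bool := fun r z =>
  (Nat.rfindOpt (fun t => gq cW r z t)).map
    (fun n => (Encodable.decode (α := List Bool) n).getD [])

lemma partrec_Vm : Partrec₂ (Vm cW) := by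
  have h1 : Partrec (fun rz : List Bool × List Bool =>
      Nat.rfindOpt (fun t => gq cW rz.1 rz.2 t)) :=
    Partrec.rfindOpt (computable_gq cW)
  have h2 : Computable₂ (fun (_ : List Bool × List Bool) (n : ℕ) =>
      (Encodable.decode (α := List Bool) n).getD ([] : List Bool)) := by
    have : Primrec (fun p : (List Bool × List Bool) × ℕ =>
        (Encodable.decode (α := List Bool) p.2).getD ([] : List Bool)) :=
      Primrec.option_getD.comp (Primrec.decode.comp Primrec.snd) (Primrec.const [])
    exact this.to_comp.to₂
  exact h1.map h2

lemma gq_mono {r z : List Bool} {t t' : ℕ} {y : ℕ} (htt : t ≤ t')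
    (h : gq cW r z t = some y) : gq cW r z t' = some y := by
  rw [gq] at h ⊢
  rcases Option.bind_eq_some_iff.1 h with ⟨ei, hei, hsr⟩
  rw [hei]
  exact srch_mono cW htt hsr

lemma mem_Vm {r z y : List Bool} : y ∈ Vm cW r z ↔
    ∃ n : ℕ, (∃ t, gq cW r z t = some n) ∧ (Encodable.decode (α := List Bool) n).getD [] = y := by
  rw [Vm, Part.mem_map_iff]
  constructor
  · rintro ⟨n, hn, rfl⟩
    have := (Nat.rfindOpt_mono (fun {a m n} hmn ha => gq_mono cW hmn ha)).1 hn
    exact ⟨n, this, rfl⟩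
  · rintro ⟨n, ⟨t, ht⟩, hy⟩
    refine ⟨n, ?_, hy⟩
    exact (Nat.rfindOpt_mono (fun {a m n} hmn ha => gq_mono cW hmn ha)).2 ⟨t, ht⟩

lemma Vm_dom_parse {r z : List Bool} (h : (Vm cW r z).Dom) : ∃ ei, parseO r = some ei := by
  rcases Part.dom_iff_mem.1 h with ⟨y, hy⟩
  rcases (mem_Vm cW).1 hy with ⟨n, ⟨t, ht⟩, -⟩
  rw [gq] at ht
  rcases Option.bind_eq_some_iff.1 ht with ⟨ei, hei, -⟩
  exact ⟨ei, hei⟩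

lemma prefix_free_Vm : ∀ (x p q : List Bool),
    (Vm cW p x).Dom → (Vm cW q x).Dom → p <+: q → p = q := by
  intro x p q hp hq hpre
  obtain ⟨⟨e, i⟩, hei⟩ := Vm_dom_parse cW hp
  obtain ⟨⟨e', i'⟩, hei'⟩ := Vm_dom_parse cW hq
  exact parseO_prefix hei hei' hpre

lemma other_pair_left {x y : ℕ} : other x (Nat.pair (min x y) (max x y)) = y := by
  rw [other]
  simp only [Nat.unpair_pair]
  rcases le_total x y with h | h
  · rw [min_eq_left h, max_eq_right h, if_pos rfl]
  · rw [min_eq_right h, max_eq_left h]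
    by_cases hxy : y = x
    · subst hxy
      simp
    · rw [if_neg hxy]

lemma pair_endpoint_left {x y : ℕ} :
    (Nat.pair (min x y) (max x y)).unpair.1 = x ∨ (Nat.pair (min x y) (max x y)).unpair.2 = x := by
  simp only [Nat.unpair_pair]
  rcases le_total x y with h | h
  · exact Or.inl (min_eq_left h)
  · exact Or.inr (max_eq_left h)

lemma Vm_works {e : ℕ} {x y : List Bool}
    (h1 : Rel cW e (Encodable.encode x) (Encodable.encode y))
    (h2 : Rel cW e (Encodable.encode y) (Encodable.encode x)) :
    ∃ r : List Bool, r.length ≤ e + 2 * Nat.log 2 (e + 2) + 7 ∧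
      y ∈ Vm cW r x ∧ x ∈ Vm cW r y := by
  set ex := Encodable.encode x with hex
  set ey := Encodable.encode y with hey
  set m := Nat.pair (min ex ey) (max ex ey) with hm
  have hE : EdgeP cW e m := Edge_of_rels cW h1 h2
  obtain ⟨t0, ht0⟩ := LL_complete cW hE
  obtain ⟨i, hi⟩ := mem_CF_of_mem_LL cW ht0
  have hilt : i < 2 ^ (e + 3) := CF_LL_color_lt cW (m, i) hi
  refine ⟨progr e i, progr_length hilt, ?_, ?_⟩
  · -- y from x
    have hvx : m.unpair.1 = ex ∨ m.unpair.2 = ex := pair_endpoint_left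
    have hs := srch_eq cW hi hvx
    have hother : other ex m = ey := other_pair_left
    rw [hother] at hs
    refine (mem_Vm cW).2 ⟨ey, ⟨t0, ?_⟩, by simp [hey, Encodable.encodek]⟩
    rw [gq, parseO_progr hilt]
    simpa using hs
  · -- x from y
    have hm' : m = Nat.pair (min ey ex) (max ey ex) := by
      rw [hm, min_comm, max_comm]
    have hvy : m.unpair.1 = ey ∨ m.unpair.2 = ey := by
      rw [hm']
      exact pair_endpoint_left
    have hs := srch_eq cW hi hvy
    have hother : other ey m = ex := by
      rw [hm']
      exact other_pair_left
    rw [hother] at hs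
    refine (mem_Vm cW).2 ⟨ex, ⟨t0, ?_⟩, by simp [hex, Encodable.encodek]⟩
    rw [gq, parseO_progr hilt]
    simpa using hs

end Mach

open Nat.Partrec (Code)
open Nat.Partrec.Code

/-- W as a partial function on ℕ -/
def Wn (W : PFun2) : ℕ →. ℕ := fun n =>
  (Part.ofOption (Encodable.decode (α := List Bool) n.unpair.1)).bind fun p =>
  (Part.ofOption (Encodable.decode (α := List Bool) n.unpair.2)).bind fun x =>
  (W p x).map Encodable.encode

lemma partrec_Wn {W : PFun2} (hW : Partrec₂ W) : Partrec (Wn W) := by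
  have h1 : Computable (fun n : ℕ => Encodable.decode (α := List Bool) n.unpair.1) :=
    (Primrec.decode.comp (Primrec.fst.comp Primrec.unpair)).to_comp
  have h2 : Computable (fun q : ℕ × List Bool =>
      Encodable.decode (α := List Bool) q.1.unpair.2) :=
    (Primrec.decode.comp ((Primrec.snd.comp Primrec.unpair).comp Primrec.fst)).to_comp
  apply Partrec.bind h1.ofOption
  have hw : Partrec (fun s : (ℕ × List Bool) × List Bool => W s.1.2 s.2) :=
    hW.comp (Computable.snd.comp Computable.fst) Computable.snd
  have hinner : Partrec (fun q : ℕ × List Bool =>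
      (Part.ofOption (Encodable.decode (α := List Bool) q.1.unpair.2)).bind fun x =>
        (W q.2 x).map Encodable.encode) := by
    apply Partrec.bind h2.ofOption
    exact hw.map (Computable.encode.comp Computable.snd).to₂
  exact hinner

lemma Wn_bridge {W : PFun2} {cW : Code} (hc : eval cW = Wn W) (p x y : List Bool) :
    y ∈ W p x ↔
      Encodable.encode y ∈ eval cW (Nat.pair (Encodable.encode p) (Encodable.encode x)) := by
  rw [hc, Wn]
  have h1 : Part.ofOption (Encodable.decode (α := List Bool)
      (Nat.pair (Encodable.encode p) (Encodable.encode x)).unpair.1) = Part.some p := by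
    rw [Nat.unpair_pair]
    simp only [Encodable.encodek]
    exact Part.eq_some_iff.2 (Part.mem_ofOption.2 rfl)
  have h2 : Part.ofOption (Encodable.decode (α := List Bool)
      (Nat.pair (Encodable.encode p) (Encodable.encode x)).unpair.2) = Part.some x := by
    rw [Nat.unpair_pair]
    simp only [Encodable.encodek]
    exact Part.eq_some_iff.2 (Part.mem_ofOption.2 rfl)
  rw [h1, Part.bind_some, h2, Part.bind_some, Part.mem_map_iff]
  constructor
  · intro h
    exact ⟨y, h, rfl⟩
  · rintro ⟨y', hy', henc⟩
    rwa [Encodable.encode_inj.1 henc] at hy'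

/-- extraction of a short program from a Kcond bound -/
lemma K_program {V : PFun2} {y x : BStr} {e : ℕ} (h : Kcond V y x ≤ (e : ℕ∞)) :
    ∃ p : BStr, p.length ≤ e ∧ y ∈ V p x := by
  by_contra hc
  push_neg at hc
  have hle : ((e + 1 : ℕ) : ℕ∞) ≤ Kcond V y x := by
    apply le_sInf
    rintro n ⟨p, rfl, hm⟩
    have := hc p
    by_cases hl : p.length ≤ e
    · exact absurd hm (this hl)
    · exact_mod_cast (by omega : e + 1 ≤ p.length)
  have := hle.trans h
  rw [Nat.cast_le] at this
  omega

lemma Kcond_le_of_mem {V : PFun2} {y x p : BStr} (h : y ∈ V p x) :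
    Kcond V y x ≤ (p.length : ℕ∞) :=
  sInf_le ⟨p, rfl, h⟩

lemma IDist_le_of_mem {V : PFun2} {x y p : BStr} (h1 : y ∈ V p x) (h2 : x ∈ V p y) :
    IDist V x y ≤ (p.length : ℕ∞) :=
  sInf_le ⟨p, rfl, h1, h2⟩

lemma Kcond_le_IDist₁ {U : PFun2} (x y : BStr) : Kcond U y x ≤ IDist U x y := by
  apply sInf_le_sInf
  rintro n ⟨p, hp, h1, h2⟩
  exact ⟨p, hp, h1⟩

lemma Kcond_le_IDist₂ {U : PFun2} (x y : BStr) : Kcond U x y ≤ IDist U x y := by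
  apply sInf_le_sInf
  rintro n ⟨p, hp, h1, h2⟩
  exact ⟨p, hp, h2⟩

end KP

/-- the prefix-free non-bipartite information distance equals
`E(x,y)` up to an additive `O(log E(x,y))` term. -/
theorem prefix_distance_equals_E_up_to_log
    (U : PFun2) (hU : OptimalPrefixDist U)
    (W : PFun2) (hW : OptimalPrefixK W) :
    ∃ c : ℕ, ∀ x y : BStr,
      Emax W x y - (c : ℕ∞) ≤ IDist U x y ∧
      IDist U x y ≤ Emax W x y + (c : ℕ∞) * elog (Emax W x y + 2) + (c : ℕ∞) := by
  classical
  obtain ⟨hWm, hWpf, hWopt⟩ := hW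
  obtain ⟨hUm, hUpf, hUopt⟩ := hU
  -- code for W
  obtain ⟨cW, hcW⟩ := Nat.Partrec.Code.exists_code.1 (Partrec.nat_iff.1 (KP.partrec_Wn hWm))
  -- finiteness of Kcond W via the print machine
  obtain ⟨c₀, hc₀⟩ := hWopt KP.V0 KP.partrec_V0 KP.prefix_free_V0
  have hKfin : ∀ x y : BStr, Kcond W y x ≠ ⊤ := by
    intro x y
    have h1 : Kcond KP.V0 y x ≤ ((2 * y.length + 2 : ℕ) : ℕ∞) := by
      have := KP.Kcond_le_of_mem (KP.V0_works y x)
      rwa [KP.V0_prog_length] at this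
    have h2 := (hc₀ x y).trans (add_le_add_left h1 _)
    intro hc
    rw [hc] at h2
    have : ((2 * y.length + 2 : ℕ) : ℕ∞) + (c₀ : ℕ∞) ≠ ⊤ := by
      rw [← Nat.cast_add]
      exact ENat.coe_ne_top _
    exact this (top_le_iff.1 h2)
  have hEfin : ∀ x y : BStr, Emax W x y ≠ ⊤ := by
    intro x y
    rw [Emax]
    intro hc
    rcases max_eq_iff.1 hc with ⟨h, -⟩ | ⟨h, -⟩
    · exact hKfin y x h
    · exact hKfin x y h
  -- lower bound constant
  obtain ⟨c₁, hc₁⟩ := hWopt U hUm hUpf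
  -- upper bound constant
  obtain ⟨cV, hcV⟩ := hUopt (KP.Vm cW) (KP.partrec_Vm cW) (KP.prefix_free_Vm cW)
  refine ⟨max c₁ (cV + 9), fun x y => ?_⟩
  set e : ℕ := (Emax W x y).toNat with he
  have hEeq : Emax W x y = (e : ℕ∞) := (ENat.coe_toNat (hEfin x y)).symm
  constructor
  · -- lower bound
    have h1 : Kcond W y x ≤ IDist U x y + (c₁ : ℕ∞) :=
      (hc₁ x y).trans (add_le_add_left (KP.Kcond_le_IDist₁ x y) _)
    have h2 : Kcond W x y ≤ IDist U x y + (c₁ : ℕ∞) :=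
      (hc₁ y x).trans (add_le_add_left (KP.Kcond_le_IDist₂ x y) _)
    have h3 : Emax W x y ≤ IDist U x y + (c₁ : ℕ∞) := max_le h2 h1
    have h4 : Emax W x y - (c₁ : ℕ∞) ≤ IDist U x y := tsub_le_iff_right.2 h3
    refine le_trans (tsub_le_tsub_left ?_ _) h4
    exact_mod_cast le_max_left c₁ (cV + 9)
  · -- upper bound
    have hK1 : Kcond W y x ≤ (e : ℕ∞) := by
      rw [← hEeq]
      exact le_max_right _ _
    have hK2 : Kcond W x y ≤ (e : ℕ∞) := by
      rw [← hEeq]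
      exact le_max_left _ _
    obtain ⟨p1, hp1len, hp1⟩ := KP.K_program hK1
    obtain ⟨p2, hp2len, hp2⟩ := KP.K_program hK2
    have hR1 : KP.Rel cW e (Encodable.encode x) (Encodable.encode y) :=
      ⟨p1, hp1len, (KP.Wn_bridge hcW p1 x y).1 hp1⟩
    have hR2 : KP.Rel cW e (Encodable.encode y) (Encodable.encode x) :=
      ⟨p2, hp2len, (KP.Wn_bridge hcW p2 y x).1 hp2⟩
    obtain ⟨r, hrlen, hry, hrx⟩ := KP.Vm_works cW hR1 hR2
    have hDV : IDist (KP.Vm cW) x y ≤ ((e + 2 * Nat.log 2 (e + 2) + 7 : ℕ) : ℕ∞) :=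
      (KP.IDist_le_of_mem hry hrx).trans (by exact_mod_cast hrlen)
    have hDU : IDist U x y ≤ ((e + 2 * Nat.log 2 (e + 2) + 7 + cV : ℕ) : ℕ∞) := by
      refine (hcV x y).trans ?_
      rw [Nat.cast_add]
      exact add_le_add_left hDV _
    refine hDU.trans ?_
    have helog : elog (Emax W x y + 2) = ((Nat.log 2 (e + 2) : ℕ) : ℕ∞) := by
      have h1 : Emax W x y + 2 = ((e + 2 : ℕ) : ℕ∞) := by
        rw [hEeq]
        push_cast
        ring
      rw [h1, elog, if_neg (ENat.coe_ne_top _)]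
      simp only [ENat.toNat_coe]
    rw [helog, hEeq]
    set c := max c₁ (cV + 9) with hc
    set L := Nat.log 2 (e + 2) with hL
    have hL1 : 1 ≤ L := Nat.log_pos (by norm_num) (by omega)
    have hcge : cV + 9 ≤ c := le_max_right _ _
    have hnat : e + 2 * L + 7 + cV ≤ e + c * L + c := by
      have h2 : 2 * L + 7 + cV ≤ c * L + c := by
        calc 2 * L + 7 + cV ≤ 2 * L + c := by omega
        _ ≤ c * L + c := by
          have : 2 * L ≤ c * L := Nat.mul_le_mul_right L (by omega)
          omega
      omega
    calc ((e + 2 * Nat.log 2 (e + 2) + 7 + cV : ℕ) : ℕ∞)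
        ≤ ((e + c * L + c : ℕ) : ℕ∞) := by exact_mod_cast hnat
      _ = (e : ℕ∞) + (c : ℕ∞) * (L : ℕ∞) + (c : ℕ∞) := by push_cast; ring
end
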